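/- arXiv:1212.1691 — 6 statements merged into one kernel-verified Lean document; each statement's English description precedes it below -/
import Mathlib

section
/- Let d_* > 0 and let [a,b] be a real interval with b − a ≥ d_*. Then every function f : [a,b] → ℝ whose derivative f' is absolutely continuous on [a,b] with second derivative f'' ∈ L²(a,b) satisfies ‖f'‖_{L²(a,b)} ≤ ‖f''‖_{L²(a,b)} + 2(1 + 2/d_*)² ‖f‖_{L²(a,b)}. -/
open MeasureTheory Set

lemma young_sqrt_aux {A B I : ℝ} (hA : 0 ≤ A) (hB : 0 ≤ B)
    (h : ∀ r : ℝ, 0 < r → 2 * (r * I) ≤ A + r ^ 2 * B) :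
    I ≤ Real.sqrt (A * B) := by
  rcases le_or_gt I 0 with hI | hI
  · exact hI.trans (Real.sqrt_nonneg _)
  rcases eq_or_lt_of_le hB with hB0 | hB0
  · exfalso
    have := h ((A + 1) / (2 * I)) (by positivity)
    rw [← hB0] at this
    have h2 : 2 * ((A + 1) / (2 * I) * I) = A + 1 := by
      field_simp
    nlinarith
  · have key := h (I / B) (by positivity)
    have hI2 : I ^ 2 ≤ A * B := by
      have hB' : B ≠ 0 := ne_of_gt hB0
      have h2 : I / B * I = I ^ 2 / B := by ring
      have h3 : (I / B) ^ 2 * B = I ^ 2 / B := by field_simp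
      rw [h2, h3] at key
      have h4 : I ^ 2 / B ≤ A := by linarith
      calc I ^ 2 = I ^ 2 / B * B := by field_simp
      _ ≤ A * B := by nlinarith
    calc I = Real.sqrt (I ^ 2) := by rw [Real.sqrt_sq hI.le]
    _ ≤ Real.sqrt (A * B) := Real.sqrt_le_sqrt hI2

lemma integral_cs {S : Set ℝ} (u v : ℝ → ℝ)
    (hu : IntegrableOn (fun x => u x ^ 2) S volume)
    (hv : IntegrableOn (fun x => v x ^ 2) S volume)
    (huv : IntegrableOn (fun x => u x * v x) S volume) :
    ∫ x in S, u x * v x ≤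
      Real.sqrt ((∫ x in S, u x ^ 2) * ∫ x in S, v x ^ 2) := by
  apply young_sqrt_aux (integral_nonneg fun x => sq_nonneg _)
    (integral_nonneg fun x => sq_nonneg _)
  intro r hr
  have key : ∀ x : ℝ, 2 * (r * (u x * v x)) ≤ u x ^ 2 + r ^ 2 * v x ^ 2 := by
    intro x; nlinarith [sq_nonneg (u x - r * v x)]
  calc 2 * (r * ∫ x in S, u x * v x) = ∫ x in S, 2 * (r * (u x * v x)) := by
        rw [integral_const_mul, integral_const_mul]
  _ ≤ ∫ x in S, (u x ^ 2 + r ^ 2 * v x ^ 2) := by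
        apply integral_mono ((huv.const_mul r).const_mul 2) (hu.add (hv.const_mul _)) key
  _ = (∫ x in S, u x ^ 2) + r ^ 2 * ∫ x in S, v x ^ 2 := by
        rw [integral_add hu (hv.const_mul _), integral_const_mul]

lemma sqrt_integral_sq_add_le {S : Set ℝ} (u v : ℝ → ℝ)
    (hu : IntegrableOn (fun x => u x ^ 2) S volume)
    (hv : IntegrableOn (fun x => v x ^ 2) S volume)
    (huv : IntegrableOn (fun x => u x * v x) S volume) :
    Real.sqrt (∫ x in S, (u x + v x) ^ 2) ≤
      Real.sqrt (∫ x in S, u x ^ 2) + Real.sqrt (∫ x in S, v x ^ 2) := by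
  set A := ∫ x in S, u x ^ 2 with hA
  set B := ∫ x in S, v x ^ 2 with hB
  have hA0 : 0 ≤ A := integral_nonneg fun x => sq_nonneg _
  have hB0 : 0 ≤ B := integral_nonneg fun x => sq_nonneg _
  have expand : ∫ x in S, (u x + v x) ^ 2
      = A + (2 * ∫ x in S, u x * v x) + B := by
    have e : (fun x => (u x + v x) ^ 2)
        = fun x => u x ^ 2 + 2 * (u x * v x) + v x ^ 2 := by
      funext x; ring
    rw [e]
    rw [integral_add (by exact hu.add ((huv.const_mul 2 : IntegrableOn _ S volume))) hv,
      integral_add hu (huv.const_mul 2), integral_const_mul]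
  have hcs := integral_cs u v hu hv huv
  have hsq : ∫ x in S, (u x + v x) ^ 2 ≤ (Real.sqrt A + Real.sqrt B) ^ 2 := by
    rw [expand]
    have : Real.sqrt (A * B) = Real.sqrt A * Real.sqrt B := Real.sqrt_mul hA0 _
    nlinarith [Real.sq_sqrt hA0, Real.sq_sqrt hB0, hcs, Real.sqrt_nonneg A, Real.sqrt_nonneg B]
  calc Real.sqrt (∫ x in S, (u x + v x) ^ 2)
      ≤ Real.sqrt ((Real.sqrt A + Real.sqrt B) ^ 2) := Real.sqrt_le_sqrt hsq
  _ = Real.sqrt A + Real.sqrt B := Real.sqrt_sq (by positivity)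

/-- splitting a set integral over `Ioc` -/
lemma integral_Ioc_split {F : ℝ → ℝ} {a y x : ℝ} (hay : a ≤ y) (hyx : y ≤ x)
    (hF : IntegrableOn F (Ioc a x) volume) :
    ∫ s in Ioc a x, F s = (∫ s in Ioc a y, F s) + ∫ s in Ioc y x, F s := by
  rw [← Ioc_union_Ioc_eq_Ioc hay hyx]
  exact setIntegral_union (Ioc_disjoint_Ioc_of_le le_rfl) measurableSet_Ioc
    (hF.mono_set (Ioc_subset_Ioc_right hyx))
    (hF.mono_set (Ioc_subset_Ioc_left hay))

set_option maxHeartbeats 1000000 in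
/-- **Uniform first-derivative bound** (from the proof of Proposition 2.1(ii)):
on an interval `[a, b]` of length at least `d_* > 0`, every `f` with absolutely
continuous derivative `f'` and second derivative `f'' ∈ L²(a,b)` satisfies
`‖f'‖_{L²} ≤ ‖f''‖_{L²} + 2 (1 + 2/d_*)² ‖f‖_{L²}`. -/
theorem stmt_0 (dstar a b : ℝ) (hdstar : 0 < dstar) (hab : dstar ≤ b - a)
    (f f' f'' : ℝ → ℝ)
    (hint : IntegrableOn f'' (Icc a b) volume)
    (hsq : IntegrableOn (fun t => f'' t ^ 2) (Icc a b) volume)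
    (hftc' : ∀ t ∈ Icc a b, f' t = f' a + ∫ s in Ioc a t, f'' s)
    (hftc : ∀ t ∈ Icc a b, f t = f a + ∫ s in Ioc a t, f' s) :
    Real.sqrt (∫ t in Ioc a b, f' t ^ 2) ≤
      Real.sqrt (∫ t in Ioc a b, f'' t ^ 2) +
        2 * (1 + 2 / dstar) ^ 2 * Real.sqrt (∫ t in Ioc a b, f t ^ 2) := by
  set d := dstar with hd_def
  clear_value d
  have hd : 0 < d := hdstar
  set h : ℝ := d / (d + 1) with hh_def
  clear_value h
  have hd1 : (0:ℝ) < d + 1 := by linarith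
  have hh0 : 0 < h := by rw [hh_def]; positivity
  have hh1 : h < 1 := by
    rw [hh_def, div_lt_one hd1]; linarith
  have hhd : h < d := by
    rw [hh_def, div_lt_iff₀ hd1]; nlinarith
  set L : ℝ := b - a with hL_def
  clear_value L
  have hL : d ≤ L := hab
  have hL0 : 0 < L := lt_of_lt_of_le hd hL
  have hab' : a < b := by simp only [hL_def] at hL0; linarith
  set σ : ℝ := (L - h) / L with hσ_def
  clear_value σ
  have hσ0 : 0 < σ := by
    rw [hσ_def]; apply div_pos (by linarith) hL0
  have hσL : σ * L = L - h := by
    rw [hσ_def]; field_simp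
  have hσ1 : σ ≤ 1 := by
    rw [hσ_def, div_le_one hL0]; linarith
  have hσh : h ≤ σ := by
    rw [hσ_def, le_div_iff₀ hL0]
    have key : h * (L + 1) ≤ L := by
      rw [hh_def, div_mul_eq_mul_div, div_le_iff₀ hd1]
      nlinarith
    nlinarith
  set c0 : ℝ := a + h - σ * a with hc0_def
  clear_value c0
  set m : ℝ → ℝ := fun t => σ * t + c0 with hm_def
  clear_value m
  have hma : m a = a + h := by simp only [hm_def, hc0_def]; ring
  have hmb : m b = b := by
    simp only [hm_def, hc0_def]
    have : σ * b - σ * a = L - h := by rw [← hσL]; rw [hL_def]; ring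
    linarith
  -- basic window facts
  have hmem : ∀ t ∈ Icc a b, a ≤ m t - h ∧ m t ≤ b ∧ m t - h ≤ t ∧ t ≤ m t := by
    intro t ht
    obtain ⟨hta, htb⟩ := ht
    have h1 : m t - h - a = σ * (t - a) := by simp only [hm_def, hc0_def]; ring
    have h2 : b - m t = σ * (b - t) := by
      have : m b - m t = σ * (b - t) := by simp only [hm_def]; ring
      rw [← this, hmb]
    have h3 : m t - t = h - (1 - σ) * (t - a) := by simp only [hm_def, hc0_def]; ring
    have h4 : (1 - σ) * L = h := by nlinarith [hσL]
    refine ⟨?_, ?_, ?_, ?_⟩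
    · nlinarith [mul_nonneg hσ0.le (sub_nonneg.mpr hta)]
    · nlinarith [mul_nonneg hσ0.le (sub_nonneg.mpr htb)]
    ·
      have : (1 - σ) * (t - a) ≥ 0 := mul_nonneg (by linarith) (by linarith)
      nlinarith
    · -- t ≤ m t : (1-σ)(t-a) ≤ (1-σ) L = h
      have h5 : (1 - σ) * (t - a) ≤ (1 - σ) * L := by
        apply mul_le_mul_of_nonneg_left _ (by linarith)
        simp only [hL_def]; linarith
      nlinarith
  -- continuity / integrability infrastructure
  have hIcc : Ioc a b ⊆ Icc a b := Ioc_subset_Icc_self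
  have hf'c : ContinuousOn f' (Icc a b) := by
    apply ContinuousOn.congr (continuousOn_const.add (intervalIntegral.continuousOn_primitive hint))
    intro t ht; exact hftc' t ht
  have hf'i : IntegrableOn f' (Icc a b) volume := hf'c.integrableOn_Icc
  have hfc : ContinuousOn f (Icc a b) := by
    apply ContinuousOn.congr (continuousOn_const.add (intervalIntegral.continuousOn_primitive hf'i))
    intro t ht; exact hftc t ht
  have hfi : IntegrableOn f (Icc a b) volume := hfc.integrableOn_Icc
  have hmc : Continuous m := by
    simp only [hm_def]; exact (continuous_const.mul continuous_id).add continuous_const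
  have hmaps : MapsTo m (Icc a b) (Icc a b) := by
    intro t ht
    obtain ⟨h1, h2, h3, h4⟩ := hmem t ht
    exact ⟨by linarith [hh0], h2⟩
  have hmaps' : MapsTo (fun t => m t - h) (Icc a b) (Icc a b) := by
    intro t ht
    obtain ⟨h1, h2, h3, h4⟩ := hmem t ht
    show m t - h ∈ Icc a b
    exact ⟨h1, by linarith [hh0]⟩
  set g : ℝ → ℝ := fun t => (f (m t) - f (m t - h)) / h with hg_def
  clear_value g
  have hgc : ContinuousOn g (Icc a b) := by
    rw [hg_def]
    apply ContinuousOn.div_const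
    exact (hfc.comp hmc.continuousOn hmaps).sub
      (hfc.comp ((hmc.sub continuous_const).continuousOn) hmaps')
  set Ψ : ℝ → ℝ := fun t => ∫ s in Ioc (m t - h) (m t), f'' s ^ 2 with hΨ_def
  clear_value Ψ
  set Φq : ℝ → ℝ := fun x => ∫ s in Ioc a x, f'' s ^ 2 with hΦq_def
  clear_value Φq
  have hΨeq : ∀ t ∈ Icc a b, Ψ t = Φq (m t) - Φq (m t - h) := by
    intro t ht
    obtain ⟨h1, h2, h3, h4⟩ := hmem t ht
    have := integral_Ioc_split (F := fun s => f'' s ^ 2) h1 (by linarith [hh0])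
      (hsq.mono_set ((Ioc_subset_Icc_self).trans (Icc_subset_Icc (le_refl a) h2)))
    simp only [hΨ_def, hΦq_def]
    linarith [this]
  have hΦqc : ContinuousOn Φq (Icc a b) := by
    rw [hΦq_def]; exact intervalIntegral.continuousOn_primitive hsq
  have hΨc : ContinuousOn Ψ (Icc a b) := by
    apply ContinuousOn.congr
      ((hΦqc.comp hmc.continuousOn hmaps).sub
        (hΦqc.comp ((hmc.sub continuous_const).continuousOn) hmaps'))
    intro t ht; exact hΨeq t ht
  have hΨnn : ∀ t, 0 ≤ Ψ t := by
    intro t; rw [hΨ_def]; exact integral_nonneg fun s => sq_nonneg _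
  -- pointwise key estimate
  have key : ∀ t ∈ Icc a b, (f' t - g t) ^ 2 ≤ h * Ψ t := by
    intro t ht
    obtain ⟨hy, hx, hty, htx⟩ := hmem t ht
    set y : ℝ := m t - h with hy_def
    set x : ℝ := m t with hx_def
    have hyx : y ≤ x := by simp only [hy_def, hx_def]; linarith [hh0]
    have hxy : x - y = h := by simp only [hy_def, hx_def]; ring
    have hJIcc : Ioc y x ⊆ Icc a b := (Ioc_subset_Icc_self).trans (Icc_subset_Icc hy hx)
    have hf'iJ : IntegrableOn f' (Ioc y x) volume := hf'i.mono_set hJIcc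
    have volJ : (volume (Ioc y x)).toReal = h := by
      rw [Real.volume_Ioc, ENNReal.toReal_ofReal (by linarith [hh0] : (0:ℝ) ≤ x - y), hxy]
    -- g t in terms of integral of f'
    have gform : g t = (∫ s in Ioc y x, f' s) / h := by
      have h1 := hftc x ⟨hy.trans (by linarith [hh0]), hx⟩
      have h2 := hftc y ⟨hy, by linarith [hyx, hx]⟩
      have hsplit := integral_Ioc_split (F := f') hy hyx
        (hf'i.mono_set ((Ioc_subset_Icc_self).trans (Icc_subset_Icc (le_refl a) hx)))
      simp only [hg_def]
      rw [h1, h2]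
      congr 1
      linarith [hsplit]
    have diff : f' t - g t = (∫ s in Ioc y x, (f' t - f' s)) / h := by
      rw [integral_sub (integrableOn_const (C := f' t) (by rw [Real.volume_Ioc]; exact ENNReal.ofReal_ne_top)) hf'iJ]
      rw [setIntegral_const, measureReal_def, volJ, gform, smul_eq_mul]
      field_simp
    set W : ℝ := ∫ s in Ioc y x, |f'' s| with hW_def
    have hWnn : 0 ≤ W := integral_nonneg fun s => abs_nonneg _
    have habsIcc : IntegrableOn (fun s => |f'' s|) (Icc a b) volume := hint.abs
    have habsJ : IntegrableOn (fun s => |f'' s|) (Ioc y x) volume := habsIcc.mono_set hJIcc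
    have pt : ∀ s ∈ Ioc y x, |f' t - f' s| ≤ W := by
      intro s hs
      have hsI : s ∈ Icc a b := hJIcc hs
      rw [hftc' t ht, hftc' s hsI]
      have e : f' a + (∫ u in Ioc a t, f'' u) - (f' a + ∫ u in Ioc a s, f'' u)
          = (∫ u in Ioc a t, f'' u) - ∫ u in Ioc a s, f'' u := by ring
      rw [e]
      rcases le_total s t with hst | hts
      · have hsplit := integral_Ioc_split (F := f'') (hsI.1) hst
          (hint.mono_set ((Ioc_subset_Icc_self).trans (Icc_subset_Icc (le_refl a) ht.2)))
        rw [show (∫ u in Ioc a t, f'' u) - ∫ u in Ioc a s, f'' u = ∫ u in Ioc s t, f'' u by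
          linarith [hsplit]]
        calc |∫ u in Ioc s t, f'' u| ≤ ∫ u in Ioc s t, |f'' u| := by
              rw [← Real.norm_eq_abs]
              refine (MeasureTheory.norm_integral_le_integral_norm _).trans (le_of_eq ?_)
              simp [Real.norm_eq_abs]
        _ ≤ W := by
              apply setIntegral_mono_set habsJ
                (Filter.Eventually.of_forall fun s => abs_nonneg _)
              exact HasSubset.Subset.eventuallyLE (Ioc_subset_Ioc hs.1.le htx)
      · have hsplit := integral_Ioc_split (F := f'') (ht.1) hts
          (hint.mono_set ((Ioc_subset_Icc_self).trans (Icc_subset_Icc (le_refl a) hsI.2)))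
        rw [abs_sub_comm]
        rw [show (∫ u in Ioc a s, f'' u) - ∫ u in Ioc a t, f'' u = ∫ u in Ioc t s, f'' u by
          linarith [hsplit]]
        calc |∫ u in Ioc t s, f'' u| ≤ ∫ u in Ioc t s, |f'' u| := by
              rw [← Real.norm_eq_abs]
              refine (MeasureTheory.norm_integral_le_integral_norm _).trans (le_of_eq ?_)
              simp [Real.norm_eq_abs]
        _ ≤ W := by
              apply setIntegral_mono_set habsJ
                (Filter.Eventually.of_forall fun s => abs_nonneg _)
              exact HasSubset.Subset.eventuallyLE (Ioc_subset_Ioc hty hs.2)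
    have intbound : |∫ s in Ioc y x, (f' t - f' s)| ≤ h * W := by
      have hdiffc : IntegrableOn (fun s => |f' t - f' s|) (Ioc y x) volume := by
        apply IntegrableOn.mono_set _ hJIcc
        exact ((continuousOn_const.sub hf'c).abs).integrableOn_Icc
      calc |∫ s in Ioc y x, (f' t - f' s)| ≤ ∫ s in Ioc y x, |f' t - f' s| := by
            rw [← Real.norm_eq_abs]
            refine (MeasureTheory.norm_integral_le_integral_norm _).trans (le_of_eq ?_)
            simp [Real.norm_eq_abs]
      _ ≤ ∫ _s in Ioc y x, W := by
            apply setIntegral_mono_on hdiffc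
              (integrableOn_const (by rw [Real.volume_Ioc]; exact ENNReal.ofReal_ne_top))
              measurableSet_Ioc
            exact pt
      _ = h * W := by rw [setIntegral_const, measureReal_def, volJ, smul_eq_mul]
    have absfg : |f' t - g t| ≤ W := by
      rw [diff, abs_div, abs_of_pos hh0, div_le_iff₀ hh0]
      linarith [intbound]
    have csW : W ≤ Real.sqrt (Ψ t * h) := by
      have hu2 : IntegrableOn (fun s => |f'' s| ^ 2) (Ioc y x) volume := by
        apply IntegrableOn.congr_fun (hsq.mono_set hJIcc) _ measurableSet_Ioc
        intro s _; simp [sq_abs]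
      have hv2 : IntegrableOn (fun _s : ℝ => (1:ℝ) ^ 2) (Ioc y x) volume := by
        apply integrableOn_const (by rw [Real.volume_Ioc]; exact ENNReal.ofReal_ne_top)
      have huv : IntegrableOn (fun s => |f'' s| * 1) (Ioc y x) volume := by
        simpa using habsJ
      have hcs := integral_cs (fun s => |f'' s|) (fun _ => (1:ℝ)) hu2 hv2 huv
      have e1 : (∫ s in Ioc y x, |f'' s| * 1) = W := by simp [hW_def]
      have e2 : (∫ s in Ioc y x, |f'' s| ^ 2) = Ψ t := by
        simp only [hΨ_def, ← hy_def, ← hx_def]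
        apply setIntegral_congr_fun measurableSet_Ioc
        intro s _; simp [sq_abs]
      have e3 : (∫ _s in Ioc y x, (1:ℝ) ^ 2) = h := by
        simp only [one_pow]
        rw [setIntegral_const, measureReal_def, volJ, smul_eq_mul, mul_one]
      rw [e1, e2, e3] at hcs
      exact hcs
    have final : (f' t - g t) ^ 2 ≤ W ^ 2 := by
      have hb := abs_le.mp absfg
      nlinarith [hb.1, hb.2]
    have : W ^ 2 ≤ Ψ t * h := by
      have := pow_le_pow_left₀ hWnn csW 2
      rwa [Real.sq_sqrt (mul_nonneg (hΨnn t) hh0.le)] at this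
    nlinarith
  -- Fubini bound
  have hf''sqI : IntegrableOn (fun s => f'' s ^ 2) (Ioc a b) volume := hsq.mono_set hIcc
  have hX2nn : (0:ℝ) ≤ ∫ s in Ioc a b, f'' s ^ 2 := integral_nonneg fun s => sq_nonneg _
  have hΨint : IntegrableOn Ψ (Ioc a b) volume := hΨc.integrableOn_Icc.mono_set hIcc
  have fub : (∫ t in Ioc a b, Ψ t) ≤ (h / σ) * ∫ s in Ioc a b, f'' s ^ 2 := by
    have hφm : AEMeasurable (fun s => ENNReal.ofReal (f'' s ^ 2)) (volume.restrict (Ioc a b)) :=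
      (hf''sqI.aestronglyMeasurable.aemeasurable).ennreal_ofReal
    have hIres : ∀ t ∈ Ioc a b, Ioc (m t - h) (m t) ⊆ Ioc a b := by
      intro t ht
      obtain ⟨h1, h2, _, _⟩ := hmem t (hIcc ht)
      exact Ioc_subset_Ioc h1 h2
    have step1 : ENNReal.ofReal (∫ t in Ioc a b, Ψ t)
        = ∫⁻ t in Ioc a b, ENNReal.ofReal (Ψ t) :=
      MeasureTheory.ofReal_integral_eq_lintegral_ofReal hΨint
        (Filter.Eventually.of_forall hΨnn)
    have step2 : (∫⁻ t in Ioc a b, ENNReal.ofReal (Ψ t))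
        = ∫⁻ t in Ioc a b, ∫⁻ s in Ioc a b,
            (Ioc (m t - h) (m t)).indicator (fun s' => ENNReal.ofReal (f'' s' ^ 2)) s := by
      apply lintegral_congr_ae
      filter_upwards [ae_restrict_mem measurableSet_Ioc] with t ht
      have hsub := hIres t ht
      have hWIcc : Ioc (m t - h) (m t) ⊆ Icc a b := hsub.trans hIcc
      have hint' : IntegrableOn (fun s => f'' s ^ 2) (Ioc (m t - h) (m t)) volume :=
        hsq.mono_set hWIcc
      have e1 : ENNReal.ofReal (Ψ t)
          = ∫⁻ s in Ioc (m t - h) (m t), ENNReal.ofReal (f'' s ^ 2) := by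
        rw [hΨ_def]
        exact MeasureTheory.ofReal_integral_eq_lintegral_ofReal hint'
          (Filter.Eventually.of_forall fun s => sq_nonneg _)
      rw [e1, lintegral_indicator measurableSet_Ioc,
        Measure.restrict_restrict measurableSet_Ioc,
        inter_eq_self_of_subset_left hsub]
    have hTmeas : ∀ s : ℝ, MeasurableSet {t' : ℝ | s ≤ m t' ∧ m t' < s + h} := by
      intro s
      apply MeasurableSet.inter
      · exact measurableSet_le measurable_const hmc.measurable
      · exact measurableSet_lt hmc.measurable measurable_const
    have step3 : (∫⁻ t in Ioc a b, ∫⁻ s in Ioc a b,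
            (Ioc (m t - h) (m t)).indicator (fun s' => ENNReal.ofReal (f'' s' ^ 2)) s)
        = ∫⁻ s in Ioc a b, ∫⁻ t in Ioc a b,
            (Ioc (m t - h) (m t)).indicator (fun s' => ENNReal.ofReal (f'' s' ^ 2)) s := by
      apply lintegral_lintegral_swap
      have hA : MeasurableSet {p : ℝ × ℝ | m p.1 - h < p.2 ∧ p.2 ≤ m p.1} := by
        apply MeasurableSet.inter
        · exact measurableSet_lt ((hmc.measurable.comp measurable_fst).sub measurable_const)
            measurable_snd
        · exact measurableSet_le measurable_snd (hmc.measurable.comp measurable_fst)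
      have he : (Function.uncurry fun t s =>
            (Ioc (m t - h) (m t)).indicator (fun s' => ENNReal.ofReal (f'' s' ^ 2)) s)
          = {p : ℝ × ℝ | m p.1 - h < p.2 ∧ p.2 ≤ m p.1}.indicator
              (fun p => ENNReal.ofReal (f'' p.2 ^ 2)) := by
        funext p
        rcases p with ⟨t, s⟩
        by_cases hp : m t - h < s ∧ s ≤ m t
        · simp [Function.uncurry, Set.indicator_apply, Set.mem_Ioc, hp]
        · simp [Function.uncurry, Set.indicator_apply, Set.mem_Ioc, hp]
      rw [he]
      exact AEMeasurable.indicator (hφm.comp_snd) hA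
    have step4 : ∀ s, (∫⁻ t in Ioc a b,
            (Ioc (m t - h) (m t)).indicator (fun s' => ENNReal.ofReal (f'' s' ^ 2)) s)
        ≤ ENNReal.ofReal (f'' s ^ 2) * ENNReal.ofReal (h / σ) := by
      intro s
      have he : (fun t => (Ioc (m t - h) (m t)).indicator
              (fun s' => ENNReal.ofReal (f'' s' ^ 2)) s)
          = fun t => ({t' : ℝ | s ≤ m t' ∧ m t' < s + h}).indicator
              (fun _ => ENNReal.ofReal (f'' s ^ 2)) t := by
        funext t
        by_cases hp : s ≤ m t ∧ m t < s + h
        · have hq : m t - h < s ∧ s ≤ m t := ⟨by linarith [hp.2], hp.1⟩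
          simp [Set.indicator_apply, Set.mem_Ioc, Set.mem_setOf_eq, hp, hq]
        · have hq : ¬(m t - h < s ∧ s ≤ m t) := by
            intro hq; exact hp ⟨hq.2, by linarith [hq.1]⟩
          simp [Set.indicator_apply, Set.mem_Ioc, Set.mem_setOf_eq, hp, hq]
      rw [he, lintegral_indicator_const (hTmeas s)]
      refine mul_le_mul_right ?_ _
      rw [Measure.restrict_apply (hTmeas s)]
      have hTeq : {t' : ℝ | s ≤ m t' ∧ m t' < s + h}
          = Ico ((s - c0)/σ) ((s + h - c0)/σ) := by
        ext t'
        simp only [Set.mem_setOf_eq, Set.mem_Ico, hm_def]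
        constructor
        · rintro ⟨u1, u2⟩
          constructor
          · rw [div_le_iff₀ hσ0]; nlinarith
          · rw [lt_div_iff₀ hσ0]; nlinarith
        · rintro ⟨u1, u2⟩
          rw [div_le_iff₀ hσ0] at u1
          rw [lt_div_iff₀ hσ0] at u2
          constructor <;> nlinarith
      calc volume ({t' : ℝ | s ≤ m t' ∧ m t' < s + h} ∩ Ioc a b)
          ≤ volume {t' : ℝ | s ≤ m t' ∧ m t' < s + h} := measure_mono inter_subset_left
      _ = ENNReal.ofReal ((s + h - c0)/σ - (s - c0)/σ) := by rw [hTeq, Real.volume_Ico]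
      _ = ENNReal.ofReal (h / σ) := by
            congr 1
            field_simp
            ring
      _ ≤ ENNReal.ofReal (h / σ) := le_refl _
    have step5 : (∫⁻ s in Ioc a b, ∫⁻ t in Ioc a b,
            (Ioc (m t - h) (m t)).indicator (fun s' => ENNReal.ofReal (f'' s' ^ 2)) s)
        ≤ ENNReal.ofReal (h / σ) * ENNReal.ofReal (∫ s in Ioc a b, f'' s ^ 2) := by
      calc (∫⁻ s in Ioc a b, ∫⁻ t in Ioc a b,
            (Ioc (m t - h) (m t)).indicator (fun s' => ENNReal.ofReal (f'' s' ^ 2)) s)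
          ≤ ∫⁻ s in Ioc a b, ENNReal.ofReal (f'' s ^ 2) * ENNReal.ofReal (h / σ) :=
            lintegral_mono fun s => step4 s
      _ = (∫⁻ s in Ioc a b, ENNReal.ofReal (f'' s ^ 2)) * ENNReal.ofReal (h / σ) :=
            lintegral_mul_const'' _ hφm
      _ = ENNReal.ofReal (h / σ) * ENNReal.ofReal (∫ s in Ioc a b, f'' s ^ 2) := by
            rw [← MeasureTheory.ofReal_integral_eq_lintegral_ofReal hf''sqI
              (Filter.Eventually.of_forall fun s => sq_nonneg _)]
            rw [mul_comm]
    have hfinal : ENNReal.ofReal (∫ t in Ioc a b, Ψ t)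
        ≤ ENNReal.ofReal ((h / σ) * ∫ s in Ioc a b, f'' s ^ 2) := by
      rw [step1, step2, step3, ENNReal.ofReal_mul (div_nonneg hh0.le hσ0.le)]
      exact step5
    exact (ENNReal.ofReal_le_ofReal_iff (mul_nonneg (div_nonneg hh0.le hσ0.le) hX2nn)).mp hfinal
  have bound1 : (∫ t in Ioc a b, (f' t - g t) ^ 2) ≤ ∫ s in Ioc a b, f'' s ^ 2 := by
    have i1 : (∫ t in Ioc a b, (f' t - g t) ^ 2) ≤ ∫ t in Ioc a b, h * Ψ t := by
      apply setIntegral_mono_on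
        (((hf'c.sub hgc).pow 2).integrableOn_Icc.mono_set hIcc)
        (hΨint.const_mul h) measurableSet_Ioc
      intro t ht; exact key t (hIcc ht)
    have i2 : (∫ t in Ioc a b, h * Ψ t) = h * ∫ t in Ioc a b, Ψ t := integral_const_mul h _
    have hfrac : h * (h / σ) ≤ 1 := by
      have h1 : h / σ ≤ 1 := by
        rw [div_le_one hσ0]; exact hσh
      nlinarith
    have i3 : (∫ t in Ioc a b, Ψ t) ≤ (h / σ) * ∫ s in Ioc a b, f'' s ^ 2 := fub
    have i4 : h * ((h / σ) * ∫ s in Ioc a b, f'' s ^ 2) ≤ ∫ s in Ioc a b, f'' s ^ 2 := by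
      nlinarith [hX2nn, mul_nonneg (div_nonneg hh0.le hσ0.le) hX2nn]
    have i5 : h * (∫ t in Ioc a b, Ψ t) ≤ h * ((h / σ) * ∫ s in Ioc a b, f'' s ^ 2) :=
      mul_le_mul_of_nonneg_left i3 hh0.le
    linarith [i1, i2.le, i2.ge]
  -- Minkowski split of f' = (f' - g) + g
  have hu2 : IntegrableOn (fun t => (f' t - g t) ^ 2) (Ioc a b) volume :=
    ((hf'c.sub hgc).pow 2).integrableOn_Icc.mono_set hIcc
  have hv2 : IntegrableOn (fun t => g t ^ 2) (Ioc a b) volume :=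
    (hgc.pow 2).integrableOn_Icc.mono_set hIcc
  have huv : IntegrableOn (fun t => (f' t - g t) * g t) (Ioc a b) volume :=
    ((hf'c.sub hgc).mul hgc).integrableOn_Icc.mono_set hIcc
  have mink := sqrt_integral_sq_add_le (fun t => f' t - g t) g hu2 hv2 huv
  have erw : (∫ t in Ioc a b, (f' t - g t + g t) ^ 2) = ∫ t in Ioc a b, f' t ^ 2 := by
    apply setIntegral_congr_fun measurableSet_Ioc
    intro t _; ring
  rw [erw] at mink
  -- change of variables bounds for the g-term
  have hfsqI : IntegrableOn (fun t => f t ^ 2) (Ioc a b) volume :=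
    (hfc.pow 2).integrableOn_Icc.mono_set hIcc
  have hX0nn : (0:ℝ) ≤ ∫ t in Ioc a b, f t ^ 2 := integral_nonneg fun t => sq_nonneg _
  have hahb : a + h ≤ b := by
    have : L = b - a := hL_def
    linarith [hhd, hL]
  have cov1 : (∫ t in Ioc a b, f (m t) ^ 2) ≤ σ⁻¹ * ∫ t in Ioc a b, f t ^ 2 := by
    have hc := intervalIntegral.integral_comp_mul_add (a := a) (b := b) (c := σ)
      (fun u => f u ^ 2) hσ0.ne' c0
    have e1 : (∫ t in Ioc a b, f (m t) ^ 2) = ∫ t in a..b, (fun u => f u ^ 2) (σ * t + c0) := by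
      rw [intervalIntegral.integral_of_le hab'.le]
      apply setIntegral_congr_fun measurableSet_Ioc
      intro t _
      simp [hm_def]
    have e2 : σ * a + c0 = a + h := by
      have h' := hma; rw [hm_def] at h'; simpa using h'
    have e3 : σ * b + c0 = b := by
      have h' := hmb; rw [hm_def] at h'; simpa using h'
    rw [e1, hc, e2, e3, smul_eq_mul, intervalIntegral.integral_of_le hahb]
    apply mul_le_mul_of_nonneg_left _ (by positivity)
    apply setIntegral_mono_set hfsqI
      (Filter.Eventually.of_forall fun t => sq_nonneg _)
    exact HasSubset.Subset.eventuallyLE (Ioc_subset_Ioc_left (by linarith [hh0]))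
  have cov2 : (∫ t in Ioc a b, f (m t - h) ^ 2) ≤ σ⁻¹ * ∫ t in Ioc a b, f t ^ 2 := by
    have hc := intervalIntegral.integral_comp_mul_add (a := a) (b := b) (c := σ)
      (fun u => f u ^ 2) hσ0.ne' (c0 - h)
    have e1 : (∫ t in Ioc a b, f (m t - h) ^ 2)
        = ∫ t in a..b, (fun u => f u ^ 2) (σ * t + (c0 - h)) := by
      rw [intervalIntegral.integral_of_le hab'.le]
      apply setIntegral_congr_fun measurableSet_Ioc
      intro t _
      simp only [hm_def]
      ring_nf
    have e2 : σ * a + (c0 - h) = a := by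
      have h' := hma; rw [hm_def] at h'; simp only at h'; linarith
    have e3 : σ * b + (c0 - h) = b - h := by
      have h' := hmb; rw [hm_def] at h'; simp only at h'; linarith
    rw [e1, hc, e2, e3, smul_eq_mul, intervalIntegral.integral_of_le (by linarith [hh0, hahb])]
    apply mul_le_mul_of_nonneg_left _ (by positivity)
    apply setIntegral_mono_set hfsqI
      (Filter.Eventually.of_forall fun t => sq_nonneg _)
    exact HasSubset.Subset.eventuallyLE (Ioc_subset_Ioc_right (by linarith [hh0]))
  -- bound the integral of g^2
  have hfm2 : IntegrableOn (fun t => f (m t) ^ 2) (Ioc a b) volume :=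
    (((hfc.comp hmc.continuousOn hmaps).pow 2).integrableOn_Icc).mono_set hIcc
  have hfm2' : IntegrableOn (fun t => f (m t - h) ^ 2) (Ioc a b) volume :=
    (((hfc.comp ((hmc.sub continuous_const).continuousOn) hmaps').pow 2).integrableOn_Icc).mono_set hIcc
  have gsq : (∫ t in Ioc a b, g t ^ 2) ≤ (4 / (h ^ 2 * σ)) * ∫ t in Ioc a b, f t ^ 2 := by
    have p1 : ∀ t : ℝ, g t ^ 2 ≤ 2 / h ^ 2 * f (m t) ^ 2 + 2 / h ^ 2 * f (m t - h) ^ 2 := by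
      intro t
      rw [hg_def]
      simp only
      rw [div_pow]
      rw [div_le_iff₀ (by positivity : (0:ℝ) < h ^ 2)]
      have hne : h ^ 2 ≠ 0 := by positivity
      field_simp
      nlinarith [sq_nonneg (f (m t) + f (m t - h)), sq_nonneg (f (m t) - f (m t - h))]
    have i1 : (∫ t in Ioc a b, g t ^ 2)
        ≤ ∫ t in Ioc a b, (2 / h ^ 2 * f (m t) ^ 2 + 2 / h ^ 2 * f (m t - h) ^ 2) := by
      apply setIntegral_mono_on hv2 ((hfm2.const_mul _).add (hfm2'.const_mul _))
        measurableSet_Ioc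
      intro t _; exact p1 t
    have i2 : (∫ t in Ioc a b, (2 / h ^ 2 * f (m t) ^ 2 + 2 / h ^ 2 * f (m t - h) ^ 2))
        = 2 / h ^ 2 * (∫ t in Ioc a b, f (m t) ^ 2)
          + 2 / h ^ 2 * ∫ t in Ioc a b, f (m t - h) ^ 2 := by
      rw [integral_add (hfm2.const_mul _) (hfm2'.const_mul _), integral_const_mul,
        integral_const_mul]
    have hconst : 2 / h ^ 2 * (σ⁻¹ * ∫ t in Ioc a b, f t ^ 2)
          + 2 / h ^ 2 * (σ⁻¹ * ∫ t in Ioc a b, f t ^ 2)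
        = (4 / (h ^ 2 * σ)) * ∫ t in Ioc a b, f t ^ 2 := by
      field_simp
      ring
    have h2h : (0:ℝ) ≤ 2 / h ^ 2 := by positivity
    nlinarith [mul_le_mul_of_nonneg_left cov1 h2h, mul_le_mul_of_nonneg_left cov2 h2h]
  -- numeric bound on the constant
  have hC0 : (0:ℝ) ≤ 2 * (1 + 2 / d) ^ 2 := by positivity
  have hKC : 4 / (h ^ 2 * σ) ≤ (2 * (1 + 2 / d) ^ 2) ^ 2 := by
    have hnum : 1 ≤ (1 + 2 / d) ^ 4 * h ^ 3 := by
      have e : (1 + 2 / d) = (d + 2) / d := by field_simp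
      rw [e, hh_def, div_pow, div_pow, div_mul_div_comm, le_div_iff₀ (by positivity)]
      have e9 : (d+2)^4 * d^3 - d^4 * (d+1)^3 = d^3 * (5*d^3 + 21*d^2 + 31*d + 16) := by
        ring
      have e10 : (0:ℝ) < d^3 * (5*d^3 + 21*d^2 + 31*d + 16) := by positivity
      linarith [e10]
    have hh3 : h ^ 3 ≤ h ^ 2 * σ := by nlinarith [sq_nonneg h]
    have hpos : (0:ℝ) < h ^ 2 * σ := by positivity
    rw [div_le_iff₀ hpos]
    have e2 : (2 * (1 + 2 / d) ^ 2) ^ 2 = 4 * (1 + 2 / d) ^ 4 := by ring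
    rw [e2]
    have e3 : (1 + 2/d) ^ 4 * h ^ 3 ≤ (1 + 2/d) ^ 4 * (h ^ 2 * σ) :=
      mul_le_mul_of_nonneg_left hh3 (by positivity : (0:ℝ) ≤ (1 + 2/d) ^ 4)
    linarith only [hnum, e3]
  -- assemble
  have b1 : Real.sqrt (∫ t in Ioc a b, (f' t - g t) ^ 2)
      ≤ Real.sqrt (∫ t in Ioc a b, f'' t ^ 2) := Real.sqrt_le_sqrt bound1
  have b2 : Real.sqrt (∫ t in Ioc a b, g t ^ 2)
      ≤ 2 * (1 + 2 / d) ^ 2 * Real.sqrt (∫ t in Ioc a b, f t ^ 2) := by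
    calc Real.sqrt (∫ t in Ioc a b, g t ^ 2)
        ≤ Real.sqrt ((4 / (h ^ 2 * σ)) * ∫ t in Ioc a b, f t ^ 2) := Real.sqrt_le_sqrt gsq
    _ = Real.sqrt (4 / (h ^ 2 * σ)) * Real.sqrt (∫ t in Ioc a b, f t ^ 2) :=
        Real.sqrt_mul (by positivity) _
    _ ≤ (2 * (1 + 2 / d) ^ 2) * Real.sqrt (∫ t in Ioc a b, f t ^ 2) := by
        apply mul_le_mul_of_nonneg_right _ (Real.sqrt_nonneg _)
        calc Real.sqrt (4 / (h ^ 2 * σ)) ≤ Real.sqrt ((2 * (1 + 2 / d) ^ 2) ^ 2) :=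
              Real.sqrt_le_sqrt hKC
        _ = 2 * (1 + 2 / d) ^ 2 := Real.sqrt_sq hC0
  linarith [mink, b1, b2]
end

section
/- The following are equivalent: (a) d_* := inf_k d_k > 0; (b) there exists a constant C > 0 such that every function f : [0,∞) → ℝ that is piecewise H² with respect to X and satisfies Σ_k (‖f‖²_{L²(Δ_k)} + ‖f''‖²_{L²(Δ_k)}) < ∞ also satisfies Σ_k ‖f'‖²_{L²(Δ_k)} ≤ C · Σ_k (‖f‖²_{L²(Δ_k)} + ‖f''‖²_{L²(Δ_k)}). In other words, the embedding of the broken Sobolev space W^{2,2}(ℝ₊∖X) into W^{1,2}(ℝ₊∖X) holds and is continuous if and only if d_* > 0. -/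
open MeasureTheory Set Filter

/-- A function that is piecewise `H²` with respect to the partition points
`x 0 < x 1 < x 2 < ⋯` of `[0,∞)`: on each interval `Δ_{k+1} = [x k, x (k+1)]` it is
continuously differentiable with absolutely continuous derivative, encoded via
the fundamental theorem of calculus using right-limit values `fr k = f(x k +)`
and `dr k = f'(x k +)`. -/
structure PiecewiseH2 (x : ℕ → ℝ) where
  f : ℝ → ℝ
  f' : ℝ → ℝ
  f'' : ℝ → ℝ
  fr : ℕ → ℝ
  dr : ℕ → ℝ
  int_dd : ∀ k, IntegrableOn f'' (Icc (x k) (x (k + 1))) volume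
  int_d : ∀ k, IntegrableOn f' (Icc (x k) (x (k + 1))) volume
  ftc_d : ∀ k, ∀ t ∈ Ioo (x k) (x (k + 1)), f' t = dr k + ∫ s in Ioc (x k) t, f'' s
  ftc : ∀ k, ∀ t ∈ Ioo (x k) (x (k + 1)), f t = fr k + ∫ s in Ioc (x k) t, f' s



lemma exists_sq_le (f : ℝ → ℝ) (c d : ℝ) (hcd : c < d) (hc : ContinuousOn f (Icc c d)) :
    ∃ u ∈ Icc c d, (d - c) * f u ^ 2 ≤ ∫ t in Icc c d, f t ^ 2 := by
  obtain ⟨u, hu, hmin⟩ := isCompact_Icc.exists_isMinOn (nonempty_Icc.2 hcd.le)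
    ((hc.pow 2) : ContinuousOn (fun t => f t ^ 2) (Icc c d))
  refine ⟨u, hu, ?_⟩
  have hint : IntegrableOn (fun t => f t ^ 2) (Icc c d) := (hc.pow 2).integrableOn_Icc
  have h1 : ∫ _t in Icc c d, f u ^ 2 ≤ ∫ t in Icc c d, f t ^ 2 :=
    setIntegral_mono_on (integrableOn_const measure_Icc_lt_top.ne) hint
      measurableSet_Icc (fun t ht => isMinOn_iff.mp hmin t ht)
  rwa [setIntegral_const, measureReal_def, Real.volume_Icc, ENNReal.toReal_ofReal (by linarith), smul_eq_mul]
    at h1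

set_option maxHeartbeats 1000000 in
lemma lemA (a b : ℝ) (hab : a < b) (f f' f'' : ℝ → ℝ)
    (hfc : ContinuousOn f (Icc a b)) (hf'c : ContinuousOn f' (Icc a b))
    (hgi : IntegrableOn f'' (Icc a b))
    (hgsq : IntegrableOn (fun t => f'' t ^ 2) (Icc a b))
    (hd : ∀ s ∈ Icc a b, ∀ t ∈ Icc a b, s ≤ t → f' t - f' s = ∫ r in Ioc s t, f'' r)
    (hf : ∀ s ∈ Icc a b, ∀ t ∈ Icc a b, s ≤ t → f t - f s = ∫ r in Ioc s t, f' r) :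
    ∫ t in Icc a b, f' t ^ 2 ≤
      216 / (b - a) ^ 2 * (∫ t in Icc a b, f t ^ 2)
        + 2 * (b - a) ^ 2 * (∫ t in Icc a b, f'' t ^ 2) := by
  set L : ℝ := b - a with hLdef
  have hL : 0 < L := hLdef ▸ sub_pos.2 hab
  set S : ℝ := ∫ t in Icc a b, f'' t ^ 2 with hSdef
  set A2 : ℝ := ∫ t in Icc a b, f t ^ 2 with hA2def
  set D : ℝ := ∫ t in Icc a b, |f'' t| with hDdef
  clear_value L S A2 D
  have hLne : L ≠ 0 := ne_of_gt hL
  have hDnn : 0 ≤ D := by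
    rw [hDdef]; exact setIntegral_nonneg measurableSet_Icc (fun _ _ => abs_nonneg _)
  have habs : IntegrableOn (fun t => |f'' t|) (Icc a b) := hgi.abs
  have hvol : (volume (Icc a b)).toReal = L := by
    rw [Real.volume_Icc, hLdef, ENNReal.toReal_ofReal (by linarith)]
  -- Cauchy-Schwarz for D
  have hD2 : D ^ 2 ≤ L * S := by
    have key : (0:ℝ) ≤ ∫ t in Icc a b, (|f'' t| - D / L) ^ 2 :=
      setIntegral_nonneg measurableSet_Icc (fun _ _ => sq_nonneg _)
    have e1 : ∫ t in Icc a b, (|f'' t| - D / L) ^ 2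
        = (S - 2 * (D / L) * D) + (D / L) ^ 2 * L := by
      have h1 : (fun t => (|f'' t| - D / L) ^ 2)
          = fun t => (f'' t ^ 2 - 2 * (D / L) * |f'' t|) + (D / L) ^ 2 := by
        funext t; rw [sub_sq, sq_abs]; ring
      have i2 : IntegrableOn (fun t => 2 * (D / L) * |f'' t|) (Icc a b) := by
        exact habs.const_mul _
      have i1 : IntegrableOn (fun t => f'' t ^ 2 - 2 * (D / L) * |f'' t|) (Icc a b) := by
        exact hgsq.sub i2
      rw [h1, integral_add i1 (integrableOn_const measure_Icc_lt_top.ne),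
          integral_sub hgsq i2, integral_const_mul, setIntegral_const,
          measureReal_def, smul_eq_mul, hvol, ← hSdef, ← hDdef]
      ring
    have e2 : 2 * (D / L) * D - (D / L) ^ 2 * L = D ^ 2 / L := by
      field_simp; ring
    have h3 : D ^ 2 / L ≤ S := by rw [e1] at key; linarith
    calc D ^ 2 = D ^ 2 / L * L := by field_simp
      _ ≤ S * L := mul_le_mul_of_nonneg_right h3 hL.le
      _ = L * S := mul_comm _ _
  have hA2nn : 0 ≤ A2 := by
    rw [hA2def]; exact setIntegral_nonneg measurableSet_Icc (fun _ _ => sq_nonneg _)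
  have hfsq : IntegrableOn (fun t => f t ^ 2) (Icc a b) := (hfc.pow 2).integrableOn_Icc
  -- choose u and v
  obtain ⟨u, hu, hu2⟩ := exists_sq_le f a (a + L / 3) (by linarith)
    (hfc.mono (Icc_subset_Icc le_rfl (by linarith)))
  obtain ⟨v, hv, hv2⟩ := exists_sq_le f (a + 2 * L / 3) b (by linarith)
    (hfc.mono (Icc_subset_Icc (by linarith) le_rfl))
  have huA : L / 3 * f u ^ 2 ≤ A2 := by
    have h4 : ∫ t in Icc a (a + L / 3), f t ^ 2 ≤ ∫ t in Icc a b, f t ^ 2 :=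
      setIntegral_mono_set hfsq (Filter.Eventually.of_forall (fun t => sq_nonneg _))
        (HasSubset.Subset.eventuallyLE (Icc_subset_Icc le_rfl (by linarith)))
    have h5 : a + L / 3 - a = L / 3 := by ring
    rw [h5] at hu2; rw [hA2def]; linarith
  have hvA : L / 3 * f v ^ 2 ≤ A2 := by
    have h4 : ∫ t in Icc (a + 2 * L / 3) b, f t ^ 2 ≤ ∫ t in Icc a b, f t ^ 2 :=
      setIntegral_mono_set hfsq (Filter.Eventually.of_forall (fun t => sq_nonneg _))
        (HasSubset.Subset.eventuallyLE (Icc_subset_Icc (by linarith) le_rfl))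
    have h5 : b - (a + 2 * L / 3) = L / 3 := by rw [hLdef]; ring
    rw [h5] at hv2; rw [hA2def]; linarith
  have hub : u ∈ Icc a b := ⟨hu.1, by have h5 := hu.2; linarith⟩
  have hvb : v ∈ Icc a b := ⟨by have h5 := hv.1; linarith, hv.2⟩
  have huv : u ≤ v := by
    have h1 := hu.2; have h2 := hv.1; linarith
  have huvge : L / 3 ≤ v - u := by have h1 := hu.2; have h2 := hv.1; linarith
  have huvpos : 0 < v - u := by linarith
  have hsubuv : Ioc u v ⊆ Icc a b := Ioc_subset_Icc_self.trans (Icc_subset_Icc hub.1 hvb.2)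
  have intE : IntegrableOn f' (Ioc u v) := hf'c.integrableOn_Icc.mono_set hsubuv
  have hfv : f v - f u = ∫ s in Ioc u v, f' s := hf u hub v hvb huv
  -- pointwise estimate
  have key : ∀ t ∈ Icc a b, L ^ 3 * f' t ^ 2 ≤ 216 * A2 + 2 * L ^ 3 * D ^ 2 := by
    intro t ht
    have hIoc_bound : ∀ c d : ℝ, Ioc c d ⊆ Icc a b → |∫ r in Ioc c d, f'' r| ≤ D := by
      intro c d hsub
      calc |∫ r in Ioc c d, f'' r| ≤ ∫ r in Ioc c d, |f'' r| := by
            simpa [Real.norm_eq_abs] using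
              norm_integral_le_integral_norm (μ := volume.restrict (Ioc c d)) f''
        _ ≤ ∫ r in Icc a b, |f'' r| := setIntegral_mono_set habs
            (Filter.Eventually.of_forall (fun r => abs_nonneg _))
            (HasSubset.Subset.eventuallyLE hsub)
        _ = D := hDdef.symm
    have hstep : ∀ s ∈ Ioc u v, |f' s - f' t| ≤ D := by
      intro s hs
      have hsb : s ∈ Icc a b := hsubuv hs
      rcases le_total s t with h | h
      · rw [abs_sub_comm, hd s hsb t ht h]
        exact hIoc_bound s t (fun r hr => ⟨le_trans hsb.1 hr.1.le, le_trans hr.2 ht.2⟩)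
      · rw [hd t ht s hsb h]
        exact hIoc_bound t s (fun r hr => ⟨le_trans ht.1 hr.1.le, le_trans hr.2 hsb.2⟩)
    have hvoluv : (volume (Ioc u v)).toReal = v - u := by
      rw [Real.volume_Ioc, ENNReal.toReal_ofReal huvpos.le]
    have hsplit : ∫ s in Ioc u v, (f' s - f' t) = (∫ s in Ioc u v, f' s) - (v - u) * f' t := by
      rw [integral_sub intE (integrableOn_const measure_Ioc_lt_top.ne),
        setIntegral_const, measureReal_def, smul_eq_mul, hvoluv]
    have hE : |∫ s in Ioc u v, (f' s - f' t)| ≤ (v - u) * D := by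
      calc |∫ s in Ioc u v, (f' s - f' t)| ≤ ∫ s in Ioc u v, |f' s - f' t| := by
            simpa [Real.norm_eq_abs] using
              norm_integral_le_integral_norm (μ := volume.restrict (Ioc u v))
                (fun s => f' s - f' t)
        _ ≤ ∫ _s in Ioc u v, D :=
            setIntegral_mono_on ((intE.sub (integrableOn_const measure_Ioc_lt_top.ne)).abs)
              (integrableOn_const measure_Ioc_lt_top.ne) measurableSet_Ioc hstep
        _ = (v - u) * D := by rw [setIntegral_const, measureReal_def, smul_eq_mul, hvoluv]
    set s0 : ℝ := |f v| + |f u| with hs0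
    have h3 : (v - u) * |f' t| ≤ s0 + (v - u) * D := by
      have h4 : (v - u) * f' t = (f v - f u) - ∫ s in Ioc u v, (f' s - f' t) := by
        rw [hfv] at *; rw [hsplit]; ring
      calc (v - u) * |f' t| = |(v - u) * f' t| := by
            rw [abs_mul, abs_of_pos huvpos]
        _ = |(f v - f u) - ∫ s in Ioc u v, (f' s - f' t)| := by rw [h4]
        _ ≤ |f v - f u| + |∫ s in Ioc u v, (f' s - f' t)| := abs_sub _ _
        _ ≤ s0 + (v - u) * D := add_le_add (abs_sub _ _) hE
    have hs0nn : 0 ≤ s0 := by positivity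
    have h7 : L / 3 * |f' t| ≤ s0 + L / 3 * D := by
      rcases le_total (|f' t|) D with h | h
      · have := mul_le_mul_of_nonneg_left h (by linarith : (0:ℝ) ≤ L / 3)
        linarith
      · have h8 : 0 ≤ (v - u - L / 3) * (|f' t| - D) :=
          mul_nonneg (by linarith) (by linarith)
        nlinarith [h3]
    have h8 : (L / 3 * |f' t|) ^ 2 ≤ (s0 + L / 3 * D) ^ 2 := by
      have h0 : 0 ≤ L / 3 * |f' t| := by positivity
      exact pow_le_pow_left₀ h0 h7 2
    have e8 : (L / 3 * |f' t|) ^ 2 = L ^ 2 / 9 * f' t ^ 2 := by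
      rw [mul_pow, sq_abs]; ring
    rw [e8] at h8
    have e9 : (s0 + L / 3 * D) ^ 2 ≤ 2 * s0 ^ 2 + 2 * (L / 3 * D) ^ 2 := by
      linarith [sq_nonneg (s0 - L / 3 * D)]
    have e10 : s0 ^ 2 ≤ 2 * (f u ^ 2 + f v ^ 2) := by
      have := sq_nonneg (|f v| - |f u|)
      have h1 := sq_abs (f v); have h2 := sq_abs (f u)
      rw [hs0]; nlinarith [this, h1, h2]
    have hmid : L ^ 2 / 9 * f' t ^ 2 ≤ 4 * (f u ^ 2 + f v ^ 2) + 2 * L ^ 2 / 9 * D ^ 2 := by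
      nlinarith [h8, e9, e10]
    have h11 := mul_le_mul_of_nonneg_left hmid (by positivity : (0:ℝ) ≤ 9 * L)
    linarith [h11, huA, hvA]
  -- integrate the pointwise bound
  have hf'sq : IntegrableOn (fun t => f' t ^ 2) (Icc a b) := (hf'c.pow 2).integrableOn_Icc
  set M : ℝ := (216 * A2 + 2 * L ^ 3 * D ^ 2) / L ^ 3 with hM
  clear_value M
  have hkey' : ∀ t ∈ Icc a b, f' t ^ 2 ≤ M := by
    intro t ht
    rw [hM, le_div_iff₀ (by positivity : (0:ℝ) < L ^ 3)]
    linarith [key t ht]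

  have hfinal : ∫ t in Icc a b, f' t ^ 2 ≤ L * M := by
    have h1 : ∫ t in Icc a b, f' t ^ 2 ≤ ∫ _t in Icc a b, M :=
      setIntegral_mono_on hf'sq (integrableOn_const measure_Icc_lt_top.ne)
        measurableSet_Icc hkey'
    rwa [setIntegral_const, measureReal_def, smul_eq_mul, hvol] at h1
  have hLM : L * M = 216 * A2 / L ^ 2 + 2 * L * D ^ 2 := by
    rw [hM]; field_simp
  have hlast : 2 * L * D ^ 2 ≤ 2 * L ^ 2 * S := by nlinarith [hD2, hL]
  have : 216 * A2 / L ^ 2 = 216 / L ^ 2 * A2 := by ring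
  calc ∫ t in Icc a b, f' t ^ 2 ≤ L * M := hfinal
    _ = 216 / L ^ 2 * A2 + 2 * L * D ^ 2 := by rw [hLM]; ring
    _ ≤ 216 / L ^ 2 * A2 + 2 * L ^ 2 * S := by linarith

lemma sum_pieces (a b : ℝ) (hab : a ≤ b) (N : ℕ) (t : ℕ → ℝ) (ht0 : t 0 = a) (htN : t N = b)
    (hmono : ∀ j, j < N → t j ≤ t (j + 1)) (hsub : ∀ j, j < N → Icc (t j) (t (j + 1)) ⊆ Icc a b)
    (F : ℝ → ℝ) (hF : IntegrableOn F (Icc a b)) :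
    ∫ s in Icc a b, F s = ∑ j ∈ Finset.range N, ∫ s in Icc (t j) (t (j + 1)), F s := by
  have hint : ∀ j < N, IntervalIntegrable F volume (t j) (t (j + 1)) := by
    intro j hj
    rw [intervalIntegrable_iff_integrableOn_Ioc_of_le (hmono j hj)]
    exact hF.mono_set (Ioc_subset_Icc_self.trans (hsub j hj))
  have h1 := intervalIntegral.sum_integral_adjacent_intervals hint
  rw [ht0, htN] at h1
  rw [integral_Icc_eq_integral_Ioc, ← intervalIntegral.integral_of_le hab, ← h1]
  refine Finset.sum_congr rfl (fun j hj => ?_)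
  rw [intervalIntegral.integral_of_le (hmono j (Finset.mem_range.1 hj)),
    integral_Icc_eq_integral_Ioc]

set_option maxHeartbeats 1000000 in
lemma lemB (ε : ℝ) (hε : 0 < ε) (a b : ℝ) (hab : ε ≤ b - a) (f f' f'' : ℝ → ℝ)
    (hfc : ContinuousOn f (Icc a b)) (hf'c : ContinuousOn f' (Icc a b))
    (hgi : IntegrableOn f'' (Icc a b))
    (hgsq : IntegrableOn (fun t => f'' t ^ 2) (Icc a b))
    (hd : ∀ s ∈ Icc a b, ∀ t ∈ Icc a b, s ≤ t → f' t - f' s = ∫ r in Ioc s t, f'' r)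
    (hf : ∀ s ∈ Icc a b, ∀ t ∈ Icc a b, s ≤ t → f t - f s = ∫ r in Ioc s t, f' r) :
    ∫ t in Icc a b, f' t ^ 2 ≤
      (864 / ε ^ 2 + 2 * ε ^ 2) * ((∫ t in Icc a b, f t ^ 2) + ∫ t in Icc a b, f'' t ^ 2) := by
  have hab' : a < b := by linarith
  set N : ℕ := ⌈(b - a) / ε⌉₊ with hN
  have hx1 : (1:ℝ) ≤ (b - a) / ε := (one_le_div hε).2 hab
  have hN1 : 1 ≤ N := Nat.one_le_iff_ne_zero.2 (by
    intro h0
    have := Nat.ceil_eq_zero.1 (hN ▸ h0)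
    linarith)
  have hNpos : (0:ℝ) < N := by exact_mod_cast hN1
  set l : ℝ := (b - a) / N with hl
  have hlpos : 0 < l := div_pos (by linarith) hNpos
  have hlN : l * N = b - a := by rw [hl]; field_simp
  have hl1 : l ≤ ε := by
    rw [hl, div_le_iff₀ hNpos]
    have h2 := Nat.le_ceil ((b - a) / ε)
    rw [← hN] at h2
    have h5 := mul_le_mul_of_nonneg_right h2 hε.le
    have h6 : (b - a) / ε * ε = b - a := div_mul_cancel₀ _ (ne_of_gt hε)
    rw [h6] at h5; linarith
  have hl2 : ε ≤ 2 * l := by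
    have h2 : (N:ℝ) < (b - a) / ε + 1 := by
      rw [hN]
      exact_mod_cast Nat.ceil_lt_add_one (by positivity)
    have h3 : (N:ℝ) ≤ 2 * ((b - a) / ε) := by linarith
    have h4 : ε * (N:ℝ) ≤ ε * (2 * ((b - a) / ε)) := mul_le_mul_of_nonneg_left h3 hε.le
    have h5 : ε * (2 * ((b - a) / ε)) = 2 * (b - a) := by field_simp
    have h6 : ε * (N:ℝ) ≤ (2 * l) * N := by rw [h5] at h4; nlinarith [hlN]
    have h7 : ε * (N:ℝ) ≤ (2 * l) * (N:ℝ) := by linarith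
    exact le_of_mul_le_mul_right h7 hNpos
  set t : ℕ → ℝ := fun j => a + j * l with htdef
  have ht0 : t 0 = a := by simp [htdef]
  have htN : t N = b := by
    rw [htdef]; simp only []
    rw [hl]; field_simp; ring
  have hstep : ∀ j : ℕ, t (j + 1) - t j = l := by
    intro j; rw [htdef]; push_cast; ring
  have htmono : ∀ j, j < N → t j ≤ t (j + 1) := by
    intro j _; have := hstep j; linarith
  have hsub : ∀ j, j < N → Icc (t j) (t (j + 1)) ⊆ Icc a b := by
    intro j hj
    apply Icc_subset_Icc
    · rw [htdef]; simp only []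
      have : (0:ℝ) ≤ j * l := by positivity
      linarith
    · rw [← htN, htdef]; simp only []
      have hj' : (j:ℝ) + 1 ≤ N := by exact_mod_cast Nat.succ_le_of_lt hj
      push_cast
      nlinarith [hlpos]
  have hfsq : IntegrableOn (fun s => f s ^ 2) (Icc a b) := (hfc.pow 2).integrableOn_Icc
  have hf'sq : IntegrableOn (fun s => f' s ^ 2) (Icc a b) := (hf'c.pow 2).integrableOn_Icc
  -- per-piece estimate
  have piece : ∀ j, j < N →
      ∫ s in Icc (t j) (t (j + 1)), f' s ^ 2 ≤
        864 / ε ^ 2 * (∫ s in Icc (t j) (t (j + 1)), f s ^ 2)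
          + 2 * ε ^ 2 * (∫ s in Icc (t j) (t (j + 1)), f'' s ^ 2) := by
    intro j hj
    have hsubj := hsub j hj
    have hjlt : t j < t (j + 1) := by have := hstep j; linarith
    have hA := lemA (t j) (t (j + 1)) hjlt f f' f'' (hfc.mono hsubj) (hf'c.mono hsubj)
      (hgi.mono_set hsubj) (hgsq.mono_set hsubj)
      (fun s hs u hu hsu => hd s (hsubj hs) u (hsubj hu) hsu)
      (fun s hs u hu hsu => hf s (hsubj hs) u (hsubj hu) hsu)
    rw [hstep j] at hA
    have h1 : 0 ≤ ∫ s in Icc (t j) (t (j + 1)), f s ^ 2 :=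
      setIntegral_nonneg measurableSet_Icc (fun _ _ => sq_nonneg _)
    have h2 : 0 ≤ ∫ s in Icc (t j) (t (j + 1)), f'' s ^ 2 :=
      setIntegral_nonneg measurableSet_Icc (fun _ _ => sq_nonneg _)
    have hc1 : 216 / l ^ 2 ≤ 864 / ε ^ 2 := by
      rw [div_le_div_iff₀ (by positivity) (by positivity)]
      nlinarith [hl2, hε, hlpos]
    have hc2 : 2 * l ^ 2 ≤ 2 * ε ^ 2 := by nlinarith [hl1, hlpos]
    calc ∫ s in Icc (t j) (t (j + 1)), f' s ^ 2
        ≤ 216 / l ^ 2 * (∫ s in Icc (t j) (t (j + 1)), f s ^ 2)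
          + 2 * l ^ 2 * (∫ s in Icc (t j) (t (j + 1)), f'' s ^ 2) := hA
      _ ≤ 864 / ε ^ 2 * (∫ s in Icc (t j) (t (j + 1)), f s ^ 2)
          + 2 * ε ^ 2 * (∫ s in Icc (t j) (t (j + 1)), f'' s ^ 2) := by
          have := mul_le_mul_of_nonneg_right hc1 h1
          have := mul_le_mul_of_nonneg_right hc2 h2
          linarith
  -- sum up
  have e1 := sum_pieces a b hab'.le N t ht0 htN htmono hsub _ hf'sq
  have e2 := sum_pieces a b hab'.le N t ht0 htN htmono hsub _ hfsq
  have e3 := sum_pieces a b hab'.le N t ht0 htN htmono hsub _ hgsq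
  have hfnn : 0 ≤ ∫ s in Icc a b, f s ^ 2 :=
    setIntegral_nonneg measurableSet_Icc (fun _ _ => sq_nonneg _)
  have hgnn : 0 ≤ ∫ s in Icc a b, f'' s ^ 2 :=
    setIntegral_nonneg measurableSet_Icc (fun _ _ => sq_nonneg _)
  calc ∫ s in Icc a b, f' s ^ 2
      = ∑ j ∈ Finset.range N, ∫ s in Icc (t j) (t (j + 1)), f' s ^ 2 := e1
    _ ≤ ∑ j ∈ Finset.range N, (864 / ε ^ 2 * (∫ s in Icc (t j) (t (j + 1)), f s ^ 2)
          + 2 * ε ^ 2 * (∫ s in Icc (t j) (t (j + 1)), f'' s ^ 2)) :=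
        Finset.sum_le_sum (fun j hj => piece j (Finset.mem_range.1 hj))
    _ = 864 / ε ^ 2 * (∫ s in Icc a b, f s ^ 2) + 2 * ε ^ 2 * (∫ s in Icc a b, f'' s ^ 2) := by
        rw [Finset.sum_add_distrib, ← Finset.mul_sum, ← Finset.mul_sum, ← e2, ← e3]
    _ ≤ (864 / ε ^ 2 + 2 * ε ^ 2) * ((∫ s in Icc a b, f s ^ 2) + ∫ s in Icc a b, f'' s ^ 2) := by
        have c1 : (0:ℝ) ≤ 864 / ε ^ 2 := by positivity
        have c2 : (0:ℝ) ≤ 2 * ε ^ 2 := by positivity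
        nlinarith [mul_nonneg c1 hgnn, mul_nonneg c2 hfnn]

/-- The embedding `W^{2,2}(ℝ₊∖X) ↪ W^{1,2}(ℝ₊∖X)` holds and is continuous
if and only if `d_* = inf_k d_k > 0` (Proposition 2.1(ii)). -/
theorem stmt_1 (x : ℕ → ℝ) (hx0 : x 0 = 0) (hmono : StrictMono x)
    (hxtop : Tendsto x atTop atTop) :
    (∃ ε > 0, ∀ k, ε ≤ x (k + 1) - x k) ↔
      ∃ C > 0, ∀ F : PiecewiseH2 x,
        (∀ k, IntegrableOn (fun t => F.f'' t ^ 2) (Ioo (x k) (x (k + 1))) volume) →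
        Summable (fun k => (∫ t in Ioo (x k) (x (k + 1)), F.f t ^ 2) +
          ∫ t in Ioo (x k) (x (k + 1)), F.f'' t ^ 2) →
        (Summable (fun k => ∫ t in Ioo (x k) (x (k + 1)), F.f' t ^ 2) ∧
          (∑' k, ∫ t in Ioo (x k) (x (k + 1)), F.f' t ^ 2) ≤
            C * ∑' k, ((∫ t in Ioo (x k) (x (k + 1)), F.f t ^ 2) +
              ∫ t in Ioo (x k) (x (k + 1)), F.f'' t ^ 2)) := by
  constructor
  · -- forward direction
    rintro ⟨ε, hε, hlow⟩
    refine ⟨864 / ε ^ 2 + 2 * ε ^ 2, by positivity, ?_⟩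
    intro F hInt hSum
    have keyk : ∀ k, ∫ s in Ioo (x k) (x (k + 1)), F.f' s ^ 2 ≤
        (864 / ε ^ 2 + 2 * ε ^ 2) * ((∫ s in Ioo (x k) (x (k + 1)), F.f s ^ 2) +
          ∫ s in Ioo (x k) (x (k + 1)), F.f'' s ^ 2) := by
      intro k
      set a := x k with ha
      set b := x (k + 1) with hb
      have hab : a < b := hmono (Nat.lt_succ_self k)
      have hεab : ε ≤ b - a := hlow k
      set G1 : ℝ → ℝ := fun s => F.dr k + ∫ r in Ioc a s, F.f'' r with hG1
      set G : ℝ → ℝ := fun s => F.fr k + ∫ r in Ioc a s, F.f' r with hG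
      have hG1c : ContinuousOn G1 (Icc a b) :=
        continuousOn_const.add (intervalIntegral.continuousOn_primitive (F.int_dd k))
      have hGc : ContinuousOn G (Icc a b) :=
        continuousOn_const.add (intervalIntegral.continuousOn_primitive (F.int_d k))
      have hg1 : ∀ s ∈ Ioo a b, F.f' s = G1 s := F.ftc_d k
      have hg : ∀ s ∈ Ioo a b, F.f s = G s := F.ftc k
      have h2i : IntegrableOn F.f'' (Icc a b) := F.int_dd k
      have h1i : IntegrableOn F.f' (Icc a b) := F.int_d k
      have h2sq : IntegrableOn (fun s => F.f'' s ^ 2) (Icc a b) :=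
        (integrableOn_Icc_iff_integrableOn_Ioo enorm_ne_top enorm_ne_top).2 (hInt k)
      have hdG1 : ∀ s ∈ Icc a b, ∀ u ∈ Icc a b, s ≤ u →
          G1 u - G1 s = ∫ r in Ioc s u, F.f'' r := by
        intro s hs u hu hsu
        have hunion : Ioc a s ∪ Ioc s u = Ioc a u := Ioc_union_Ioc_eq_Ioc hs.1 hsu
        have i1 : IntegrableOn F.f'' (Ioc a s) :=
          h2i.mono_set (Ioc_subset_Icc_self.trans (Icc_subset_Icc le_rfl hs.2))
        have i2 : IntegrableOn F.f'' (Ioc s u) :=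
          h2i.mono_set (fun r hr => ⟨le_trans hs.1 hr.1.le, le_trans hr.2 hu.2⟩)
        rw [hG1]
        simp only []
        rw [← hunion, setIntegral_union (Ioc_disjoint_Ioc_of_le le_rfl) measurableSet_Ioc i1 i2]
        ring
      have hprim : ∀ s ∈ Icc a b, ∀ u ∈ Icc a b, s ≤ u →
          G u - G s = ∫ r in Ioc s u, F.f' r := by
        intro s hs u hu hsu
        have hunion : Ioc a s ∪ Ioc s u = Ioc a u := Ioc_union_Ioc_eq_Ioc hs.1 hsu
        have i1 : IntegrableOn F.f' (Ioc a s) :=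
          h1i.mono_set (Ioc_subset_Icc_self.trans (Icc_subset_Icc le_rfl hs.2))
        have i2 : IntegrableOn F.f' (Ioc s u) :=
          h1i.mono_set (fun r hr => ⟨le_trans hs.1 hr.1.le, le_trans hr.2 hu.2⟩)
        rw [hG]
        simp only []
        rw [← hunion, setIntegral_union (Ioc_disjoint_Ioc_of_le le_rfl) measurableSet_Ioc i1 i2]
        ring
      have hfG : ∀ s ∈ Icc a b, ∀ u ∈ Icc a b, s ≤ u →
          G u - G s = ∫ r in Ioc s u, G1 r := by
        intro s hs u hu hsu
        rw [hprim s hs u hu hsu, integral_Ioc_eq_integral_Ioo, integral_Ioc_eq_integral_Ioo]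
        exact setIntegral_congr_fun measurableSet_Ioo
          (fun r hr => hg1 r ⟨lt_of_le_of_lt hs.1 hr.1, lt_of_lt_of_le hr.2 hu.2⟩)
      have main := lemB ε hε a b hεab G G1 F.f'' hGc hG1c h2i h2sq hdG1 hfG
      have e1 : ∫ s in Icc a b, G1 s ^ 2 = ∫ s in Ioo a b, F.f' s ^ 2 := by
        rw [integral_Icc_eq_integral_Ioc, integral_Ioc_eq_integral_Ioo]
        exact setIntegral_congr_fun measurableSet_Ioo (fun s hs => by rw [hg1 s hs])
      have e2 : ∫ s in Icc a b, G s ^ 2 = ∫ s in Ioo a b, F.f s ^ 2 := by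
        rw [integral_Icc_eq_integral_Ioc, integral_Ioc_eq_integral_Ioo]
        exact setIntegral_congr_fun measurableSet_Ioo (fun s hs => by rw [hg s hs])
      have e3 : ∫ s in Icc a b, F.f'' s ^ 2 = ∫ s in Ioo a b, F.f'' s ^ 2 := by
        rw [integral_Icc_eq_integral_Ioc, integral_Ioc_eq_integral_Ioo]
      rw [e1, e2, e3] at main
      exact main
    have hnn : ∀ k, 0 ≤ ∫ s in Ioo (x k) (x (k + 1)), F.f' s ^ 2 :=
      fun k => setIntegral_nonneg measurableSet_Ioo (fun _ _ => sq_nonneg _)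
    have hsummable : Summable (fun k => ∫ s in Ioo (x k) (x (k + 1)), F.f' s ^ 2) :=
      Summable.of_nonneg_of_le hnn (fun k => keyk k) (hSum.mul_left _)
    refine ⟨hsummable, ?_⟩
    calc (∑' k, ∫ s in Ioo (x k) (x (k + 1)), F.f' s ^ 2)
        ≤ ∑' k, ((864 / ε ^ 2 + 2 * ε ^ 2) * ((∫ s in Ioo (x k) (x (k + 1)), F.f s ^ 2) +
            ∫ s in Ioo (x k) (x (k + 1)), F.f'' s ^ 2)) :=
          Summable.tsum_le_tsum keyk hsummable (hSum.mul_left _)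
      _ = (864 / ε ^ 2 + 2 * ε ^ 2) * ∑' k, ((∫ s in Ioo (x k) (x (k + 1)), F.f s ^ 2) +
            ∫ s in Ioo (x k) (x (k + 1)), F.f'' s ^ 2) := tsum_mul_left
  · -- backward direction
    rintro ⟨C, hC, hembed⟩
    by_contra hcon
    push_neg at hcon
    obtain ⟨k, hk⟩ := hcon (Real.sqrt (3 / C)) (Real.sqrt_pos.2 (by positivity))
    have hab : x k < x (k + 1) := hmono (Nat.lt_succ_self k)
    set d : ℝ := x (k + 1) - x k with hd'
    have hd : 0 < d := by rw [hd']; linarith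
    clear_value d
    have hdC : C * d ^ 2 < 3 := by
      have h1 : d < Real.sqrt (3 / C) := hk
      have h2 : Real.sqrt (3 / C) ^ 2 = 3 / C := Real.sq_sqrt (by positivity)
      have h3 : d ^ 2 < 3 / C := by nlinarith [Real.sqrt_nonneg (3 / C)]
      calc C * d ^ 2 < C * (3 / C) := by exact mul_lt_mul_of_pos_left h3 hC
        _ = 3 := by field_simp
    have hdisj : ∀ j, j ≠ k → ∀ s, s ∈ Ioo (x j) (x (j + 1)) → s ∉ Ioo (x k) (x (k + 1)) := by
      intro j hj s hs hs'
      rcases lt_or_gt_of_ne hj with h | h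
      · have h1 : x (j + 1) ≤ x k := hmono.monotone (Nat.succ_le_of_lt h)
        have h2 := hs.2; have h3 := hs'.1; linarith
      · have h1 : x (k + 1) ≤ x j := hmono.monotone (Nat.succ_le_of_lt h)
        have h2 := hs.1; have h3 := hs'.2; linarith
    set F : PiecewiseH2 x :=
      { f := fun s => if s ∈ Ioo (x k) (x (k + 1)) then s - x k else 0
        f' := fun s => if s ∈ Ioo (x k) (x (k + 1)) then 1 else 0
        f'' := fun _ => 0
        fr := fun _ => 0
        dr := fun j => if j = k then 1 else 0
        int_dd := fun j => integrableOn_zero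
        int_d := fun j => by
          have hset : (fun s => if s ∈ Ioo (x k) (x (k + 1)) then (1:ℝ) else 0)
              = (Ioo (x k) (x (k + 1))).indicator (fun _ => 1) := by
            funext s; simp [Set.indicator]
          rw [hset]
          exact (integrableOn_const measure_Icc_lt_top.ne).indicator measurableSet_Ioo
        ftc_d := by
          intro j s hs
          by_cases hj : j = k
          · subst hj
            simp [hs]
          · simp [hdisj j hj s hs, hj]
        ftc := by
          intro j s hs
          by_cases hj : j = k
          · subst hj
            have hone : ∀ r ∈ Ioc (x j) s,
                (if r ∈ Ioo (x j) (x (j + 1)) then (1:ℝ) else 0) = 1 := by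
              intro r hr
              exact if_pos ⟨hr.1, lt_of_le_of_lt hr.2 hs.2⟩
            simp only [if_pos hs]
            rw [setIntegral_congr_fun measurableSet_Ioc hone, setIntegral_const, measureReal_def,
              Real.volume_Ioc, ENNReal.toReal_ofReal (by linarith [hs.1.le]),
              smul_eq_mul, mul_one]
            ring
          · have hzero : ∀ r ∈ Ioc (x j) s,
                (if r ∈ Ioo (x k) (x (k + 1)) then (1:ℝ) else 0) = 0 := by
              intro r hr
              exact if_neg (hdisj j hj r ⟨hr.1, lt_of_le_of_lt hr.2 hs.2⟩)
            simp only [if_neg (hdisj j hj s hs)]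
            rw [setIntegral_congr_fun measurableSet_Ioc hzero]
            simp }
    have hIf : ∀ j, IntegrableOn (fun t => F.f'' t ^ 2) (Ioo (x j) (x (j + 1))) volume := by
      intro j
      simp only [F]
      simpa using (integrableOn_zero : IntegrableOn (fun _ : ℝ => (0:ℝ)) _ volume)
    have hother : ∀ j, j ≠ k → (∫ s in Ioo (x j) (x (j + 1)), F.f s ^ 2) = 0 := by
      intro j hj
      have h0 : ∀ s ∈ Ioo (x j) (x (j + 1)), F.f s ^ 2 = 0 := by
        intro s hs
        simp only [F, if_neg (hdisj j hj s hs)]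
        ring
      rw [setIntegral_congr_fun measurableSet_Ioo h0, integral_zero]
    have hother' : ∀ j, j ≠ k → (∫ s in Ioo (x j) (x (j + 1)), F.f' s ^ 2) = 0 := by
      intro j hj
      have h0 : ∀ s ∈ Ioo (x j) (x (j + 1)), F.f' s ^ 2 = 0 := by
        intro s hs
        simp only [F, if_neg (hdisj j hj s hs)]
        ring
      rw [setIntegral_congr_fun measurableSet_Ioo h0, integral_zero]
    have hg0 : ∀ j, (∫ s in Ioo (x j) (x (j + 1)), F.f'' s ^ 2) = 0 := by
      intro j; simp [F]
    have hbzero : ∀ j, j ≠ k → ((∫ s in Ioo (x j) (x (j + 1)), F.f s ^ 2) +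
        ∫ s in Ioo (x j) (x (j + 1)), F.f'' s ^ 2) = 0 := by
      intro j hj; rw [hother j hj, hg0 j]; ring
    have hSum : Summable (fun j => (∫ s in Ioo (x j) (x (j + 1)), F.f s ^ 2) +
        ∫ s in Ioo (x j) (x (j + 1)), F.f'' s ^ 2) := by
      apply summable_of_ne_finset_zero (s := {k})
      intro j hj
      exact hbzero j (by simpa using hj)
    obtain ⟨hsum', hle⟩ := hembed F hIf hSum
    have hfk' : (∫ s in Ioo (x k) (x (k + 1)), F.f' s ^ 2) = d := by
      have hone : ∀ s ∈ Ioo (x k) (x (k + 1)), F.f' s ^ 2 = 1 := by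
        intro s hs; simp only [F, if_pos hs]; ring
      rw [setIntegral_congr_fun measurableSet_Ioo hone, setIntegral_const, measureReal_def, Real.volume_Ioo,
        ENNReal.toReal_ofReal (by linarith), smul_eq_mul, mul_one, hd']
    have hfk : (∫ s in Ioo (x k) (x (k + 1)), F.f s ^ 2) = d ^ 3 / 3 := by
      have heq : ∀ s ∈ Ioo (x k) (x (k + 1)), F.f s ^ 2 = (s - x k) ^ 2 := by
        intro s hs; simp only [F, if_pos hs]
      rw [setIntegral_congr_fun measurableSet_Ioo heq, ← integral_Ioc_eq_integral_Ioo,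
        ← intervalIntegral.integral_of_le hab.le]
      have hcomp := intervalIntegral.integral_comp_sub_right (a := x k) (b := x (k + 1))
        (fun u => u ^ 2) (x k)
      rw [hcomp, sub_self, integral_pow, hd']
      norm_num
    have hLHS : (∑' j, ∫ s in Ioo (x j) (x (j + 1)), F.f' s ^ 2) = d := by
      rw [tsum_eq_single k hother']
      exact hfk'
    have hRHS : (∑' j, ((∫ s in Ioo (x j) (x (j + 1)), F.f s ^ 2) +
        ∫ s in Ioo (x j) (x (j + 1)), F.f'' s ^ 2)) = d ^ 3 / 3 := by
      rw [tsum_eq_single k hbzero, hfk, hg0 k]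
      ring
    rw [hLHS, hRHS] at hle
    nlinarith [hle, hd, mul_lt_mul_of_pos_right hdC hd]
end

section
/- Assume d^* < ∞, and suppose there are constants C₀, C₁ > 0 such that (1/d_k)∫_{Δ_k} q_−(x) dx ≤ C₀ for all k and (1/β_k)^− ≤ C₁ · min{d_k, d_{k+1}} for all k. Then the form t_{X,β,q} is lower semibounded: there exists C ≥ 0 such that t_{X,β,q}[f] ≥ −C ∫₀^∞ |f(x)|² dx for every f in the domain of t_{X,β,q}. -/
open MeasureTheory Set Filter

noncomputable section

/-- A function that is *piecewise `H¹`* with respect to the partition points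
`x 0 < x 1 < x 2 < ⋯` of `[0,∞)`: on each interval `Δ_{k+1} = [x k, x (k+1)]` it is
absolutely continuous with derivative `f' ∈ L²`, encoded via the fundamental
theorem of calculus; `fr k = f(x k +)` and `fl (k+1) = f(x (k+1) −)` are the
one-sided limits at the nodes. -/
structure PW1 (x : ℕ → ℝ) where
  f : ℝ → ℝ
  f' : ℝ → ℝ
  fr : ℕ → ℝ
  fl : ℕ → ℝ
  int_d : ∀ k, IntegrableOn f' (Icc (x k) (x (k + 1))) volume
  sq_d : ∀ k, IntegrableOn (fun t => f' t ^ 2) (Icc (x k) (x (k + 1))) volume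
  ftc : ∀ k, ∀ t ∈ Ioo (x k) (x (k + 1)), f t = fr k + ∫ s in Ioc (x k) t, f' s
  fl_eq : ∀ k, fl (k + 1) = fr k + ∫ s in Ioc (x k) (x (k + 1)), f' s

/-- The jump `f(x_{k+1}+) − f(x_{k+1}−)` of a piecewise `H¹` function at the
interior node `x (k+1)` (the paper's node `x_{k+1}`). -/
def PW1.jump {x : ℕ → ℝ} (F : PW1 x) (k : ℕ) : ℝ := F.fr (k + 1) - F.fl (k + 1)

/-- Membership in the domain of the form `t_{X,β,q}`: `f ∈ L²(0,∞)`,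
`∫₀^∞ |f'|² < ∞`, `∫₀^∞ |q| |f|² < ∞` and `Σ_k |f(x_k+) − f(x_k−)|²/|β_k| < ∞`. -/
def MemDom (x : ℕ → ℝ) (q : ℝ → ℝ) (β : ℕ → ℝ) (F : PW1 x) : Prop :=
  IntegrableOn (fun t => F.f t ^ 2) (Ioi 0) volume ∧
  IntegrableOn (fun t => F.f' t ^ 2) (Ioi 0) volume ∧
  IntegrableOn (fun t => |q t| * F.f t ^ 2) (Ioi 0) volume ∧
  Summable (fun k => F.jump k ^ 2 / |β (k + 1)|)

/-- The value of the quadratic form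
`t_{X,β,q}[f] = ∫₀^∞ (|f'|² + q |f|²) dx + Σ_k |f(x_k+) − f(x_k−)|²/β_k`. -/
def formVal (x : ℕ → ℝ) (q : ℝ → ℝ) (β : ℕ → ℝ) (F : PW1 x) : ℝ :=
  (∫ t in Ioi (0 : ℝ), (F.f' t ^ 2 + q t * F.f t ^ 2)) +
    ∑' k, F.jump k ^ 2 / β (k + 1)



lemma mycs {g : ℝ → ℝ} {p r : ℝ} (hpr : p ≤ r)
    (hg : IntegrableOn g (Ioc p r) volume)
    (hg2 : IntegrableOn (fun t => g t ^ 2) (Ioc p r) volume) :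
    (∫ t in Ioc p r, g t) ^ 2 ≤ (r - p) * ∫ t in Ioc p r, g t ^ 2 := by
  set A := ∫ t in Ioc p r, g t ^ 2 with hAdef
  have hA : 0 ≤ A := setIntegral_nonneg measurableSet_Ioc (fun t _ => sq_nonneg _)
  set L := r - p with hLdef
  have hL : 0 ≤ L := by linarith
  set I := ∫ t in Ioc p r, |g t| with hIdef
  have hI0 : 0 ≤ I := setIntegral_nonneg measurableSet_Ioc (fun t _ => abs_nonneg _)
  have hIabs : |∫ t in Ioc p r, g t| ≤ I := by
    simpa using norm_integral_le_integral_norm (μ := volume.restrict (Ioc p r)) g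
  have hvol : volume.real (Ioc p r) = L := by
    rw [measureReal_def, Real.volume_Ioc, ENNReal.toReal_ofReal hL]
  have key : ∀ η : ℝ, 0 < η → I ≤ A / (2 * η) + η * L / 2 := by
    intro η hη
    have h1 : I ≤ ∫ t in Ioc p r, (g t ^ 2 / (2 * η) + η / 2) := by
      refine setIntegral_mono_on hg.abs ?_ measurableSet_Ioc (fun t _ => ?_)
      · exact (hg2.div_const _).add (integrableOn_const measure_Ioc_lt_top.ne)
      · have h2η : (0:ℝ) < 2 * η := by linarith
        have ha : |g t| ≤ (g t ^ 2 + η ^ 2) / (2 * η) := by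
          rw [le_div_iff₀ h2η]; nlinarith [sq_nonneg (|g t| - η), sq_abs (g t)]
        have hb : (g t ^ 2 + η ^ 2) / (2 * η) = g t ^ 2 / (2 * η) + η / 2 := by
          field_simp
        linarith
    have h2 : ∫ t in Ioc p r, (g t ^ 2 / (2 * η) + η / 2)
        = A / (2 * η) + η * L / 2 := by
      rw [integral_add (hg2.div_const _) (integrableOn_const measure_Ioc_lt_top.ne),
        integral_div, setIntegral_const, hvol]
      simp only [smul_eq_mul]
      ring
    linarith [h1, h2.symm.le]
  have hIsq : I ^ 2 ≤ A * L := by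
    rcases eq_or_lt_of_le hA with hA0 | hApos
    · have : ∀ ε : ℝ, 0 < ε → I ≤ ε := by
        intro ε hε
        have := key (2 * ε / (L + 1)) (by positivity)
        rw [← hA0] at this
        have hL1 : 0 < L + 1 := by linarith
        have : I ≤ (2 * ε / (L + 1)) * L / 2 := by
          simpa using this
        calc I ≤ (2 * ε / (L + 1)) * L / 2 := this
          _ = ε * (L / (L + 1)) := by ring
          _ ≤ ε * 1 := by
              apply mul_le_mul_of_nonneg_left _ hε.le
              rw [div_le_one hL1]; linarith
          _ = ε := by ring
      have : I ≤ 0 := le_of_forall_pos_le_add (by intro ε hε; simpa using this ε hε)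
      have hI : I = 0 := le_antisymm this hI0
      simp [hI]
      positivity
    · rcases eq_or_lt_of_le hL with hL0 | hLpos
      · have : ∀ ε : ℝ, 0 < ε → I ≤ ε := by
          intro ε hε
          have := key (A / (2 * ε)) (by positivity)
          rw [← hL0] at this
          have : I ≤ A / (2 * (A / (2 * ε))) := by simpa using this
          calc I ≤ A / (2 * (A / (2 * ε))) := this
            _ = ε := by field_simp
        have : I ≤ 0 := le_of_forall_pos_le_add (by intro ε hε; simpa using this ε hε)
        have hI : I = 0 := le_antisymm this hI0
        simp [hI]
        positivity
      · obtain ⟨s, hs0, hs2⟩ : ∃ s : ℝ, 0 < s ∧ s ^ 2 = A / L :=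
          ⟨Real.sqrt (A / L), Real.sqrt_pos.2 (by positivity),
            Real.sq_sqrt (by positivity)⟩
        have hkey := key s hs0
        have hAs : A = s ^ 2 * L := by
          rw [hs2]; field_simp
        have hdiv : A / (2 * s) = s * L / 2 := by
          rw [hAs]; field_simp
        rw [hdiv] at hkey
        have hIsL : I ≤ s * L := by nlinarith [hkey]
        have h1 : I ^ 2 ≤ (s * L) ^ 2 := by nlinarith
        have h2 : (s * L) ^ 2 = A * L := by
          rw [mul_pow, hs2]; field_simp
        linarith
  calc (∫ t in Ioc p r, g t) ^ 2 = |∫ t in Ioc p r, g t| ^ 2 := (sq_abs _).symm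
    _ ≤ I ^ 2 := by nlinarith [abs_nonneg (∫ t in Ioc p r, g t)]
    _ ≤ A * L := hIsq
    _ = L * A := mul_comm _ _

lemma myadd {f' : ℝ → ℝ} {a b : ℝ} (hi : IntegrableOn f' (Icc a b) volume)
    {s t : ℝ} (has : a ≤ s) (hst : s ≤ t) (htb : t ≤ b) :
    ∫ u in Ioc a t, f' u = (∫ u in Ioc a s, f' u) + ∫ u in Ioc s t, f' u := by
  rw [← Set.Ioc_union_Ioc_eq_Ioc has hst,
    setIntegral_union (Set.Ioc_disjoint_Ioc_of_le le_rfl) measurableSet_Ioc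
      (hi.mono_set (Set.Ioc_subset_Icc_self.trans (Set.Icc_subset_Icc le_rfl (hst.trans htb))))
      (hi.mono_set ((Set.Ioc_subset_Icc_self).trans (Set.Icc_subset_Icc has htb)))]

set_option maxHeartbeats 1000000 in
lemma interval_bound (a b : ℝ) (hab : a < b) (f f' : ℝ → ℝ) (c : ℝ)
    (hi : IntegrableOn f' (Icc a b) volume)
    (hsq : IntegrableOn (fun t => f' t ^ 2) (Icc a b) volume)
    (hf2 : IntegrableOn (fun t => f t ^ 2) (Ioc a b) volume)
    (hftc : ∀ t ∈ Ioo a b, f t = c + ∫ s in Ioc a t, f' s)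
    (ε : ℝ) (hε : 0 < ε) :
    (∀ t ∈ Ioo a b, f t ^ 2 ≤
        2 * ε * (∫ t in Ioc a b, f' t ^ 2) + (4 / ε + 4 / (b - a)) * (∫ t in Ioc a b, f t ^ 2)) ∧
      c ^ 2 ≤
        2 * ε * (∫ t in Ioc a b, f' t ^ 2) + (4 / ε + 4 / (b - a)) * (∫ t in Ioc a b, f t ^ 2) ∧
      (c + ∫ s in Ioc a b, f' s) ^ 2 ≤
        2 * ε * (∫ t in Ioc a b, f' t ^ 2) + (4 / ε + 4 / (b - a)) * (∫ t in Ioc a b, f t ^ 2) := by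
  set A := ∫ t in Ioc a b, f' t ^ 2 with hAdef
  set B := ∫ t in Ioc a b, f t ^ 2 with hBdef
  have hA : 0 ≤ A := setIntegral_nonneg measurableSet_Ioc (fun t _ => sq_nonneg _)
  have hB : 0 ≤ B := setIntegral_nonneg measurableSet_Ioc (fun t _ => sq_nonneg _)
  have hba : 0 < b - a := by linarith
  set δ := min ε (b - a) with hδdef
  have hδ : 0 < δ := lt_min hε hba
  have hδε : δ ≤ ε := min_le_left _ _
  have hδd : δ ≤ b - a := min_le_right _ _
  set h := δ / 2 with hhdef
  have hh : 0 < h := by positivity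
  have h2h : 2 * h = δ := by rw [hhdef]; ring
  have hcoef : 4 / δ ≤ 4 / ε + 4 / (b - a) := by
    rcases min_cases ε (b - a) with ⟨h1, _⟩ | ⟨h1, _⟩ <;> rw [hδdef, h1]
    · have : (0:ℝ) ≤ 4 / (b - a) := by positivity
      linarith
    · have : (0:ℝ) ≤ 4 / ε := by positivity
      linarith
  have avg : ∀ u v : ℝ, a ≤ u → u + h ≤ b →
      (∀ s ∈ Ioo u (u + h), v ^ 2 ≤ 2 * f s ^ 2 + 2 * δ * A) →
      v ^ 2 ≤ 2 * ε * A + (4 / ε + 4 / (b - a)) * B := by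
    intro u v hu hub hbound
    have hsub : Ioo u (u + h) ⊆ Ioc a b := fun s hs =>
      ⟨lt_of_le_of_lt hu hs.1, hs.2.le.trans hub⟩
    have hint1 : IntegrableOn (fun s => f s ^ 2) (Ioo u (u + h)) volume :=
      hf2.mono_set hsub
    have h1 : ∫ s in Ioo u (u + h), v ^ 2
        ≤ ∫ s in Ioo u (u + h), (2 * f s ^ 2 + 2 * δ * A) :=
      setIntegral_mono_on (integrableOn_const measure_Ioo_lt_top.ne)
        ((hint1.const_mul 2).add (integrableOn_const measure_Ioo_lt_top.ne))
        measurableSet_Ioo (fun s hs => hbound s hs)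
    have hvol : volume.real (Ioo u (u + h)) = h := by
      rw [measureReal_def, Real.volume_Ioo]
      simp [ENNReal.toReal_ofReal hh.le]
    have h2 : ∫ s in Ioo u (u + h), v ^ 2 = h * v ^ 2 := by
      rw [setIntegral_const, hvol, smul_eq_mul]
    have h3 : ∫ s in Ioo u (u + h), (2 * f s ^ 2 + 2 * δ * A)
        = 2 * (∫ s in Ioo u (u + h), f s ^ 2) + h * (2 * δ * A) := by
      rw [integral_add (hint1.const_mul 2) (integrableOn_const measure_Ioo_lt_top.ne),
        integral_const_mul, setIntegral_const, hvol, smul_eq_mul]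
    have h4 : (∫ s in Ioo u (u + h), f s ^ 2) ≤ B :=
      setIntegral_mono_set hf2 (Eventually.of_forall fun s => sq_nonneg _)
        hsub.eventuallyLE
    have h5 : h * v ^ 2 ≤ 2 * B + h * (2 * δ * A) := by
      rw [h2, h3] at h1; linarith
    have h6 : v ^ 2 ≤ 2 / h * B + 2 * δ * A := by
      rw [← mul_le_mul_iff_right₀ hh]
      calc h * v ^ 2 ≤ 2 * B + h * (2 * δ * A) := h5
        _ = h * (2 / h * B + 2 * δ * A) := by field_simp
    have h7 : 2 / h = 4 / δ := by rw [hhdef]; field_simp; ring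
    have h8 : 2 / h * B ≤ (4 / ε + 4 / (b - a)) * B := by
      rw [h7]; exact mul_le_mul_of_nonneg_right hcoef hB
    have h9 : 2 * δ * A ≤ 2 * ε * A := by nlinarith
    linarith
  have pt : ∀ p r : ℝ, a ≤ p → p ≤ r → r ≤ b → r - p ≤ δ →
      (∫ s in Ioc p r, f' s) ^ 2 ≤ δ * A := by
    intro p r hap hpr hrb hd
    have hsubI : Ioc p r ⊆ Icc a b :=
      Set.Ioc_subset_Icc_self.trans (Set.Icc_subset_Icc hap hrb)
    have hsubI2 : Ioc p r ⊆ Ioc a b := fun s hs =>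
      ⟨lt_of_le_of_lt hap hs.1, hs.2.trans hrb⟩
    have h1 := mycs hpr (hi.mono_set hsubI) (hsq.mono_set hsubI)
    have h2 : (∫ t in Ioc p r, f' t ^ 2) ≤ A :=
      setIntegral_mono_set (hsq.mono_set Set.Ioc_subset_Icc_self)
        (Eventually.of_forall fun s => sq_nonneg _) hsubI2.eventuallyLE
    have h3 : 0 ≤ ∫ t in Ioc p r, f' t ^ 2 :=
      setIntegral_nonneg measurableSet_Ioc fun t _ => sq_nonneg _
    have h4 : (r - p) * (∫ t in Ioc p r, f' t ^ 2) ≤ δ * A :=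
      mul_le_mul hd h2 h3 hδ.le
    linarith
  refine ⟨?_, ?_, ?_⟩
  · -- interior points
    intro t ht
    rcases le_or_gt h (t - a) with hta | hta
    · apply avg (t - h) _ (by linarith [ht.1]) (by linarith [ht.2])
      intro s hs
      have hs2 : s < t := by have := hs.2; linarith
      have hs' : s ∈ Ioo a b := ⟨by have := hs.1; linarith, lt_trans hs2 ht.2⟩
      have hft := hftc t ht
      have hfs := hftc s hs'
      have hadd := myadd hi hs'.1.le hs2.le ht.2.le
      have hpt := pt s t hs'.1.le hs2.le ht.2.le (by have := hs.1; linarith)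
      have hv : f t = f s + ∫ u in Ioc s t, f' u := by
        rw [hft, hadd]; linarith [hfs]
      rw [hv]
      nlinarith [sq_nonneg (f s - ∫ u in Ioc s t, f' u), hpt]
    · have hbt : t + h ≤ b := by linarith [hδd, ht.1]
      apply avg t _ ht.1.le hbt
      intro s hs
      have hs1 : t < s := hs.1
      have hs' : s ∈ Ioo a b := ⟨lt_trans ht.1 hs1, by have := hs.2; linarith⟩
      have hft := hftc t ht
      have hfs := hftc s hs'
      have hadd := myadd hi ht.1.le hs1.le hs'.2.le
      have hpt := pt t s ht.1.le hs1.le hs'.2.le (by have := hs.2; linarith)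
      have hv : f t = f s - ∫ u in Ioc t s, f' u := by
        rw [hft]; rw [hadd] at hfs; linarith [hfs]
      rw [hv]
      nlinarith [sq_nonneg (f s + ∫ u in Ioc t s, f' u), hpt]
  · -- c = f(a+)
    apply avg a _ le_rfl (by linarith)
    intro s hs
    have hs' : s ∈ Ioo a b := ⟨hs.1, by have := hs.2; linarith⟩
    have hfs := hftc s hs'
    have hpt := pt a s le_rfl hs'.1.le hs'.2.le (by have := hs.2; linarith)
    have hv : c = f s - ∫ u in Ioc a s, f' u := by linarith [hfs]
    rw [hv]
    nlinarith [sq_nonneg (f s + ∫ u in Ioc a s, f' u), hpt]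
  · -- f(b-)
    apply avg (b - h) _ (by linarith) (by linarith)
    intro s hs
    have hs' : s ∈ Ioo a b := ⟨by have := hs.1; linarith, by have := hs.2; linarith⟩
    have hfs := hftc s hs'
    have hadd := myadd hi hs'.1.le hs'.2.le le_rfl
    have hpt := pt s b hs'.1.le hs'.2.le le_rfl (by have := hs.1; linarith)
    have hv : c + (∫ u in Ioc a b, f' u) = f s + ∫ u in Ioc s b, f' u := by
      rw [hadd]; linarith [hfs]
    rw [hv]
    nlinarith [sq_nonneg (f s - ∫ u in Ioc s b, f' u), hpt]


lemma alg2 (d D ε A B : ℝ) (hd : 0 < d) (hdD : d ≤ D) (hε : 0 < ε)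
    (hA : 0 ≤ A) (hB : 0 ≤ B) :
    d * (2 * ε * A + (4 / ε + 4 / d) * B) ≤ 2 * ε * D * A + (4 * D / ε + 4) * B := by
  have e : d * (2 * ε * A + (4 / ε + 4 / d) * B)
      = 2 * ε * d * A + 4 * d / ε * B + 4 * B := by field_simp; ring
  rw [e]
  have h1 : 2 * ε * d * A ≤ 2 * ε * D * A := by
    apply mul_le_mul_of_nonneg_right _ hA; nlinarith
  have h2 : 4 * d / ε * B ≤ 4 * D / ε * B :=
    mul_le_mul_of_nonneg_right ((div_le_div_iff_of_pos_right hε).2 (by linarith)) hB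
  linarith

lemma step_q (a b C₀ D ε : ℝ) (hab : a < b) (hDd : b - a ≤ D) (hC₀ : 0 < C₀) (hε : 0 < ε)
    (f q : ℝ → ℝ)
    (hqI : IntegrableOn q (Icc a b) volume)
    (hqneg : (1 / (b - a)) * (∫ t in Icc a b, max 0 (-q t)) ≤ C₀)
    (hqfi : IntegrableOn (fun t => max 0 (-q t) * f t ^ 2) (Ioc a b) volume)
    (A B : ℝ) (hA : 0 ≤ A) (hB : 0 ≤ B)
    (hptw : ∀ t ∈ Ioo a b, f t ^ 2 ≤ 2 * ε * A + (4 / ε + 4 / (b - a)) * B) :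
    (∫ t in Ioc a b, max 0 (-q t) * f t ^ 2)
      ≤ (2 * C₀ * D * ε) * A + (4 * C₀ * D / ε + 4 * C₀) * B := by
  have hd : 0 < b - a := by linarith
  obtain ⟨M, hMdef⟩ : ∃ M : ℝ, M = 2 * ε * A + (4 / ε + 4 / (b - a)) * B := ⟨_, rfl⟩
  have hptw' : ∀ t ∈ Ioo a b, f t ^ 2 ≤ M := fun t ht => hMdef ▸ hptw t ht
  have hM0 : 0 ≤ M := by
    rw [hMdef]
    exact add_nonneg (mul_nonneg (by positivity) hA) (mul_nonneg (by positivity) hB)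
  have hqnegIcc : IntegrableOn (fun t => max 0 (-q t)) (Icc a b) volume := by
    have := hqI.neg.pos_part
    exact this.congr (ae_of_all _ fun t => by simp [max_comm])
  have h1 : (∫ t in Ioc a b, max 0 (-q t) * f t ^ 2)
      = ∫ t in Ioo a b, max 0 (-q t) * f t ^ 2 := integral_Ioc_eq_integral_Ioo
  have h2 : (∫ t in Ioo a b, max 0 (-q t) * f t ^ 2)
      ≤ ∫ t in Ioo a b, max 0 (-q t) * M := by
    refine setIntegral_mono_on (hqfi.mono_set Ioo_subset_Ioc_self)
      ((hqnegIcc.mono_set Ioo_subset_Icc_self).mul_const M) measurableSet_Ioo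
      (fun t ht => mul_le_mul_of_nonneg_left (hptw' t ht) (le_max_left _ _))
  have h3 : (∫ t in Ioo a b, max 0 (-q t) * M)
      = (∫ t in Ioo a b, max 0 (-q t)) * M := integral_mul_const _ _
  have h4 : (∫ t in Ioo a b, max 0 (-q t)) ≤ ∫ t in Icc a b, max 0 (-q t) :=
    setIntegral_mono_set hqnegIcc
      (Filter.Eventually.of_forall fun t => le_max_left _ _)
      Ioo_subset_Icc_self.eventuallyLE
  have h5 : 0 ≤ ∫ t in Ioo a b, max 0 (-q t) :=
    setIntegral_nonneg measurableSet_Ioo fun t _ => le_max_left _ _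
  have h6 : (∫ t in Icc a b, max 0 (-q t)) ≤ C₀ * (b - a) := by
    have h6' := mul_le_mul_of_nonneg_left hqneg hd.le
    have h6'' : (b - a) * ((1 / (b - a)) * (∫ t in Icc a b, max 0 (-q t)))
        = ∫ t in Icc a b, max 0 (-q t) := by field_simp
    nlinarith [h6', h6'']
  have h7 : (∫ t in Ioo a b, max 0 (-q t)) * M ≤ (C₀ * (b - a)) * M :=
    mul_le_mul_of_nonneg_right (h4.trans h6) hM0
  have h8 : (C₀ * (b - a)) * M ≤ (2 * C₀ * D * ε) * A + (4 * C₀ * D / ε + 4 * C₀) * B := by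
    have halg := alg2 (b - a) D ε A B hd hDd hε hA hB
    rw [hMdef]
    calc (C₀ * (b - a)) * (2 * ε * A + (4 / ε + 4 / (b - a)) * B)
        = C₀ * ((b - a) * (2 * ε * A + (4 / ε + 4 / (b - a)) * B)) := by ring
      _ ≤ C₀ * (2 * ε * D * A + (4 * D / ε + 4) * B) :=
          mul_le_mul_of_nonneg_left halg hC₀.le
      _ = (2 * C₀ * D * ε) * A + (4 * C₀ * D / ε + 4 * C₀) * B := by ring
  linarith

lemma step_jump (minv C₁ dk dk1 D ε fl fr A B A' B' : ℝ)
    (hdk : 0 < dk) (hdk1 : 0 < dk1) (hdkD : dk ≤ D) (hdk1D : dk1 ≤ D)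
    (hε : 0 < ε) (hC₁ : 0 < C₁)
    (hA : 0 ≤ A) (hB : 0 ≤ B) (hA' : 0 ≤ A') (hB' : 0 ≤ B')
    (hbneg : max 0 minv ≤ C₁ * min dk dk1)
    (hfl : fl ^ 2 ≤ 2 * ε * A + (4 / ε + 4 / dk) * B)
    (hfr : fr ^ 2 ≤ 2 * ε * A' + (4 / ε + 4 / dk1) * B') :
    max 0 minv * (fr - fl) ^ 2 ≤
      2 * C₁ * ((2 * ε * D * A + (4 * D / ε + 4) * B)
        + (2 * ε * D * A' + (4 * D / ε + 4) * B')) := by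
  have h1 : (fr - fl) ^ 2 ≤ 2 * fl ^ 2 + 2 * fr ^ 2 := by nlinarith [sq_nonneg (fr + fl)]
  have hmin0 : 0 ≤ C₁ * min dk dk1 := mul_nonneg hC₁.le (le_min hdk.le hdk1.le)
  have h2 : max 0 minv * (fr - fl) ^ 2 ≤ (C₁ * min dk dk1) * (2 * fl ^ 2 + 2 * fr ^ 2) :=
    mul_le_mul hbneg h1 (sq_nonneg _) hmin0
  have h3 : (C₁ * min dk dk1) * (2 * fl ^ 2 + 2 * fr ^ 2)
      = 2 * C₁ * (min dk dk1 * fl ^ 2) + 2 * C₁ * (min dk dk1 * fr ^ 2) := by ring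
  have h4 : min dk dk1 * fl ^ 2 ≤ dk * (2 * ε * A + (4 / ε + 4 / dk) * B) :=
    mul_le_mul (min_le_left _ _) hfl (sq_nonneg _) hdk.le
  have h5 : min dk dk1 * fr ^ 2 ≤ dk1 * (2 * ε * A' + (4 / ε + 4 / dk1) * B') :=
    mul_le_mul (min_le_right _ _) hfr (sq_nonneg _) hdk1.le
  have h6 := alg2 dk D ε A B hdk hdkD hε hA hB
  have h7 := alg2 dk1 D ε A' B' hdk1 hdk1D hε hA' hB'
  nlinarith [h2, h3, h4, h5, h6, h7, hC₁]


set_option maxHeartbeats 2000000 in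
/-- **Proposition 2.5(i)**: if `d^* < ∞`, `(1/d_k) ∫_Δₖ q₋ ≤ C₀` and
`(1/β_k)⁻ ≤ C₁ min(d_k, d_{k+1})` for all `k`, then the form `t_{X,β,q}` is
lower semibounded. -/
theorem stmt_3 (x : ℕ → ℝ) (hx0 : x 0 = 0) (hmono : StrictMono x)
    (hxtop : Tendsto x atTop atTop)
    (q : ℝ → ℝ) (hq : ∀ a b : ℝ, 0 ≤ a → IntegrableOn q (Icc a b) volume)
    (β : ℕ → ℝ) (hβ : ∀ k, β (k + 1) ≠ 0)
    (D : ℝ) (hD : ∀ k, x (k + 1) - x k ≤ D)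
    (C₀ C₁ : ℝ) (hC₀ : 0 < C₀) (hC₁ : 0 < C₁)
    (hqneg : ∀ k, (1 / (x (k + 1) - x k)) *
      (∫ t in Icc (x k) (x (k + 1)), max 0 (-q t)) ≤ C₀)
    (hbneg : ∀ k, max 0 (-(β (k + 1))⁻¹) ≤
      C₁ * min (x (k + 1) - x k) (x (k + 2) - x (k + 1))) :
    ∃ C : ℝ, 0 ≤ C ∧ ∀ F : PW1 x, MemDom x q β F →
      formVal x q β F ≥ -C * ∫ t in Ioi (0 : ℝ), F.f t ^ 2 := by
  classical
  have hd : ∀ k, 0 < x (k + 1) - x k := fun k => sub_pos.2 (hmono (Nat.lt_succ_self k))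
  have hD0 : 0 < D := lt_of_lt_of_le (hd 0) (hD 0)
  have hden : 0 < 2 * C₀ * D + 8 * C₁ * D := by positivity
  obtain ⟨ε, hε, hε1⟩ : ∃ ε : ℝ, 0 < ε ∧ 2 * C₀ * D * ε + 8 * C₁ * D * ε = 1 :=
    ⟨1 / (2 * C₀ * D + 8 * C₁ * D), by positivity, by field_simp⟩
  refine ⟨4 * C₀ * D / ε + 4 * C₀ + 16 * C₁ * D / ε + 16 * C₁, by positivity, ?_⟩
  intro F hF
  obtain ⟨hf2, hf'2, hqf2, hjsum⟩ := hF
  have hxnn : ∀ k, 0 ≤ x k := fun k => hx0 ▸ hmono.monotone (Nat.zero_le k)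
  have hIsub : ∀ k, Ioc (x k) (x (k + 1)) ⊆ Ioi (0 : ℝ) := fun k t ht =>
    lt_of_le_of_lt (hxnn k) ht.1
  have hUnion : (⋃ k, Ioc (x k) (x (k + 1))) = Ioi (0 : ℝ) := by
    refine Subset.antisymm (iUnion_subset hIsub) fun t ht => ?_
    have hex : ∃ n, t ≤ x n := (hxtop.eventually_ge_atTop t).exists
    have hm0 : Nat.find hex ≠ 0 := by
      intro h0
      have h1 := Nat.find_spec hex
      rw [h0, hx0] at h1
      exact absurd (mem_Ioi.1 ht) (not_lt.2 h1)
    obtain ⟨j, hj⟩ := Nat.exists_eq_succ_of_ne_zero hm0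
    have h1 : x j < t := lt_of_not_ge (Nat.find_min hex (by omega))
    have h2 := Nat.find_spec hex
    rw [hj] at h2
    exact mem_iUnion.2 ⟨j, h1, h2⟩
  have hdisj2 : ∀ i j : ℕ, i < j →
      Disjoint (Ioc (x i) (x (i + 1))) (Ioc (x j) (x (j + 1))) := by
    intro i j h
    refine Set.Ioc_disjoint_Ioc.2 ?_
    have hle : x (i + 1) ≤ x j := hmono.monotone (Nat.succ_le_of_lt h)
    exact le_trans (min_le_left _ _) (le_trans hle (le_max_right _ _))
  have hdisj : Pairwise (Function.onFun Disjoint fun k => Ioc (x k) (x (k + 1))) := by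
    intro i j hij
    rcases lt_or_gt_of_ne hij with h | h
    · exact hdisj2 i j h
    · exact (hdisj2 j i h).symm
  have hmeas : ∀ k : ℕ, MeasurableSet (Ioc (x k) (x (k + 1))) := fun _ => measurableSet_Ioc
  have haS : HasSum (fun k => ∫ t in Ioc (x k) (x (k + 1)), F.f' t ^ 2)
      (∫ t in Ioi (0 : ℝ), F.f' t ^ 2) := by
    have h := hasSum_integral_iUnion hmeas hdisj (by rw [hUnion]; exact hf'2)
    rwa [hUnion] at h
  have hbS : HasSum (fun k => ∫ t in Ioc (x k) (x (k + 1)), F.f t ^ 2)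
      (∫ t in Ioi (0 : ℝ), F.f t ^ 2) := by
    have h := hasSum_integral_iUnion hmeas hdisj (by rw [hUnion]; exact hf2)
    rwa [hUnion] at h
  have ha0 : ∀ k, 0 ≤ ∫ t in Ioc (x k) (x (k + 1)), F.f' t ^ 2 := fun k =>
    setIntegral_nonneg measurableSet_Ioc fun t _ => sq_nonneg _
  have hb0 : ∀ k, 0 ≤ ∫ t in Ioc (x k) (x (k + 1)), F.f t ^ 2 := fun k =>
    setIntegral_nonneg measurableSet_Ioc fun t _ => sq_nonneg _
  have hqm : AEStronglyMeasurable q (volume.restrict (Ioi (0 : ℝ))) := by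
    rw [← hUnion, aestronglyMeasurable_iUnion_iff]
    intro k
    exact ((hq (x k) (x (k + 1)) (hxnn k)).aestronglyMeasurable).mono_measure
      (Measure.restrict_mono Set.Ioc_subset_Icc_self le_rfl)
  have hf2m : AEStronglyMeasurable (fun t => F.f t ^ 2) (volume.restrict (Ioi (0 : ℝ))) :=
    hf2.aestronglyMeasurable
  have hqim : IntegrableOn (fun t => q t * F.f t ^ 2) (Ioi (0 : ℝ)) volume := by
    refine hqf2.mono' (hqm.mul hf2m) (Filter.Eventually.of_forall fun t => ?_)
    rw [Real.norm_eq_abs, abs_mul, abs_of_nonneg (sq_nonneg (F.f t))]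
  have hqnegm : AEStronglyMeasurable (fun t => max 0 (-q t) * F.f t ^ 2)
      (volume.restrict (Ioi (0 : ℝ))) :=
    ((aemeasurable_const.max hqm.aemeasurable.neg).mul
      hf2m.aemeasurable).aestronglyMeasurable
  have hqnegi : IntegrableOn (fun t => max 0 (-q t) * F.f t ^ 2) (Ioi (0 : ℝ)) volume := by
    refine hqf2.mono' hqnegm (Filter.Eventually.of_forall fun t => ?_)
    rw [Real.norm_eq_abs, abs_mul, abs_of_nonneg (le_max_left _ _),
      abs_of_nonneg (sq_nonneg (F.f t))]
    exact mul_le_mul_of_nonneg_right (max_le (abs_nonneg _) (neg_le_abs _)) (sq_nonneg _)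
  have hcS : HasSum (fun k => ∫ t in Ioc (x k) (x (k + 1)), max 0 (-q t) * F.f t ^ 2)
      (∫ t in Ioi (0 : ℝ), max 0 (-q t) * F.f t ^ 2) := by
    have h := hasSum_integral_iUnion hmeas hdisj (by rw [hUnion]; exact hqnegi)
    rwa [hUnion] at h
  have hIB := fun k => interval_bound (x k) (x (k + 1)) (hmono (Nat.lt_succ_self k))
    F.f F.f' (F.fr k) (F.int_d k) (F.sq_d k) (hf2.mono_set (hIsub k)) (F.ftc k) ε hε
  have hc : ∀ k, (∫ t in Ioc (x k) (x (k + 1)), max 0 (-q t) * F.f t ^ 2)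
      ≤ (2 * C₀ * D * ε) * (∫ t in Ioc (x k) (x (k + 1)), F.f' t ^ 2)
        + (4 * C₀ * D / ε + 4 * C₀) * (∫ t in Ioc (x k) (x (k + 1)), F.f t ^ 2) := by
    intro k
    exact step_q (x k) (x (k + 1)) C₀ D ε (hmono (Nat.lt_succ_self k)) (hD k) hC₀ hε
      F.f q (hq (x k) (x (k + 1)) (hxnn k)) (hqneg k) (hqnegi.mono_set (hIsub k))
      _ _ (ha0 k) (hb0 k) (hIB k).1
  have hfl : ∀ k, (F.fl (k + 1)) ^ 2 ≤
      2 * ε * (∫ t in Ioc (x k) (x (k + 1)), F.f' t ^ 2)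
        + (4 / ε + 4 / (x (k + 1) - x k)) * (∫ t in Ioc (x k) (x (k + 1)), F.f t ^ 2) := by
    intro k
    have h := (hIB k).2.2
    rwa [← F.fl_eq k] at h
  have hm : ∀ k, max 0 (-(β (k + 1))⁻¹) * F.jump k ^ 2 ≤
      2 * C₁ * ((2 * ε * D * (∫ t in Ioc (x k) (x (k + 1)), F.f' t ^ 2)
          + (4 * D / ε + 4) * (∫ t in Ioc (x k) (x (k + 1)), F.f t ^ 2))
        + (2 * ε * D * (∫ t in Ioc (x (k + 1)) (x (k + 2)), F.f' t ^ 2)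
          + (4 * D / ε + 4) * (∫ t in Ioc (x (k + 1)) (x (k + 2)), F.f t ^ 2))) := by
    intro k
    have hj : F.jump k = F.fr (k + 1) - F.fl (k + 1) := rfl
    rw [hj]
    exact step_jump (-(β (k + 1))⁻¹) C₁ (x (k + 1) - x k) (x (k + 2) - x (k + 1)) D ε
      (F.fl (k + 1)) (F.fr (k + 1)) _ _ _ _ (hd k) (hd (k + 1)) (hD k) (hD (k + 1))
      hε hC₁ (ha0 k) (hb0 k) (ha0 (k + 1)) (hb0 (k + 1)) (hbneg k) (hfl k) ((hIB (k + 1)).2.1)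
  have hm0 : ∀ k, 0 ≤ max 0 (-(β (k + 1))⁻¹) * F.jump k ^ 2 := fun k =>
    mul_nonneg (le_max_left _ _) (sq_nonneg _)
  have hmsum : Summable (fun k => max 0 (-(β (k + 1))⁻¹) * F.jump k ^ 2) := by
    refine Summable.of_nonneg_of_le hm0 (fun k => ?_) hjsum
    have h1 : max 0 (-(β (k + 1))⁻¹) ≤ |β (k + 1)|⁻¹ := by
      refine max_le (by positivity) ?_
      rw [← abs_inv]
      exact neg_le_abs _
    calc max 0 (-(β (k + 1))⁻¹) * F.jump k ^ 2
        ≤ |β (k + 1)|⁻¹ * F.jump k ^ 2 := mul_le_mul_of_nonneg_right h1 (sq_nonneg _)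
      _ = F.jump k ^ 2 / |β (k + 1)| := by rw [div_eq_mul_inv, mul_comm]
  have hTs : Summable (fun k => F.jump k ^ 2 / β (k + 1)) := by
    refine Summable.of_abs ?_
    have habs : (fun k => |F.jump k ^ 2 / β (k + 1)|)
        = fun k => F.jump k ^ 2 / |β (k + 1)| := by
      funext k; rw [abs_div, abs_of_nonneg (sq_nonneg _)]
    rw [habs]; exact hjsum
  have hT1 : -(∑' k, max 0 (-(β (k + 1))⁻¹) * F.jump k ^ 2)
      ≤ ∑' k, F.jump k ^ 2 / β (k + 1) := by
    rw [← tsum_neg]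
    refine Summable.tsum_le_tsum (fun k => ?_) hmsum.neg hTs
    rcases (hβ k).lt_or_gt with hneg | hpos
    · have hinv : (β (k + 1))⁻¹ < 0 := inv_lt_zero'.2 hneg
      rw [max_eq_right (by linarith : (0:ℝ) ≤ -(β (k + 1))⁻¹)]
      have heq : -(-(β (k + 1))⁻¹ * F.jump k ^ 2) = F.jump k ^ 2 / β (k + 1) := by
        rw [div_eq_mul_inv]; ring
      exact le_of_eq heq
    · have hinv : (0:ℝ) < (β (k + 1))⁻¹ := inv_pos.2 hpos
      rw [max_eq_left (by linarith : -(β (k + 1))⁻¹ ≤ 0), zero_mul, neg_zero]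
      exact div_nonneg (sq_nonneg _) hpos.le
  have hNsum : HasSum (fun k => 2 * ε * D * (∫ t in Ioc (x k) (x (k + 1)), F.f' t ^ 2)
      + (4 * D / ε + 4) * (∫ t in Ioc (x k) (x (k + 1)), F.f t ^ 2))
      (2 * ε * D * (∫ t in Ioi (0:ℝ), F.f' t ^ 2)
        + (4 * D / ε + 4) * (∫ t in Ioi (0:ℝ), F.f t ^ 2)) :=
    (haS.mul_left _).add (hbS.mul_left _)
  have hNs := hNsum.summable
  have hNs' : Summable (fun k => 2 * ε * D * (∫ t in Ioc (x (k + 1)) (x (k + 2)), F.f' t ^ 2)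
      + (4 * D / ε + 4) * (∫ t in Ioc (x (k + 1)) (x (k + 2)), F.f t ^ 2)) :=
    (summable_nat_add_iff 1).2 hNs
  have hN0 : ∀ k, 0 ≤ 2 * ε * D * (∫ t in Ioc (x k) (x (k + 1)), F.f' t ^ 2)
      + (4 * D / ε + 4) * (∫ t in Ioc (x k) (x (k + 1)), F.f t ^ 2) := fun k =>
    add_nonneg (mul_nonneg (by positivity) (ha0 k)) (mul_nonneg (by positivity) (hb0 k))
  have hsum2 : Summable (fun k =>
      2 * C₁ * ((2 * ε * D * (∫ t in Ioc (x k) (x (k + 1)), F.f' t ^ 2)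
          + (4 * D / ε + 4) * (∫ t in Ioc (x k) (x (k + 1)), F.f t ^ 2))
        + (2 * ε * D * (∫ t in Ioc (x (k + 1)) (x (k + 2)), F.f' t ^ 2)
          + (4 * D / ε + 4) * (∫ t in Ioc (x (k + 1)) (x (k + 2)), F.f t ^ 2)))) :=
    (hNs.add hNs').mul_left _
  have hT2 : (∑' k, max 0 (-(β (k + 1))⁻¹) * F.jump k ^ 2) ≤
      2 * C₁ * ((2 * ε * D * (∫ t in Ioi (0:ℝ), F.f' t ^ 2)
          + (4 * D / ε + 4) * (∫ t in Ioi (0:ℝ), F.f t ^ 2))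
        + (2 * ε * D * (∫ t in Ioi (0:ℝ), F.f' t ^ 2)
          + (4 * D / ε + 4) * (∫ t in Ioi (0:ℝ), F.f t ^ 2))) := by
    have hstep1 := Summable.tsum_le_tsum hm hmsum hsum2
    have hstep2 : (∑' k,
        2 * C₁ * ((2 * ε * D * (∫ t in Ioc (x k) (x (k + 1)), F.f' t ^ 2)
            + (4 * D / ε + 4) * (∫ t in Ioc (x k) (x (k + 1)), F.f t ^ 2))
          + (2 * ε * D * (∫ t in Ioc (x (k + 1)) (x (k + 2)), F.f' t ^ 2)
            + (4 * D / ε + 4) * (∫ t in Ioc (x (k + 1)) (x (k + 2)), F.f t ^ 2))))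
        = 2 * C₁ * ((∑' k, (2 * ε * D * (∫ t in Ioc (x k) (x (k + 1)), F.f' t ^ 2)
            + (4 * D / ε + 4) * (∫ t in Ioc (x k) (x (k + 1)), F.f t ^ 2)))
          + ∑' k, (2 * ε * D * (∫ t in Ioc (x (k + 1)) (x (k + 2)), F.f' t ^ 2)
            + (4 * D / ε + 4) * (∫ t in Ioc (x (k + 1)) (x (k + 2)), F.f t ^ 2))) := by
      rw [tsum_mul_left, Summable.tsum_add hNs hNs']
    have hstep3 : (∑' k, (2 * ε * D * (∫ t in Ioc (x (k + 1)) (x (k + 2)), F.f' t ^ 2)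
          + (4 * D / ε + 4) * (∫ t in Ioc (x (k + 1)) (x (k + 2)), F.f t ^ 2)))
        ≤ ∑' k, (2 * ε * D * (∫ t in Ioc (x k) (x (k + 1)), F.f' t ^ 2)
          + (4 * D / ε + 4) * (∫ t in Ioc (x k) (x (k + 1)), F.f t ^ 2)) :=
      Summable.tsum_le_tsum_of_inj (fun k => k + 1) (add_left_injective 1)
        (fun c _ => hN0 c) (fun k => le_rfl) hNs' hNs
    have hstep4 : (∑' k, (2 * ε * D * (∫ t in Ioc (x k) (x (k + 1)), F.f' t ^ 2)
          + (4 * D / ε + 4) * (∫ t in Ioc (x k) (x (k + 1)), F.f t ^ 2)))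
        = 2 * ε * D * (∫ t in Ioi (0:ℝ), F.f' t ^ 2)
          + (4 * D / ε + 4) * (∫ t in Ioi (0:ℝ), F.f t ^ 2) := hNsum.tsum_eq
    rw [hstep2, hstep4] at hstep1
    have hC₁0 : (0:ℝ) ≤ 2 * C₁ := by positivity
    nlinarith [hstep1, hstep3, hstep4, hC₁0,
      mul_le_mul_of_nonneg_left (hstep3.trans_eq hstep4) hC₁0]
  have hSc : (∫ t in Ioi (0:ℝ), max 0 (-q t) * F.f t ^ 2)
      ≤ (2 * C₀ * D * ε) * (∫ t in Ioi (0:ℝ), F.f' t ^ 2)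
        + (4 * C₀ * D / ε + 4 * C₀) * (∫ t in Ioi (0:ℝ), F.f t ^ 2) :=
    hasSum_le hc hcS ((haS.mul_left _).add (hbS.mul_left _))
  have hQ : -(∫ t in Ioi (0:ℝ), max 0 (-q t) * F.f t ^ 2)
      ≤ ∫ t in Ioi (0:ℝ), q t * F.f t ^ 2 := by
    rw [← integral_neg]
    refine integral_mono hqnegi.neg hqim ?_
    intro t
    have h2 : 0 ≤ (q t + max 0 (-q t)) * F.f t ^ 2 :=
      mul_nonneg (by linarith [le_max_right (0:ℝ) (-q t)]) (sq_nonneg _)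
    show -(max 0 (-q t) * F.f t ^ 2) ≤ q t * F.f t ^ 2
    nlinarith [h2]
  have hsplit : (∫ t in Ioi (0:ℝ), (F.f' t ^ 2 + q t * F.f t ^ 2))
      = (∫ t in Ioi (0:ℝ), F.f' t ^ 2) + ∫ t in Ioi (0:ℝ), q t * F.f t ^ 2 :=
    integral_add hf'2 hqim
  have hgoal : formVal x q β F = (∫ t in Ioi (0:ℝ), (F.f' t ^ 2 + q t * F.f t ^ 2))
      + ∑' k, F.jump k ^ 2 / β (k + 1) := rfl
  rw [ge_iff_le, hgoal, hsplit]
  have hSaEq : (2 * C₀ * D * ε) * (∫ t in Ioi (0:ℝ), F.f' t ^ 2)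
      + 2 * C₁ * (2 * ε * D * (∫ t in Ioi (0:ℝ), F.f' t ^ 2)
        + 2 * ε * D * (∫ t in Ioi (0:ℝ), F.f' t ^ 2))
      = ∫ t in Ioi (0:ℝ), F.f' t ^ 2 := by
    calc (2 * C₀ * D * ε) * (∫ t in Ioi (0:ℝ), F.f' t ^ 2)
        + 2 * C₁ * (2 * ε * D * (∫ t in Ioi (0:ℝ), F.f' t ^ 2)
          + 2 * ε * D * (∫ t in Ioi (0:ℝ), F.f' t ^ 2))
        = (2 * C₀ * D * ε + 8 * C₁ * D * ε) * (∫ t in Ioi (0:ℝ), F.f' t ^ 2) := by ring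
      _ = 1 * (∫ t in Ioi (0:ℝ), F.f' t ^ 2) := by rw [hε1]
      _ = ∫ t in Ioi (0:ℝ), F.f' t ^ 2 := one_mul _
  simp only [div_eq_mul_inv] at hSc hT2 hT1 ⊢
  linarith [hT1, hT2, hSc, hQ, hSaEq]

end
end

section
/- Assume d^* < ∞, and suppose the positive parts satisfy sup_k (1/d_k)∫_{Δ_k} q_+(x) dx < ∞ and sup_k (1/β_k)^+ / min{d_k, d_{k+1}} < ∞. If there exists C ≥ 0 such that t_{X,β,q}[f] ≥ −C ∫₀^∞ |f|² dx for all f in the domain of t_{X,β,q}, then there exists a constant C̃ ≥ 0 such that (1/d_k)∫_{Δ_k} q_−(x) dx ≤ C̃ for all k and (1/β_k)^− ≤ C̃ · min{d_k, d_{k+1}} for all k. In particular, these two conditions are necessary for lower semiboundedness whenever q ≤ 0 and all β_k < 0. -/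
open MeasureTheory Set Filter

noncomputable section

/-- The indicator function of the interval `Δ_{m+1} = [x m, x (m+1)]` as a
piecewise `H¹` function. -/
def indTest (x : ℕ → ℝ) (hmono : StrictMono x) (m : ℕ) : PW1 x where
  f := fun t => if t ∈ Icc (x m) (x (m + 1)) then (1 : ℝ) else 0
  f' := fun _ => 0
  fr := fun j => if j = m then 1 else 0
  fl := fun j => if j = m + 1 then 1 else 0
  int_d := fun _ => integrableOn_zero
  sq_d := fun k => by simpa using (integrableOn_zero :
    IntegrableOn (fun _ => (0:ℝ)) (Icc (x k) (x (k + 1))) volume)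
  ftc := by
    intro k t ht
    simp only [integral_zero, add_zero]
    by_cases hk : k = m
    · subst hk
      rw [if_pos ⟨ht.1.le, ht.2.le⟩, if_pos rfl]
    · rw [if_neg hk, if_neg]
      intro hIcc
      rcases lt_or_gt_of_ne hk with h | h
      · have h1 : x (k + 1) ≤ x m := hmono.monotone (by omega)
        have := hIcc.1
        have := ht.2
        linarith
      · have h1 : x (m + 1) ≤ x k := hmono.monotone (by omega)
        have := hIcc.2
        have := ht.1
        linarith
  fl_eq := by
    intro k
    simp only [integral_zero, add_zero]
    by_cases h : k = m <;> simp [h]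

lemma indTest_f (x : ℕ → ℝ) (hmono : StrictMono x) (m : ℕ) :
    (indTest x hmono m).f = fun t => if t ∈ Icc (x m) (x (m + 1)) then (1:ℝ) else 0 := rfl

lemma indTest_f' (x : ℕ → ℝ) (hmono : StrictMono x) (m : ℕ) :
    (indTest x hmono m).f' = fun _ => (0:ℝ) := rfl

lemma indTest_jump (x : ℕ → ℝ) (hmono : StrictMono x) (m j : ℕ) :
    (indTest x hmono m).jump j =
      (if j + 1 = m then (1:ℝ) else 0) - (if j = m then 1 else 0) := by
  simp only [PW1.jump, indTest]
  congr 1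
  by_cases h : j = m <;> simp [h]

/-- **Proposition 2.5(iii)**: if `d^* < ∞` and the positive parts satisfy
`sup_k (1/d_k) ∫_Δₖ q₊ < ∞` and `sup_k (1/β_k)⁺/min(d_k,d_{k+1}) < ∞`, then
lower semiboundedness of `t_{X,β,q}` forces the bounds
`(1/d_k) ∫_Δₖ q₋ ≤ C̃` and `(1/β_k)⁻ ≤ C̃ min(d_k, d_{k+1})`. -/
theorem stmt_4 (x : ℕ → ℝ) (hx0 : x 0 = 0) (hmono : StrictMono x)
    (hxtop : Tendsto x atTop atTop)
    (q : ℝ → ℝ) (hq : ∀ a b : ℝ, 0 ≤ a → IntegrableOn q (Icc a b) volume)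
    (β : ℕ → ℝ) (hβ : ∀ k, β (k + 1) ≠ 0)
    (D : ℝ) (hD : ∀ k, x (k + 1) - x k ≤ D)
    (C₀' C₁' : ℝ)
    (hqpos : ∀ k, (1 / (x (k + 1) - x k)) *
      (∫ t in Icc (x k) (x (k + 1)), max 0 (q t)) ≤ C₀')
    (hbpos : ∀ k, max 0 ((β (k + 1))⁻¹) ≤
      C₁' * min (x (k + 1) - x k) (x (k + 2) - x (k + 1)))
    (C : ℝ) (hC : 0 ≤ C)
    (hsb : ∀ F : PW1 x, MemDom x q β F →
      formVal x q β F ≥ -C * ∫ t in Ioi (0 : ℝ), F.f t ^ 2) :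
    ∃ Ct : ℝ, 0 ≤ Ct ∧
      (∀ k, (1 / (x (k + 1) - x k)) *
        (∫ t in Icc (x k) (x (k + 1)), max 0 (-q t)) ≤ Ct) ∧
      (∀ k, max 0 (-(β (k + 1))⁻¹) ≤
        Ct * min (x (k + 1) - x k) (x (k + 2) - x (k + 1))) := by
  have hxnn : ∀ m, (0:ℝ) ≤ x m := fun m => hx0 ▸ hmono.monotone (Nat.zero_le m)
  have hd : ∀ m, 0 < x (m + 1) - x m := fun m => sub_pos.mpr (hmono (Nat.lt_succ_self m))
  have hae : ∀ m, (Ioi (0:ℝ) ∩ Icc (x m) (x (m + 1)) : Set ℝ) =ᵐ[volume]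
      (Icc (x m) (x (m + 1)) : Set ℝ) := by
    intro m
    rw [MeasureTheory.ae_eq_set]
    constructor
    · have h0 : (Ioi (0:ℝ) ∩ Icc (x m) (x (m + 1))) \ Icc (x m) (x (m + 1)) = ∅ := by
        ext t
        simp only [mem_diff, mem_inter_iff, mem_empty_iff_false, iff_false, not_and, and_imp]
        exact fun _ h2 h3 => (h3 h2).elim
      simp [h0]
    · refine measure_mono_null ?_ (Real.volume_singleton (a := (0:ℝ)))
      intro t ht
      have h1 : t ∈ Icc (x m) (x (m + 1)) := ht.1
      have h3 : t ∉ Ioi (0:ℝ) := fun hi => ht.2 ⟨hi, h1⟩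
      have h4 : t ≤ 0 := not_lt.mp h3
      have h5 := h1.1
      have h6 := hxnn m
      have : t = 0 := le_antisymm h4 (by linarith)
      simp [this]
  -- the key inequality from the indicator test functions
  have key : ∀ m, (∫ t in Icc (x m) (x (m + 1)), q t) +
      ((if m = 0 then 0 else (β m)⁻¹) + (β (m + 1))⁻¹) ≥ -C * (x (m + 1) - x m) := by
    intro m
    set F := indTest x hmono m with hF
    have hfsq : (fun t => F.f t ^ 2) =
        (Icc (x m) (x (m + 1))).indicator (fun _ => (1:ℝ)) := by
      funext t
      by_cases h : t ∈ Icc (x m) (x (m + 1)) <;> simp [hF, indTest_f, h]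
    have hL2 : ∫ t in Ioi (0:ℝ), F.f t ^ 2 = x (m + 1) - x m := by
      rw [hfsq, setIntegral_indicator measurableSet_Icc, setIntegral_congr_set (hae m)]
      simp [Real.volume_Icc, ENNReal.toReal_ofReal (hd m).le]
      exact hmono.monotone (Nat.le_succ m)
    have hmem : MemDom x q β F := by
      refine ⟨?_, ?_, ?_, ?_⟩
      · rw [hfsq]
        exact ((integrable_indicator_iff measurableSet_Icc).mpr
          ((integrableOn_const_iff (C := (1:ℝ))).mpr (Or.inr measure_Icc_lt_top))).integrableOn
      · rw [hF, indTest_f']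
        simpa using (integrableOn_zero :
          IntegrableOn (fun _ => (0:ℝ)) (Ioi 0) volume)
      · have h1 : (fun t => |q t| * F.f t ^ 2) =
            (Icc (x m) (x (m + 1))).indicator (fun t => |q t|) := by
          funext t
          by_cases h : t ∈ Icc (x m) (x (m + 1)) <;> simp [hF, indTest_f, h]
        rw [h1]
        exact ((integrable_indicator_iff measurableSet_Icc).mpr
          ((hq (x m) (x (m + 1)) (hxnn m)).abs)).integrableOn
      · apply summable_of_ne_finset_zero (s := {m - 1, m})
        intro j hj
        simp only [Finset.mem_insert, Finset.mem_singleton] at hj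
        push_neg at hj
        rw [hF, indTest_jump, if_neg (by omega), if_neg hj.2]
        simp
    have hIq : ∫ t in Ioi (0:ℝ), (F.f' t ^ 2 + q t * F.f t ^ 2) =
        ∫ t in Icc (x m) (x (m + 1)), q t := by
      have h1 : (fun t => F.f' t ^ 2 + q t * F.f t ^ 2) =
          (Icc (x m) (x (m + 1))).indicator q := by
        funext t
        by_cases h : t ∈ Icc (x m) (x (m + 1)) <;>
          simp [hF, indTest_f, indTest_f', h]
      rw [h1, setIntegral_indicator measurableSet_Icc, setIntegral_congr_set (hae m)]
    have hts : ∑' j, F.jump j ^ 2 / β (j + 1) =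
        (if m = 0 then 0 else (β m)⁻¹) + (β (m + 1))⁻¹ := by
      match m with
      | 0 =>
        rw [tsum_eq_single 0 (by
          intro j hj
          rw [hF, indTest_jump, if_neg (by omega), if_neg hj]
          simp)]
        rw [hF, indTest_jump]
        norm_num
      | Nat.succ s =>
        rw [tsum_eq_sum (s := {s, s + 1}) (by
          intro j hj
          simp only [Finset.mem_insert, Finset.mem_singleton] at hj
          push_neg at hj
          rw [hF, indTest_jump, if_neg (by omega), if_neg (by omega)]
          simp)]
        rw [Finset.sum_pair (by omega : s ≠ s + 1)]
        rw [hF, indTest_jump, indTest_jump]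
        have e1 : s ≠ s + 1 := by omega
        have e2 : s + 1 + 1 ≠ s + 1 := by omega
        have e3 : s + 1 ≠ 0 := by omega
        simp only [if_pos rfl, if_neg e1, if_neg e2, if_neg e3]
        norm_num
    have hh := hsb F hmem
    unfold formVal at hh
    rw [hIq, hts, hL2] at hh
    linarith [hh]
  -- nonnegativity of the constants
  have hC0 : 0 ≤ C₀' := by
    have h1 := hqpos 0
    have h2 : 0 ≤ ∫ t in Icc (x 0) (x 1), max 0 (q t) :=
      setIntegral_nonneg measurableSet_Icc (fun t _ => le_max_left 0 (q t))
    have h3 : 0 < x 1 - x 0 := hd 0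
    have h4 : 0 < 1 / (x 1 - x 0) := by positivity
    nlinarith
  have hC1 : 0 ≤ C₁' := by
    have h1 := hbpos 0
    have h2 : (0:ℝ) ≤ max 0 ((β 1)⁻¹) := le_max_left _ _
    have h3 : 0 < min (x 1 - x 0) (x 2 - x 1) := lt_min (hd 0) (hd 1)
    nlinarith
  -- bound for the if-term
  have hJ : ∀ m, (if m = 0 then (0:ℝ) else (β m)⁻¹) ≤ C₁' * (x (m + 1) - x m) := by
    intro m
    match m with
    | 0 =>
      rw [if_pos rfl]
      exact mul_nonneg hC1 (hd 0).le
    | Nat.succ s =>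
      rw [if_neg (by omega)]
      calc (β (s + 1))⁻¹ ≤ max 0 ((β (s + 1))⁻¹) := le_max_right _ _
        _ ≤ C₁' * min (x (s + 1) - x s) (x (s + 2) - x (s + 1)) := hbpos s
        _ ≤ C₁' * (x (s + 2) - x (s + 1)) :=
          mul_le_mul_of_nonneg_left (min_le_right _ _) hC1
  have hb : ∀ m, (β (m + 1))⁻¹ ≤ C₁' * (x (m + 1) - x m) := by
    intro m
    calc (β (m + 1))⁻¹ ≤ max 0 ((β (m + 1))⁻¹) := le_max_right _ _
      _ ≤ C₁' * min (x (m + 1) - x m) (x (m + 2) - x (m + 1)) := hbpos m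
      _ ≤ C₁' * (x (m + 1) - x m) := mul_le_mul_of_nonneg_left (min_le_left _ _) hC1
  -- integrability of the positive part of `q`
  have hqi : ∀ m, IntegrableOn (fun t => max 0 (q t)) (Icc (x m) (x (m + 1))) volume := by
    intro m
    have h := (hq (x m) (x (m + 1)) (hxnn m)).pos_part
    have h2 : (fun t => max 0 (q t)) = (fun t => max (q t) 0) := by
      funext t; rw [max_comm]
    rw [h2]
    exact h
  have hqI : ∀ m, ∫ t in Icc (x m) (x (m + 1)), max 0 (q t) ≤ C₀' * (x (m + 1) - x m) := by
    intro m
    have h1 := hqpos m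
    have h3 : 0 < x (m + 1) - x m := hd m
    rw [div_mul_eq_mul_div, div_le_iff₀ h3] at h1
    linarith
  have hqm : ∀ m, ∫ t in Icc (x m) (x (m + 1)), q t ≤
      ∫ t in Icc (x m) (x (m + 1)), max 0 (q t) := by
    intro m
    exact setIntegral_mono (hq (x m) (x (m + 1)) (hxnn m)) (hqi m)
      (fun t => le_max_right 0 (q t))
  refine ⟨C₀' + 2 * C₁' + C, by linarith, ?_, ?_⟩
  · intro k
    have hkey := key k
    have h3 : 0 < x (k + 1) - x k := hd k
    have hsplit : ∫ t in Icc (x k) (x (k + 1)), max 0 (-q t) =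
        (∫ t in Icc (x k) (x (k + 1)), max 0 (q t)) -
          ∫ t in Icc (x k) (x (k + 1)), q t := by
      rw [← integral_sub (hqi k) (hq (x k) (x (k + 1)) (hxnn k))]
      congr 1
      funext t
      rcases le_total (q t) 0 with h | h
      · rw [max_eq_right (by linarith), max_eq_left (by linarith)]; ring
      · rw [max_eq_left (by linarith), max_eq_right (by linarith)]; ring
    rw [hsplit]
    have h5 : (∫ t in Icc (x k) (x (k + 1)), max 0 (q t)) -
        (∫ t in Icc (x k) (x (k + 1)), q t) ≤
        (C₀' + 2 * C₁' + C) * (x (k + 1) - x k) := by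
      have h6 := hqI k
      have h7 := hJ k
      have h8 := hb k
      nlinarith [hkey]
    rw [div_mul_eq_mul_div, div_le_iff₀ h3]
    linarith
  · intro k
    have hL : 0 < x (k + 1) - x k := hd k
    have hR : 0 < x (k + 2) - x (k + 1) := hd (k + 1)
    have hCt : (0:ℝ) ≤ C₀' + 2 * C₁' + C := by linarith
    have h1 : -(β (k + 1))⁻¹ ≤ (C₀' + 2 * C₁' + C) * (x (k + 1) - x k) := by
      have hkey := key k
      have h6 := hqI k
      have h7 := hJ k
      have h8 := hqm k
      nlinarith
    have h2 : -(β (k + 1))⁻¹ ≤ (C₀' + 2 * C₁' + C) * (x (k + 2) - x (k + 1)) := by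
      have hkey := key (k + 1)
      rw [if_neg (Nat.succ_ne_zero k)] at hkey
      have h6 := hqI (k + 1)
      have h7 := hb (k + 1)
      have h8 := hqm (k + 1)
      nlinarith
    apply max_le
    · exact mul_nonneg hCt (le_of_lt (lt_min hL hR))
    · rcases le_total (x (k + 1) - x k) (x (k + 2) - x (k + 1)) with h | h
      · rw [min_eq_left h]; exact h1
      · rw [min_eq_right h]; exact h2

end
end

section
/- Assume d^* < ∞. (a) If sup_k (1/d_k)∫_{Δ_k} q_−(x) dx < ∞, then the Neumann form t_{X,q} is lower semibounded: there exists C ≥ 0 with t_{X,q}[f] ≥ −C ∫₀^∞ |f|² dx for all f in its domain. (b) Conversely, if q(x) ≤ 0 for a.e. x and there exists C ≥ 0 with t_{X,q}[f] ≥ −C ∫₀^∞ |f|² dx for all f in the domain of t_{X,q}, then sup_k (1/d_k)∫_{Δ_k} q_−(x) dx < ∞. -/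
open MeasureTheory Set Filter

noncomputable section

/-- Membership in the domain of the Neumann form `t_{X,q}`: `f ∈ L²(0,∞)`,
`∫₀^∞ |f'|² < ∞` and `∫₀^∞ |q| |f|² < ∞`. -/
def MemDomN (x : ℕ → ℝ) (q : ℝ → ℝ) (F : PW1 x) : Prop :=
  IntegrableOn (fun t => F.f t ^ 2) (Ioi 0) volume ∧
  IntegrableOn (fun t => F.f' t ^ 2) (Ioi 0) volume ∧
  IntegrableOn (fun t => |q t| * F.f t ^ 2) (Ioi 0) volume

/-- The value of the Neumann form `t_{X,q}[f] = ∫₀^∞ (|f'|² + q |f|²) dx`. -/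
def formValN (x : ℕ → ℝ) (q : ℝ → ℝ) (F : PW1 x) : ℝ :=
  ∫ t in Ioi (0 : ℝ), (F.f' t ^ 2 + q t * F.f t ^ 2)

lemma my_cs (p p' : ℝ) (h : p < p') (g : ℝ → ℝ)
    (h1 : IntegrableOn g (Ioc p p') volume)
    (h2 : IntegrableOn (fun t => g t ^ 2) (Ioc p p') volume) :
    (∫ t in Ioc p p', |g t|) ^ 2 ≤ (p' - p) * ∫ t in Ioc p p', g t ^ 2 := by
  set ℓ := p' - p with hℓ
  have hℓ0 : 0 < ℓ := by simp [hℓ]; linarith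
  set A := ∫ t in Ioc p p', |g t| with hA
  set c := A / ℓ with hc
  have key : (0:ℝ) ≤ ∫ t in Ioc p p', (|g t| - c) ^ 2 :=
    integral_nonneg (fun t => sq_nonneg _)
  have hconst : IntegrableOn (fun _ : ℝ => c ^ 2) (Ioc p p') volume :=
    integrableOn_const measure_Ioc_lt_top.ne
  have expand : ∫ t in Ioc p p', (|g t| - c) ^ 2
      = (∫ t in Ioc p p', g t ^ 2) - 2 * c * A + c ^ 2 * ℓ := by
    have e : ∀ t : ℝ, (|g t| - c) ^ 2 = g t ^ 2 - 2 * c * |g t| + c ^ 2 := by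
      intro t; rw [sub_sq, sq_abs]; ring
    simp_rw [e]
    have i2 : IntegrableOn (fun t => 2 * c * |g t|) (Ioc p p') volume :=
      h1.abs.const_mul _
    have i1 : IntegrableOn (fun t => g t ^ 2 - 2 * c * |g t|) (Ioc p p') volume :=
      h2.sub i2
    rw [integral_add i1 hconst, integral_sub h2 i2, MeasureTheory.integral_const_mul,
      setIntegral_const, measureReal_def, Real.volume_Ioc, ENNReal.toReal_ofReal hℓ0.le]
    simp only [smul_eq_mul]
    rw [← hA]
    simp only [hc]
    field_simp
  rw [expand] at key
  have : c * ℓ = A := by rw [hc]; exact div_mul_cancel₀ A hℓ0.ne'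
  nlinarith [key, hℓ0, sq_nonneg A]

lemma my_piece (a b p p' : ℝ) (hab : a < b) (hap : a ≤ p) (hpp : p < p') (hpb : p' ≤ b)
    (c : ℝ) (f g Q : ℝ → ℝ)
    (hftc : ∀ t ∈ Ioo a b, f t = c + ∫ s in Ioc a t, g s)
    (hg1 : IntegrableOn g (Icc a b) volume)
    (hg2 : IntegrableOn (fun t => g t ^ 2) (Icc a b) volume)
    (hf2 : IntegrableOn (fun t => f t ^ 2) (Ioc p p') volume)
    (hQf : IntegrableOn (fun t => Q t * f t ^ 2) (Ioc p p') volume)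
    (hQpos : ∀ t, 0 ≤ Q t)
    (hQint : IntegrableOn Q (Ioc p p') volume)
    (M : ℝ) (hM : ∫ t in Ioc p p', Q t ≤ M) :
    ∫ t in Ioc p p', Q t * f t ^ 2 ≤
      M * ((2 / (p' - p)) * (∫ t in Ioc p p', f t ^ 2)
        + 8 * (p' - p) * ∫ t in Ioc p p', g t ^ 2) := by
  set ℓ := p' - p with hℓ
  have hℓ0 : 0 < ℓ := by simp only [hℓ]; linarith
  have hsub : Ioc p p' ⊆ Icc a b := fun t ht => ⟨le_trans hap (le_of_lt ht.1), le_trans ht.2 hpb⟩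
  have hg1' : IntegrableOn g (Ioc p p') volume := hg1.mono_set hsub
  have hg2' : IntegrableOn (fun t => g t ^ 2) (Ioc p p') volume := hg2.mono_set hsub
  set A := ∫ t in Ioc p p', |g t| with hA
  have hA0 : 0 ≤ A := integral_nonneg (fun t => abs_nonneg _)
  set Qi := ∫ t in Ioc p p', g t ^ 2 with hQi
  have hQi0 : 0 ≤ Qi := integral_nonneg (fun t => sq_nonneg _)
  have hA2 : A ^ 2 ≤ ℓ * Qi := my_cs p p' hpp g hg1' hg2'
  set Fi := ∫ t in Ioc p p', f t ^ 2 with hFi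
  have hFi0 : 0 ≤ Fi := integral_nonneg (fun t => sq_nonneg _)
  set S := (2 / ℓ) * Fi + 8 * ℓ * Qi with hS
  have hS0 : 0 ≤ S := by positivity
  -- pointwise two-variable bound
  have step1 : ∀ t ∈ Ioc p p', t ≠ b → ∀ s ∈ Ioc p p', s ≠ b →
      f t ^ 2 ≤ 2 * f s ^ 2 + 8 * A ^ 2 := by
    have key : ∀ t ∈ Ioc p p', t ≠ b →
        ∃ I : ℝ, f t = (c + ∫ s in Ioc a p, g s) + I ∧ |I| ≤ A := by
      intro t ht htb
      have htI : t ∈ Ioo a b := ⟨lt_of_le_of_lt hap ht.1, lt_of_le_of_ne (le_trans ht.2 hpb) htb⟩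
      refine ⟨∫ s in Ioc p t, g s, ?_, ?_⟩
      · rw [hftc t htI, add_assoc, ← setIntegral_union (Ioc_disjoint_Ioc_of_le le_rfl) measurableSet_Ioc
          (hg1.mono_set (Ioc_subset_Icc_self.trans (Icc_subset_Icc le_rfl (le_trans (le_of_lt ht.1) (le_trans ht.2 hpb)))))
          (hg1.mono_set (fun u hu => ⟨le_trans hap (le_of_lt hu.1), le_trans hu.2 htI.2.le⟩)),
          Ioc_union_Ioc_eq_Ioc hap ht.1.le]
      · calc |∫ s in Ioc p t, g s| ≤ ∫ s in Ioc p t, |g s| :=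
              by
              simpa [Real.norm_eq_abs] using
                norm_integral_le_integral_norm (μ := volume.restrict (Ioc p t)) g
          _ ≤ A := by
              rw [hA]
              exact setIntegral_mono_set hg1'.abs
                (Filter.Eventually.of_forall fun s => abs_nonneg _)
                (HasSubset.Subset.eventuallyLE (Ioc_subset_Ioc le_rfl ht.2))
    intro t ht htb s hs hsb
    obtain ⟨I, hfI, hIA⟩ := key t ht htb
    obtain ⟨J, hfJ, hJA⟩ := key s hs hsb
    have h1 : |f t| ≤ |f s| + 2 * A := by
      have : f t = f s + (I - J) := by rw [hfI, hfJ]; ring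
      rw [this]
      calc |f s + (I - J)| ≤ |f s| + |I - J| := abs_add_le _ _
        _ ≤ |f s| + (|I| + |J|) := by
            gcongr
            exact abs_sub _ _
        _ ≤ |f s| + 2 * A := by linarith
    nlinarith [sq_nonneg (|f s| - 2 * A), sq_abs (f t), sq_abs (f s), abs_nonneg (f t),
      abs_nonneg (f s), sq_nonneg (|f s| + 2 * A)]
  -- a.e. s ≠ b
  have hne : ∀ᵐ s : ℝ ∂(volume.restrict (Ioc p p')), s ≠ b := by
    refine ae_restrict_of_ae ?_
    rw [ae_iff]
    simpa using measure_singleton b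
  -- sup bound
  have step2 : ∀ t ∈ Ioc p p', t ≠ b → f t ^ 2 ≤ S := by
    intro t ht htb
    have hmono : ∫ s in Ioc p p', f t ^ 2 ≤ ∫ s in Ioc p p', (2 * f s ^ 2 + 8 * A ^ 2) := by
      refine setIntegral_mono_ae_restrict
        (integrableOn_const measure_Ioc_lt_top.ne)
        ((hf2.const_mul 2).add (integrableOn_const measure_Ioc_lt_top.ne)) ?_
      filter_upwards [ae_restrict_mem measurableSet_Ioc, hne] with s hs hsb
      exact step1 t ht htb s hs hsb
    rw [setIntegral_const, measureReal_def, Real.volume_Ioc, ENNReal.toReal_ofReal hℓ0.le, smul_eq_mul] at hmono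
    rw [integral_add (hf2.const_mul 2) (integrableOn_const measure_Ioc_lt_top.ne),
      MeasureTheory.integral_const_mul, setIntegral_const, measureReal_def, Real.volume_Ioc,
      ENNReal.toReal_ofReal hℓ0.le, smul_eq_mul] at hmono
    have : f t ^ 2 * ℓ ≤ S * ℓ := by
      calc f t ^ 2 * ℓ = ℓ * f t ^ 2 := by ring
        _ ≤ 2 * Fi + ℓ * (8 * A ^ 2) := hmono
        _ ≤ 2 * Fi + ℓ * (8 * (ℓ * Qi)) := by nlinarith
        _ = S * ℓ := by rw [hS]; linear_combination (-Fi) * (div_mul_cancel₀ (2:ℝ) hℓ0.ne')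
    exact le_of_mul_le_mul_right this hℓ0
  -- integrate against Q
  calc ∫ t in Ioc p p', Q t * f t ^ 2 ≤ ∫ t in Ioc p p', Q t * S := by
        refine setIntegral_mono_ae_restrict hQf (hQint.mul_const S) ?_
        filter_upwards [ae_restrict_mem measurableSet_Ioc, hne] with t ht htb
        exact mul_le_mul_of_nonneg_left (step2 t ht htb) (hQpos t)
    _ = (∫ t in Ioc p p', Q t) * S := by rw [integral_mul_const]
    _ ≤ M * S := mul_le_mul_of_nonneg_right hM hS0

lemma my_sum_Ioc (p : ℕ → ℝ) (hp : Monotone p) (h : ℝ → ℝ) (n : ℕ)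
    (hint : IntegrableOn h (Ioc (p 0) (p n)) volume) :
    ∫ t in Ioc (p 0) (p n), h t
      = ∑ j ∈ Finset.range n, ∫ t in Ioc (p j) (p (j + 1)), h t := by
  induction n with
  | zero => simp
  | succ n ih =>
    have hsub1 : Ioc (p 0) (p n) ⊆ Ioc (p 0) (p (n + 1)) :=
      Ioc_subset_Ioc le_rfl (hp (Nat.le_succ n))
    have hsub2 : Ioc (p n) (p (n + 1)) ⊆ Ioc (p 0) (p (n + 1)) :=
      Ioc_subset_Ioc (hp (Nat.zero_le n)) le_rfl
    rw [Finset.sum_range_succ, ← ih (hint.mono_set hsub1),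
      ← setIntegral_union (Ioc_disjoint_Ioc_of_le le_rfl) measurableSet_Ioc
        (hint.mono_set hsub1) (hint.mono_set hsub2),
      Ioc_union_Ioc_eq_Ioc (hp (Nat.zero_le n)) (hp (Nat.le_succ n))]

lemma my_interval (a b : ℝ) (hab : a < b) (c : ℝ) (f g Q : ℝ → ℝ)
    (hftc : ∀ t ∈ Ioo a b, f t = c + ∫ s in Ioc a t, g s)
    (hg1 : IntegrableOn g (Icc a b) volume)
    (hg2 : IntegrableOn (fun t => g t ^ 2) (Icc a b) volume)
    (hf2 : IntegrableOn (fun t => f t ^ 2) (Ioc a b) volume)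
    (hQf : IntegrableOn (fun t => Q t * f t ^ 2) (Ioc a b) volume)
    (hQpos : ∀ t, 0 ≤ Q t)
    (hQint : IntegrableOn Q (Icc a b) volume)
    (n : ℕ) (hn : 0 < n)
    (M : ℝ) (hM : ∫ t in Icc a b, Q t ≤ M) :
    ∫ t in Ioc a b, Q t * f t ^ 2 ≤
      M * (2 * n / (b - a)) * (∫ t in Ioc a b, f t ^ 2)
        + M * (8 * ((b - a) / n)) * ∫ t in Ioc a b, g t ^ 2 := by
  set ℓ := (b - a) / n with hℓ
  have hn' : (0:ℝ) < n := Nat.cast_pos.2 hn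
  have hℓ0 : 0 < ℓ := div_pos (by linarith) hn'
  set p : ℕ → ℝ := fun j => a + j * ℓ with hp
  have hpmono : Monotone p := by
    intro i j hij
    simp only [hp]
    have : (i:ℝ) ≤ j := Nat.cast_le.2 hij
    nlinarith
  have hp0 : p 0 = a := by simp [hp]
  have hpn : p n = b := by
    simp only [hp, hℓ]
    field_simp
    ring
  have hplea : ∀ j, a ≤ p j := fun j => by
    simp only [hp]
    have := mul_nonneg (Nat.cast_nonneg j : (0:ℝ) ≤ j) hℓ0.le
    linarith
  have hpleb : ∀ j, j ≤ n → p j ≤ b := fun j hj => by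
    rw [← hpn]; exact hpmono hj
  have hstep : ∀ j, p (j + 1) - p j = ℓ := fun j => by
    simp only [hp, Nat.cast_succ]; ring
  have hpsub : ∀ j, j < n → Ioc (p j) (p (j + 1)) ⊆ Ioc a b := fun j hj =>
    Ioc_subset_Ioc (hplea j) (hpleb (j + 1) hj)
  have hplt : ∀ j, p j < p (j + 1) := fun j => by
    have := hstep j; linarith
  -- the per-piece bound
  have hMnn : 0 ≤ M := le_trans (integral_nonneg fun t => hQpos t) hM
  have hQIoc : IntegrableOn Q (Ioc a b) volume := hQint.mono_set Ioc_subset_Icc_self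
  have piece_bound : ∀ j ∈ Finset.range n,
      ∫ t in Ioc (p j) (p (j + 1)), Q t * f t ^ 2 ≤
        M * ((2 / ℓ) * (∫ t in Ioc (p j) (p (j + 1)), f t ^ 2)
          + 8 * ℓ * ∫ t in Ioc (p j) (p (j + 1)), g t ^ 2) := by
    intro j hj
    rw [Finset.mem_range] at hj
    have hsub := hpsub j hj
    have := my_piece a b (p j) (p (j + 1)) hab (hplea j) (hplt j) (hpleb (j + 1) hj)
      c f g Q hftc hg1 hg2 (hf2.mono_set hsub) (hQf.mono_set hsub) hQpos
      (hQIoc.mono_set hsub) M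
      (le_trans (setIntegral_mono_set hQint
        (Filter.Eventually.of_forall fun t => hQpos t)
        (HasSubset.Subset.eventuallyLE (hsub.trans Ioc_subset_Icc_self))) hM)
    rwa [hstep j] at this
  -- sum up
  have hs1 := my_sum_Ioc p hpmono (fun t => Q t * f t ^ 2) n
    (by rw [hp0, hpn]; exact hQf)
  have hs2 := my_sum_Ioc p hpmono (fun t => f t ^ 2) n (by rw [hp0, hpn]; exact hf2)
  have hs3 := my_sum_Ioc p hpmono (fun t => g t ^ 2) n
    (by rw [hp0, hpn]; exact hg2.mono_set Ioc_subset_Icc_self)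
  rw [hp0, hpn] at hs1 hs2 hs3
  calc ∫ t in Ioc a b, Q t * f t ^ 2
      = ∑ j ∈ Finset.range n, ∫ t in Ioc (p j) (p (j + 1)), Q t * f t ^ 2 := hs1
    _ ≤ ∑ j ∈ Finset.range n,
        (M * ((2 / ℓ) * (∫ t in Ioc (p j) (p (j + 1)), f t ^ 2)
          + 8 * ℓ * ∫ t in Ioc (p j) (p (j + 1)), g t ^ 2)) :=
        Finset.sum_le_sum piece_bound
    _ = M * (2 / ℓ) * (∫ t in Ioc a b, f t ^ 2)
        + M * (8 * ℓ) * ∫ t in Ioc a b, g t ^ 2 := by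
        rw [hs2, hs3, Finset.mul_sum, Finset.mul_sum, ← Finset.sum_add_distrib]
        congr 1
        ext j
        ring
    _ = M * (2 * n / (b - a)) * (∫ t in Ioc a b, f t ^ 2)
        + M * (8 * ((b - a) / n)) * ∫ t in Ioc a b, g t ^ 2 := by
        rw [hℓ]
        congr 2
        · field_simp

lemma my_interval_lb (a b D C₀ : ℝ) (hab : a < b) (hdD : b - a ≤ D) (hC0 : 0 ≤ C₀)
    (c : ℝ) (f g q : ℝ → ℝ)
    (hftc : ∀ t ∈ Ioo a b, f t = c + ∫ s in Ioc a t, g s)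
    (hg1 : IntegrableOn g (Icc a b) volume)
    (hg2 : IntegrableOn (fun t => g t ^ 2) (Icc a b) volume)
    (hf2 : IntegrableOn (fun t => f t ^ 2) (Ioc a b) volume)
    (hqf : IntegrableOn (fun t => q t * f t ^ 2) (Ioc a b) volume)
    (hQf : IntegrableOn (fun t => max 0 (-q t) * f t ^ 2) (Ioc a b) volume)
    (hQint : IntegrableOn (fun t => max 0 (-q t)) (Icc a b) volume)
    (hmass : ∫ t in Icc a b, max 0 (-q t) ≤ C₀ * (b - a)) :
    -((2 * C₀ * (D * (8 * C₀ * D + 1) + 1))) * ∫ t in Ioc a b, f t ^ 2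
      ≤ ∫ t in Ioc a b, (g t ^ 2 + q t * f t ^ 2) := by
  set d := b - a with hd
  have hd0 : 0 < d := by simp only [hd]; linarith
  have hD0 : 0 < D := lt_of_lt_of_le hd0 hdD
  set δ := 1 / (8 * C₀ * D + 1) with hδ
  have hden : 0 < 8 * C₀ * D + 1 := by positivity
  have hδ0 : 0 < δ := by positivity
  set n := ⌈d / δ⌉₊ with hn
  have hn0 : 0 < n := Nat.ceil_pos.2 (div_pos hd0 hδ0)
  have hn0' : (0:ℝ) < n := Nat.cast_pos.2 hn0
  have hnge : d / δ ≤ (n:ℝ) := Nat.le_ceil _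
  have hnle : (n:ℝ) < d / δ + 1 := Nat.ceil_lt_add_one (by positivity)
  set Q := fun t => max 0 (-q t) with hQ
  have hQpos : ∀ t, 0 ≤ Q t := fun t => le_max_left _ _
  set F2 := ∫ t in Ioc a b, f t ^ 2 with hF2
  have hF20 : 0 ≤ F2 := integral_nonneg fun t => sq_nonneg _
  set G2 := ∫ t in Ioc a b, g t ^ 2 with hG2
  have hG20 : 0 ≤ G2 := integral_nonneg fun t => sq_nonneg _
  have key := my_interval a b hab c f g Q hftc hg1 hg2 hf2 hQf hQpos hQint n hn0
    (C₀ * d) hmass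
  -- bound the coefficients
  have hc1 : C₀ * d * (2 * n / (b - a)) ≤ 2 * C₀ * (D * (8 * C₀ * D + 1) + 1) := by
    rw [← hd]
    have : C₀ * d * (2 * n / d) = 2 * C₀ * n := by field_simp
    rw [this]
    have hnD : (n:ℝ) ≤ D / δ + 1 := by
      have : d / δ ≤ D / δ := by gcongr
      linarith
    have hDδ : D / δ = D * (8 * C₀ * D + 1) := by
      rw [hδ]; field_simp
    calc 2 * C₀ * n ≤ 2 * C₀ * (D / δ + 1) := by
          have := mul_le_mul_of_nonneg_left hnD (by positivity : (0:ℝ) ≤ 2 * C₀)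
          linarith
      _ = 2 * C₀ * (D * (8 * C₀ * D + 1) + 1) := by rw [hDδ]
  have hc2 : C₀ * d * (8 * ((b - a) / n)) ≤ 1 := by
    rw [← hd]
    have hdn : d / n ≤ δ := by
      rw [div_le_iff₀ hn0']
      calc d = (d / δ) * δ := by field_simp
        _ ≤ n * δ := mul_le_mul_of_nonneg_right hnge hδ0.le
        _ = δ * n := mul_comm _ _
    calc C₀ * d * (8 * (d / n)) ≤ C₀ * D * (8 * δ) := by
          have h1 : C₀ * d ≤ C₀ * D := by nlinarith
          have h2 : 8 * (d / n) ≤ 8 * δ := by linarith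
          have h3 : 0 ≤ C₀ * d := by positivity
          have h4 : 0 ≤ 8 * (d / n) := by positivity
          exact mul_le_mul h1 h2 h4 (by positivity)
      _ = 8 * C₀ * D / (8 * C₀ * D + 1) := by rw [hδ]; ring
      _ ≤ 1 := by
          rw [div_le_one hden]; linarith
  -- combine
  have hQbound : ∫ t in Ioc a b, Q t * f t ^ 2
      ≤ 2 * C₀ * (D * (8 * C₀ * D + 1) + 1) * F2 + G2 := by
    calc ∫ t in Ioc a b, Q t * f t ^ 2
        ≤ C₀ * d * (2 * n / (b - a)) * F2 + C₀ * d * (8 * ((b - a) / n)) * G2 := key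
      _ ≤ 2 * C₀ * (D * (8 * C₀ * D + 1) + 1) * F2 + 1 * G2 := by
          have := mul_le_mul_of_nonneg_right hc1 hF20
          have := mul_le_mul_of_nonneg_right hc2 hG20
          linarith
      _ = 2 * C₀ * (D * (8 * C₀ * D + 1) + 1) * F2 + G2 := by ring
  have hqlow : -(∫ t in Ioc a b, Q t * f t ^ 2) ≤ ∫ t in Ioc a b, q t * f t ^ 2 := by
    rw [← integral_neg]
    refine setIntegral_mono_on hQf.neg hqf measurableSet_Ioc ?_
    intro t ht
    have h1 : -q t ≤ Q t := le_max_right _ _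
    nlinarith [sq_nonneg (f t)]
  rw [integral_add (hg2.mono_set Ioc_subset_Icc_self) hqf]
  have : -(2 * C₀ * (D * (8 * C₀ * D + 1) + 1)) * F2
      ≤ G2 + ∫ t in Ioc a b, q t * f t ^ 2 := by linarith
  simpa using this

lemma my_union_Ioc (x : ℕ → ℝ) (hx0 : x 0 = 0) (hmono : StrictMono x)
    (hxtop : Tendsto x atTop atTop) :
    (⋃ k, Ioc (x k) (x (k + 1))) = Ioi 0 := by
  ext y
  simp only [mem_iUnion, mem_Ioc, mem_Ioi]
  constructor
  · rintro ⟨k, hk1, _⟩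
    have : x 0 ≤ x k := hmono.monotone (Nat.zero_le k)
    rw [hx0] at this
    linarith
  · intro hy
    have hex : ∃ n, y ≤ x n := (hxtop.eventually_ge_atTop y).exists
    have hkpos : Nat.find hex ≠ 0 := by
      intro h
      have := Nat.find_spec hex
      rw [h, hx0] at this
      linarith
    obtain ⟨m, hm⟩ := Nat.exists_eq_succ_of_ne_zero hkpos
    refine ⟨m, ?_, ?_⟩
    · have := Nat.find_min hex (m := m) (by omega)
      linarith [lt_of_not_ge this]
    · have := Nat.find_spec hex
      rwa [hm] at this

/-- **Corollary 2.6**: assume `d^* < ∞`. (a) If `sup_k (1/d_k) ∫_Δₖ q₋ < ∞`,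
then the Neumann form `t_{X,q}` is lower semibounded. (b) Conversely, if
`q ≤ 0` a.e. and `t_{X,q}` is lower semibounded, then
`sup_k (1/d_k) ∫_Δₖ q₋ < ∞`. -/
theorem stmt_5 (x : ℕ → ℝ) (hx0 : x 0 = 0) (hmono : StrictMono x)
    (hxtop : Tendsto x atTop atTop)
    (q : ℝ → ℝ) (hq : ∀ a b : ℝ, 0 ≤ a → IntegrableOn q (Icc a b) volume)
    (D : ℝ) (hD : ∀ k, x (k + 1) - x k ≤ D) :
    ((∃ C₀ : ℝ, ∀ k, (1 / (x (k + 1) - x k)) *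
        (∫ t in Icc (x k) (x (k + 1)), max 0 (-q t)) ≤ C₀) →
      ∃ C : ℝ, 0 ≤ C ∧ ∀ F : PW1 x, MemDomN x q F →
        formValN x q F ≥ -C * ∫ t in Ioi (0 : ℝ), F.f t ^ 2) ∧
    ((∀ᵐ t ∂(volume.restrict (Ioi (0 : ℝ))), q t ≤ 0) →
      (∃ C : ℝ, 0 ≤ C ∧ ∀ F : PW1 x, MemDomN x q F →
        formValN x q F ≥ -C * ∫ t in Ioi (0 : ℝ), F.f t ^ 2) →
      ∃ C₀ : ℝ, ∀ k, (1 / (x (k + 1) - x k)) *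
        (∫ t in Icc (x k) (x (k + 1)), max 0 (-q t)) ≤ C₀) := by
  constructor
  · intro hyp
    obtain ⟨C₀, hC₀⟩ := hyp
    have hdpos : ∀ k, 0 < x (k + 1) - x k := fun k => sub_pos.2 (hmono (Nat.lt_succ_self k))
    have hxnn : ∀ k, 0 ≤ x k := fun k => by rw [← hx0]; exact hmono.monotone (Nat.zero_le k)
    have hD0 : 0 < D := lt_of_lt_of_le (hdpos 0) (hD 0)
    have hC00 : 0 ≤ C₀ := by
      have h1 := hC₀ 0
      have h2 : 0 ≤ ∫ t in Icc (x 0) (x 1), max 0 (-q t) :=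
        integral_nonneg fun t => le_max_left _ _
      have h3 : 0 < 1 / (x 1 - x 0) := by
        have := hdpos 0; positivity
      nlinarith
    set C := 2 * C₀ * (D * (8 * C₀ * D + 1) + 1) with hC
    have hCnn : 0 ≤ C := by
      have h1 : 0 ≤ C₀ * D := mul_nonneg hC00 hD0.le
      nlinarith
    refine ⟨C, hCnn, fun F hmem => ?_⟩
    obtain ⟨hf2, hg2, hqf2⟩ := hmem
    -- measurability of q on (0,∞)
    have hqm : AEStronglyMeasurable q (volume.restrict (Ioi (0:ℝ))) := by
      have h1 : AEStronglyMeasurable q (volume.restrict (⋃ n : ℕ, Icc (0:ℝ) n)) :=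
        aestronglyMeasurable_iUnion_iff.2 fun n => (hq 0 n le_rfl).aestronglyMeasurable
      refine h1.mono_set fun t ht => ?_
      obtain ⟨n, hn⟩ := exists_nat_ge t
      exact mem_iUnion.2 ⟨n, le_of_lt ht, hn⟩
    -- integrability of q * f ^ 2 and q_- * f ^ 2 on (0, ∞)
    have habs : ∀ᵐ t ∂(volume.restrict (Ioi (0:ℝ))),
        ‖q t * F.f t ^ 2‖ ≤ |q t| * F.f t ^ 2 := by
      refine Filter.Eventually.of_forall fun t => ?_
      rw [Real.norm_eq_abs, abs_mul, abs_of_nonneg (sq_nonneg (F.f t))]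
    have hqf : IntegrableOn (fun t => q t * F.f t ^ 2) (Ioi 0) volume :=
      hqf2.mono' (hqm.mul hf2.aestronglyMeasurable) habs
    have hQm : AEStronglyMeasurable (fun t => max 0 (-q t))
        (volume.restrict (Ioi (0:ℝ))) := aestronglyMeasurable_const.sup hqm.neg
    have hQf : IntegrableOn (fun t => max 0 (-q t) * F.f t ^ 2) (Ioi 0) volume := by
      refine hqf2.mono' (hQm.mul hf2.aestronglyMeasurable)
        (Filter.Eventually.of_forall fun t => ?_)
      rw [Real.norm_eq_abs, abs_mul, abs_of_nonneg (sq_nonneg (F.f t)),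
        abs_of_nonneg (le_max_left _ _)]
      have : max 0 (-q t) ≤ |q t| := max_le (abs_nonneg _) (neg_le_abs _)
      nlinarith [sq_nonneg (F.f t)]
    -- the decomposition of (0,∞)
    have hU := my_union_Ioc x hx0 hmono hxtop
    have hdisj : Pairwise (Function.onFun Disjoint fun k => Ioc (x k) (x (k + 1))) := by
      have := hmono.monotone.pairwise_disjoint_on_Ioc_succ
      simpa [Order.succ_eq_add_one] using this
    have hIocsub : ∀ k, Ioc (x k) (x (k + 1)) ⊆ Ioi (0:ℝ) := fun k t ht =>
      lt_of_le_of_lt (hxnn k) ht.1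
    have hintegrand : IntegrableOn (fun t => F.f' t ^ 2 + q t * F.f t ^ 2) (Ioi 0) volume :=
      hg2.add hqf
    have hsum1 : HasSum (fun k => ∫ t in Ioc (x k) (x (k + 1)),
        (F.f' t ^ 2 + q t * F.f t ^ 2)) (∫ t in Ioi (0:ℝ), (F.f' t ^ 2 + q t * F.f t ^ 2)) := by
      rw [← hU]
      exact hasSum_integral_iUnion (fun k => measurableSet_Ioc) hdisj (hU ▸ hintegrand)
    have hsum2 : HasSum (fun k => ∫ t in Ioc (x k) (x (k + 1)), F.f t ^ 2)
        (∫ t in Ioi (0:ℝ), F.f t ^ 2) := by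
      rw [← hU]
      exact hasSum_integral_iUnion (fun k => measurableSet_Ioc) hdisj (hU ▸ hf2)
    -- per-interval bound
    have per_int : ∀ k, -C * (∫ t in Ioc (x k) (x (k + 1)), F.f t ^ 2)
        ≤ ∫ t in Ioc (x k) (x (k + 1)), (F.f' t ^ 2 + q t * F.f t ^ 2) := by
      intro k
      have hann := hxnn k
      have hQint : IntegrableOn (fun t => max 0 (-q t)) (Icc (x k) (x (k + 1))) volume := by
        have h1 : IntegrableOn (fun t => max (-q t) 0) (Icc (x k) (x (k + 1))) volume :=
          (hq (x k) (x (k + 1)) hann).neg.pos_part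
        simpa [max_comm] using h1
      have hmass : ∫ t in Icc (x k) (x (k + 1)), max 0 (-q t) ≤ C₀ * (x (k + 1) - x k) := by
        have h1 := hC₀ k
        have h2 := hdpos k
        rw [div_mul_eq_mul_div, mul_comm] at h1
        calc ∫ t in Icc (x k) (x (k + 1)), max 0 (-q t)
            = ((∫ t in Icc (x k) (x (k + 1)), max 0 (-q t)) / (x (k+1) - x k))
              * (x (k+1) - x k) := by field_simp
          _ ≤ C₀ * (x (k + 1) - x k) := by
              apply mul_le_mul_of_nonneg_right _ h2.le
              rw [div_le_iff₀ h2] at h1 ⊢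
              linarith [h1]
      exact my_interval_lb (x k) (x (k + 1)) D C₀ (hmono (Nat.lt_succ_self k))
        (hD k) hC00 (F.fr k) F.f F.f' q (F.ftc k) (F.int_d k) (F.sq_d k)
        (hf2.mono_set (hIocsub k)) (hqf.mono_set (hIocsub k))
        (hQf.mono_set (hIocsub k)) hQint hmass
    -- sum up
    rw [ge_iff_le, formValN]
    calc -C * ∫ t in Ioi (0:ℝ), F.f t ^ 2
        = ∑' k, -C * ∫ t in Ioc (x k) (x (k + 1)), F.f t ^ 2 :=
          ((hsum2.mul_left (-C)).tsum_eq).symm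
      _ ≤ ∑' k, ∫ t in Ioc (x k) (x (k + 1)), (F.f' t ^ 2 + q t * F.f t ^ 2) :=
          Summable.tsum_le_tsum per_int (hsum2.mul_left (-C)).summable hsum1.summable
      _ = ∫ t in Ioi (0:ℝ), (F.f' t ^ 2 + q t * F.f t ^ 2) := hsum1.tsum_eq
  · intro hq0 hlb
    obtain ⟨C, hC0, hC⟩ := hlb
    refine ⟨C, fun k => ?_⟩
    set a := x k with ha
    set b := x (k + 1) with hb
    have hab : a < b := hmono (Nat.lt_succ_self k)
    have hann : 0 ≤ a := by rw [ha, ← hx0]; exact hmono.monotone (Nat.zero_le k)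
    have hIoosub : Ioo a b ⊆ Ioi (0:ℝ) := fun t ht => lt_of_le_of_lt hann ht.1
    -- the test function
    set φ : ℝ → ℝ := (Ioo a b).indicator (fun _ => (1:ℝ)) with hφ
    have hφ_mem : ∀ t ∈ Ioo a b, φ t = 1 := fun t ht => by
      simp [hφ, indicator_of_mem ht]
    have hφ_nmem : ∀ t, t ∉ Ioo a b → φ t = 0 := fun t ht => by
      simp [hφ, indicator_of_notMem ht]
    have hdisj : ∀ j, j ≠ k → ∀ t ∈ Ioo (x j) (x (j + 1)), t ∉ Ioo a b := by
      intro j hj t ht hc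
      rcases lt_or_gt_of_ne hj with h | h
      · have : x (j + 1) ≤ x k := hmono.monotone h
        exact absurd (ht.2.trans_le this) (not_lt.2 hc.1.le)
      · have : x (k + 1) ≤ x j := hmono.monotone h
        exact absurd (ht.1.trans_le' this) (not_lt.2 hc.2.le)
    set F : PW1 x :=
      { f := φ
        f' := fun _ => 0
        fr := fun j => if j = k then 1 else 0
        fl := fun j => if j = k + 1 then 1 else 0
        int_d := fun j => integrableOn_zero
        sq_d := fun j => by simpa using (integrableOn_zero :
          IntegrableOn (fun _ : ℝ => (0:ℝ)) (Icc (x j) (x (j+1))) volume)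
        ftc := by
          intro j t ht
          simp only [integral_zero]
          by_cases hj : j = k
          · subst hj
            rw [hφ_mem t ht]
            simp
          · rw [hφ_nmem t (hdisj j hj t ht)]
            simp [hj]
        fl_eq := by
          intro j
          simp only [integral_zero, add_zero, Nat.add_right_cancel_iff] } with hF
    have hf2ind : (fun t => F.f t ^ 2) = (Ioo a b).indicator (fun _ => (1:ℝ)) := by
      funext t
      by_cases ht : t ∈ Ioo a b
      · rw [indicator_of_mem ht]
        simp [hF, hφ_mem t ht]
      · rw [indicator_of_notMem ht]
        simp [hF, hφ_nmem t ht]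
    have hmem : MemDomN x q F := by
      refine ⟨?_, ?_, ?_⟩
      · rw [hf2ind]
        exact ((integrable_indicator_iff measurableSet_Ioo).2
          (integrableOn_const measure_Ioo_lt_top.ne)).integrableOn
      · show IntegrableOn (fun t => (0:ℝ) ^ 2) _ _
        simpa using (integrableOn_zero : IntegrableOn (fun _ : ℝ => (0:ℝ)) (Ioi 0) volume)
      · have : (fun t => |q t| * F.f t ^ 2) = (Ioo a b).indicator (fun t => |q t|) := by
          funext t
          by_cases ht : t ∈ Ioo a b
          · rw [indicator_of_mem ht]; simp [hF, hφ_mem t ht]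
          · rw [indicator_of_notMem ht]; simp [hF, hφ_nmem t ht]
        rw [this]
        exact ((integrable_indicator_iff measurableSet_Ioo).2
          (IntegrableOn.mono_set (hq a b hann).abs Ioo_subset_Icc_self)).integrableOn
    have hform := hC F hmem
    -- compute formValN
    have hval : formValN x q F = ∫ t in Ioo a b, q t := by
      have hint : (fun t => F.f' t ^ 2 + q t * F.f t ^ 2)
          = (Ioo a b).indicator q := by
        funext t
        by_cases ht : t ∈ Ioo a b
        · rw [indicator_of_mem ht]; simp [hF, hφ_mem t ht]
        · rw [indicator_of_notMem ht]; simp [hF, hφ_nmem t ht]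
      rw [formValN, hint, setIntegral_indicator measurableSet_Ioo,
        inter_eq_self_of_subset_right hIoosub]
    -- compute ∫ f².
    have hnorm : ∫ t in Ioi (0:ℝ), F.f t ^ 2 = b - a := by
      rw [hf2ind, setIntegral_indicator measurableSet_Ioo,
        inter_eq_self_of_subset_right hIoosub, setIntegral_const, measureReal_def, Real.volume_Ioo,
        ENNReal.toReal_ofReal (by linarith), smul_eq_mul, mul_one]
    rw [hval, hnorm] at hform
    -- q ≤ 0 a.e. on Ioo a b
    have hae : ∀ᵐ t ∂(volume.restrict (Ioo a b)), q t ≤ 0 :=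
      ae_restrict_of_ae_restrict_of_subset hIoosub hq0
    have hQeq : ∫ t in Icc a b, max 0 (-q t) = - ∫ t in Ioo a b, q t := by
      rw [integral_Icc_eq_integral_Ioc, integral_Ioc_eq_integral_Ioo, ← integral_neg]
      refine integral_congr_ae ?_
      filter_upwards [hae] with t ht
      simp [max_eq_right (neg_nonneg.2 ht)]
    rw [hQeq]
    have hba : 0 < b - a := by linarith
    rw [ge_iff_le, neg_mul, neg_le] at hform
    calc 1 / (b - a) * -∫ t in Ioo a b, q t ≤ 1 / (b - a) * (C * (b - a)) := by
          apply mul_le_mul_of_nonneg_left hform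
          positivity
      _ = C := by field_simp


end
end

section
/- Suppose there exists C ≥ 0 such that t_{X,β}[f] ≥ −C ∫₀^∞ |f|² dx for all f in the domain of t_{X,β}. Then: (i) (1/β_k)^− ≤ 1 + C/3 for every k; (ii) 1/|β_{k_j}| ≤ C · min{d_j^−, d_{j+1}^−} for every j ≥ 1; (iii) for every j and every i ∈ {1, …, k_{j+1} − k_j}: 1/β_{k_j} + 1/β_{k_j + i} ≥ −C (x_{k_j+i} − x_{k_j}); (iv) for every j and every i ∈ {1, …, k_j − k_{j−1}}: 1/β_{k_j − i} + 1/β_{k_j} ≥ −C (x_{k_j} − x_{k_j − i}). -/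
open MeasureTheory Set Filter

noncomputable section

/-- `dminus x κ j` is the paper's `d_{j+1}^- = x_{k_{j+1}} − x_{k_j}` (with `k_0 = 0`),
the distance between the consecutive nodes `x_{k_j}` supporting negative
intensities; `κ j` is the paper's index `k_{j+1}`. -/
def dminus (x : ℕ → ℝ) (κ : ℕ → ℕ) : ℕ → ℝ
  | 0 => x (κ 0) - x 0
  | j + 1 => x (κ (j + 1)) - x (κ j)

/-- `kprev κ j` is the paper's `k_j` when `κ j` is the paper's `k_{j+1}`
(so `kprev κ 0 = k_0 = 0`). -/
def kprev (κ : ℕ → ℕ) : ℕ → ℕ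
  | 0 => 0
  | j + 1 => κ j



-- step test function
def stepPW1 (x : ℕ → ℝ) (hmono : StrictMono x) (m n : ℕ) (hmn : m < n) : PW1 x where
  f t := if t ∈ Ioc (x m) (x n) then 1 else 0
  f' _ := 0
  fr k := if m ≤ k ∧ k < n then 1 else 0
  fl k := if m < k ∧ k ≤ n then 1 else 0
  int_d k := integrableOn_zero
  sq_d k := by simpa using (integrableOn_zero : IntegrableOn (fun _ => (0:ℝ)) _ _)
  ftc := by
    intro k t ht
    rw [integral_zero, add_zero]
    simp only [Set.mem_Ioc]
    by_cases h : m ≤ k ∧ k < n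
    · rw [if_pos h, if_pos]
      exact ⟨lt_of_le_of_lt (hmono.monotone h.1) ht.1,
        le_trans ht.2.le (hmono.monotone h.2)⟩
    · rw [if_neg h, if_neg]
      intro hmem
      rcases Nat.lt_or_ge k m with hk | hk
      · exact absurd (lt_trans hmem.1 ht.2) (not_lt.2 (hmono.monotone hk))
      · have hkn : n ≤ k := by omega
        exact absurd (lt_of_le_of_lt (hmono.monotone hkn) ht.1) (not_lt.2 hmem.2)
  fl_eq := by
    intro k
    rw [integral_zero, add_zero]
    exact if_congr (by omega) rfl rfl

lemma step_jump_s6 (x : ℕ → ℝ) (hmono : StrictMono x) (m n : ℕ) (hmn : m < n) (k : ℕ) :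
    (stepPW1 x hmono m n hmn).jump k
      = (if k + 1 = m then 1 else 0) - (if k + 1 = n then (1:ℝ) else 0) := by
  simp only [PW1.jump, stepPW1]
  rcases eq_or_ne (k + 1) m with h1 | h1
  · rw [if_pos (show m ≤ k + 1 ∧ k + 1 < n by omega),
      if_neg (show ¬(m < k + 1 ∧ k + 1 ≤ n) by omega), if_pos h1,
      if_neg (by omega)]
  · rcases eq_or_ne (k + 1) n with h2 | h2
    · rw [if_neg (show ¬(m ≤ k + 1 ∧ k + 1 < n) by omega),
        if_pos (show m < k + 1 ∧ k + 1 ≤ n by omega), if_neg h1, if_pos h2]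
    · rw [if_neg h1, if_neg h2,
        if_congr (show (m ≤ k + 1 ∧ k + 1 < n) ↔ (m < k + 1 ∧ k + 1 ≤ n) by omega)
          rfl rfl]
      simp

lemma tsum_ite_succ (m : ℕ) (c : ℝ) :
    ∑' k : ℕ, (if k + 1 = m then c else 0) = if m = 0 then 0 else c := by
  cases m with
  | zero => simp
  | succ m' =>
    rw [if_neg (Nat.succ_ne_zero m')]
    rw [show (fun k : ℕ => if k + 1 = m' + 1 then c else 0)
        = (fun k : ℕ => if k = m' then c else 0) from funext fun k => by
          congr 1; simp only [eq_iff_iff]; omega]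
    exact tsum_ite_eq m' (fun _ => c)

lemma summable_ite_succ (m : ℕ) (c : ℝ) :
    Summable (fun k : ℕ => if k + 1 = m then c else 0) := by
  apply summable_of_ne_finset_zero (s := {m - 1})
  intro k hk
  simp only [Finset.mem_singleton] at hk
  rw [if_neg (by omega)]



lemma step_key (x : ℕ → ℝ) (hx0 : x 0 = 0) (hmono : StrictMono x)
    (β : ℕ → ℝ) (C : ℝ)
    (hsb : ∀ F : PW1 x, MemDom x (fun _ => 0) β F →
      formVal x (fun _ => 0) β F ≥ -C * ∫ t in Ioi (0 : ℝ), F.f t ^ 2)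
    (m n : ℕ) (hmn : m < n) :
    (if m = 0 then 0 else (β m)⁻¹) + (β n)⁻¹ ≥ -C * (x n - x m) := by
  set F := stepPW1 x hmono m n hmn with hF
  have hxm0 : 0 ≤ x m := by
    rcases Nat.eq_zero_or_pos m with h | h
    · rw [h, hx0]
    · exact le_of_lt (hx0 ▸ hmono h)
  have hxmn : x m < x n := hmono hmn
  have hfsq : ∀ t, F.f t ^ 2 = (Ioc (x m) (x n)).indicator (fun _ => (1:ℝ)) t := by
    intro t
    simp only [hF, stepPW1, Set.indicator]
    by_cases h : t ∈ Ioc (x m) (x n) <;> simp [h]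
  have hsub : Ioc (x m) (x n) ⊆ Ioi (0:ℝ) := fun t ht => lt_of_le_of_lt hxm0 ht.1
  have hint2 : (∫ t in Ioi (0:ℝ), F.f t ^ 2) = x n - x m := by
    simp only [hfsq]
    rw [setIntegral_indicator measurableSet_Ioc,
      Set.inter_eq_self_of_subset_right hsub, setIntegral_const, Real.volume_real_Ioc_of_le hxmn.le,
      smul_eq_mul, mul_one]
  have hterm : ∀ k, F.jump k ^ 2 / β (k + 1)
      = (if k + 1 = m then (β m)⁻¹ else 0) + (if k + 1 = n then (β n)⁻¹ else 0) := by
    intro k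
    rw [hF, step_jump_s6]
    rcases eq_or_ne (k + 1) m with h1 | h1
    · rw [if_pos h1, if_neg (by omega), if_pos h1, if_neg (by omega)]
      simp [h1, one_div]
    · rcases eq_or_ne (k + 1) n with h2 | h2
      · rw [if_neg h1, if_pos h2, if_neg h1, if_pos h2]
        simp [h2, one_div]
      · simp [h1, h2]
  have hsum1 := summable_ite_succ m ((β m)⁻¹)
  have hsum2 := summable_ite_succ n ((β n)⁻¹)
  have htsum : ∑' k, F.jump k ^ 2 / β (k + 1)
      = (if m = 0 then 0 else (β m)⁻¹) + (β n)⁻¹ := by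
    simp only [hterm]
    rw [Summable.tsum_add hsum1 hsum2, tsum_ite_succ, tsum_ite_succ, if_neg (show ¬(n = 0) by omega)]
  have hmem : MemDom x (fun _ => 0) β F := by
    refine ⟨?_, ?_, ?_, ?_⟩
    · simp only [hfsq]
      exact ((integrable_indicator_iff measurableSet_Ioc).2
        (integrableOn_const measure_Ioc_lt_top.ne)).restrict
    · simpa [hF, stepPW1] using
        (integrableOn_zero : IntegrableOn (fun _ => (0:ℝ)) (Ioi 0) volume)
    · simpa using (integrableOn_zero : IntegrableOn (fun _ => (0:ℝ)) (Ioi 0) volume)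
    · apply summable_of_ne_finset_zero (s := {m - 1, n - 1})
      intro k hk
      simp only [Finset.mem_insert, Finset.mem_singleton] at hk
      push_neg at hk
      rw [hF, step_jump_s6, if_neg (by omega), if_neg (by omega)]
      simp
  have hform : formVal x (fun _ => 0) β F
      = (if m = 0 then 0 else (β m)⁻¹) + (β n)⁻¹ := by
    rw [formVal, htsum]
    have : (∫ t in Ioi (0:ℝ), (F.f' t ^ 2 + 0 * F.f t ^ 2)) = 0 := by
      simp [hF, stepPW1]
    rw [this, zero_add]
  have h := hsb F hmem
  rw [hform, hint2] at h
  exact h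


lemma tent_ind (a b : ℝ) : (fun s => if a < s ∧ s < b then (-1:ℝ) else 0)
    = (Ioo a b).indicator (fun _ => (-1:ℝ)) := by
  funext s
  simp [Set.indicator_apply, Set.mem_Ioo]

lemma tent_eval (x : ℕ → ℝ) (hmono : StrictMono x) (n k : ℕ) (t : ℝ)
    (hvt : x k < t) (htw : t ≤ x (k + 1)) :
    (if x n < t ∧ t < x n + 1 then x n + 1 - t else 0)
      = (if x n ≤ x k ∧ x k < x n + 1 then x n + 1 - x k else 0)
        + ∫ s in Ioc (x k) t, (if x n < s ∧ s < x n + 1 then (-1:ℝ) else 0) := by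
  set a := x n with ha
  set b := x n + 1 with hb
  set v := x k with hv
  have hab : a < b := by rw [hb]; linarith
  have hI : (∫ s in Ioc v t, (if a < s ∧ s < b then (-1:ℝ) else 0))
      = -(volume (Ioc v t ∩ Ioo a b)).toReal := by
    rw [tent_ind, setIntegral_indicator measurableSet_Ioo, setIntegral_const,
      smul_eq_mul, mul_neg_one]
    rfl
  rcases Nat.lt_or_ge k n with hk | hk
  · -- k < n : everything vanishes
    have hwa : x (k + 1) ≤ a := hmono.monotone hk
    have hempty : Ioc v t ∩ Ioo a b = ∅ := by
      ext s
      simp only [Set.mem_inter_iff, Set.mem_Ioc, Set.mem_Ioo, Set.mem_empty_iff_false,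
        iff_false]
      rintro ⟨⟨_, hs2⟩, hs3, _⟩
      have : s ≤ a := le_trans hs2 (le_trans htw hwa)
      linarith
    rw [hI, hempty, if_neg, if_neg]
    · simp
    · rintro ⟨h1, _⟩
      have : v < a := hmono hk
      linarith
    · rintro ⟨h1, _⟩
      have : t ≤ a := le_trans htw hwa
      linarith
  · -- k ≥ n : v ≥ a
    have hav : a ≤ v := hmono.monotone hk
    rcases le_or_gt b v with hbv | hvb
    · -- interval entirely to the right
      have hempty : Ioc v t ∩ Ioo a b = ∅ := by
        ext s
        simp only [Set.mem_inter_iff, Set.mem_Ioc, Set.mem_Ioo, Set.mem_empty_iff_false,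
          iff_false]
        rintro ⟨⟨hs1, _⟩, _, hs4⟩
        linarith
      rw [hI, hempty, if_neg (by rintro ⟨_, h2⟩; linarith),
        if_neg (by rintro ⟨h1, _⟩; linarith)]
      simp
    · rcases lt_or_ge t b with htb | htb
      · have hset : Ioc v t ∩ Ioo a b = Ioc v t := by
          ext s
          simp only [Set.mem_inter_iff, Set.mem_Ioc, Set.mem_Ioo]
          constructor
          · rintro ⟨h, _⟩; exact h
          · rintro ⟨hs1, hs2⟩; exact ⟨⟨hs1, hs2⟩, lt_of_le_of_lt hav hs1, lt_of_le_of_lt hs2 htb⟩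
        rw [if_pos ⟨lt_of_le_of_lt hav hvt, htb⟩, if_pos ⟨hav, hvb⟩, hI, hset,
          Real.volume_Ioc, ENNReal.toReal_ofReal (by linarith)]
        ring
      · have hset : Ioc v t ∩ Ioo a b = Ioo v b := by
          ext s
          simp only [Set.mem_inter_iff, Set.mem_Ioc, Set.mem_Ioo]
          constructor
          · rintro ⟨⟨hs1, _⟩, _, hs4⟩; exact ⟨hs1, hs4⟩
          · rintro ⟨hs1, hs2⟩
            exact ⟨⟨hs1, le_trans hs2.le htb⟩, lt_of_le_of_lt hav hs1, hs2⟩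
        rw [if_neg (show ¬(a < t ∧ t < b) by rintro ⟨_, h2⟩; linarith),
          if_pos ⟨hav, hvb⟩, hI, hset, Real.volume_Ioo,
          ENNReal.toReal_ofReal (by linarith)]
        ring

def tentPW1 (x : ℕ → ℝ) (hmono : StrictMono x) (n : ℕ) : PW1 x where
  f t := if x n < t ∧ t < x n + 1 then x n + 1 - t else 0
  f' t := if x n < t ∧ t < x n + 1 then -1 else 0
  fr k := if x n ≤ x k ∧ x k < x n + 1 then x n + 1 - x k else 0
  fl k := if x n < x k ∧ x k < x n + 1 then x n + 1 - x k else 0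
  int_d k := by
    rw [tent_ind]
    exact ((integrable_indicator_iff measurableSet_Ioo).2
      (integrableOn_const measure_Ioo_lt_top.ne)).integrableOn
  sq_d k := by
    have : (fun t => (if x n < t ∧ t < x n + 1 then (-1:ℝ) else 0) ^ 2)
        = (Ioo (x n) (x n + 1)).indicator (fun _ => (1:ℝ)) := by
      funext t
      by_cases h : x n < t ∧ t < x n + 1 <;>
        simp [h, Set.indicator_apply, Set.mem_Ioo]
    rw [this]
    exact ((integrable_indicator_iff measurableSet_Ioo).2
      (integrableOn_const measure_Ioo_lt_top.ne)).integrableOn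
  ftc k t ht := tent_eval x hmono n k t ht.1 ht.2.le
  fl_eq k := tent_eval x hmono n k (x (k + 1)) (hmono (Nat.lt_succ_self k)) le_rfl

lemma tent_jump (x : ℕ → ℝ) (hmono : StrictMono x) (n : ℕ) (k : ℕ) :
    (tentPW1 x hmono n).jump k = if k + 1 = n then 1 else 0 := by
  simp only [PW1.jump, tentPW1]
  rcases eq_or_ne (k + 1) n with h | h
  · rw [if_pos h, h, if_pos ⟨le_rfl, by linarith⟩, if_neg (by rintro ⟨h1, _⟩; linarith)]
    ring
  · have hne : x (k + 1) ≠ x n := fun hc => h (hmono.injective hc)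
    have hiff : (x n ≤ x (k + 1) ∧ x (k + 1) < x n + 1)
        ↔ (x n < x (k + 1) ∧ x (k + 1) < x n + 1) :=
      and_congr_left' ⟨fun hle => hle.lt_of_ne (Ne.symm hne), le_of_lt⟩
    rw [if_neg h, if_congr hiff rfl rfl, sub_self]



lemma tsum_ite_succ' (m : ℕ) (c : ℝ) :
    ∑' k : ℕ, (if k + 1 = m then c else 0) = if m = 0 then 0 else c := by
  cases m with
  | zero => simp
  | succ m' =>
    rw [if_neg (Nat.succ_ne_zero m')]
    rw [show (fun k : ℕ => if k + 1 = m' + 1 then c else 0)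
        = (fun k : ℕ => if k = m' then c else 0) from funext fun k => by
          congr 1; simp only [eq_iff_iff]; omega]
    exact tsum_ite_eq m' (fun _ => c)

lemma tent_key (x : ℕ → ℝ) (hx0 : x 0 = 0) (hmono : StrictMono x)
    (β : ℕ → ℝ) (C : ℝ)
    (hsb : ∀ F : PW1 x, MemDom x (fun _ => 0) β F →
      formVal x (fun _ => 0) β F ≥ -C * ∫ t in Ioi (0 : ℝ), F.f t ^ 2)
    (n : ℕ) (hn : 1 ≤ n) : -(β n)⁻¹ ≤ 1 + C / 3 := by
  set F := tentPW1 x hmono n with hF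
  set a := x n with ha
  set b := x n + 1 with hb
  have ha0 : 0 < a := hx0 ▸ hmono hn
  have hab : a < b := by rw [hb]; linarith
  have hsub : Ioo a b ⊆ Ioi (0:ℝ) := fun t ht => lt_trans ha0 ht.1
  have hfsq : ∀ t, F.f t ^ 2 = (Ioo a b).indicator (fun t => (b - t) ^ 2) t := by
    intro t
    simp only [hF, tentPW1]
    by_cases h : a < t ∧ t < b <;>
      simp [← ha, ← hb, (show a + 1 = b by rw [hb, ha]), h, Set.indicator_apply, Set.mem_Ioo]
  have hdsq : ∀ t, F.f' t ^ 2 = (Ioo a b).indicator (fun _ => (1:ℝ)) t := by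
    intro t
    simp only [hF, tentPW1]
    by_cases h : a < t ∧ t < b <;>
      simp [← ha, ← hb, (show a + 1 = b by rw [hb, ha]), h, Set.indicator_apply, Set.mem_Ioo]
  have hint2 : (∫ t in Ioi (0:ℝ), F.f t ^ 2) = 1 / 3 := by
    simp only [hfsq]
    rw [setIntegral_indicator measurableSet_Ioo, Set.inter_eq_self_of_subset_right hsub,
      ← integral_Ioc_eq_integral_Ioo, ← intervalIntegral.integral_of_le hab.le]
    have hc := intervalIntegral.integral_comp_sub_left (a := a) (b := b)
      (fun u : ℝ => u ^ 2) b
    rw [hc, show b - b = 0 by ring, show b - a = 1 by rw [hb]; ring, integral_pow]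
    norm_num
  have hint1 : (∫ t in Ioi (0:ℝ), F.f' t ^ 2) = 1 := by
    simp only [hdsq]
    rw [setIntegral_indicator measurableSet_Ioo, Set.inter_eq_self_of_subset_right hsub,
      setIntegral_const, Real.volume_real_Ioo_of_le hab.le, smul_eq_mul, mul_one,
      show b - a = 1 by rw [hb]; ring]
  have hterm : ∀ k, F.jump k ^ 2 / β (k + 1) = (if k + 1 = n then (β n)⁻¹ else 0) := by
    intro k
    rw [hF, tent_jump]
    rcases eq_or_ne (k + 1) n with h | h
    · rw [if_pos h, if_pos h, h]
      simp [one_div]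
    · simp [h]
  have htsum : ∑' k, F.jump k ^ 2 / β (k + 1) = (β n)⁻¹ := by
    simp only [hterm]
    rw [tsum_ite_succ', if_neg (by omega)]
  have hmem : MemDom x (fun _ => 0) β F := by
    refine ⟨?_, ?_, ?_, ?_⟩
    · simp only [hfsq]
      exact ((integrable_indicator_iff measurableSet_Ioo).2
        (((continuous_const.sub continuous_id).pow 2).integrableOn_Icc.mono_set
          Ioo_subset_Icc_self)).restrict
    · simp only [hdsq]
      exact ((integrable_indicator_iff measurableSet_Ioo).2
        (integrableOn_const measure_Ioo_lt_top.ne)).restrict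
    · simpa using (integrableOn_zero : IntegrableOn (fun _ => (0:ℝ)) (Ioi 0) volume)
    · apply summable_of_ne_finset_zero (s := {n - 1})
      intro k hk
      simp only [Finset.mem_singleton] at hk
      rw [hF, tent_jump, if_neg (by omega)]
      simp
  have hform : formVal x (fun _ => 0) β F = 1 + (β n)⁻¹ := by
    rw [formVal, htsum]
    congr 1
    simp only [zero_mul, add_zero]
    exact hint1
  have h := hsb F hmem
  rw [hform, hint2] at h
  linarith

/-- **Lemma 2.10**: necessary conditions for lower semiboundedness of the form
`t_{X,β}` (the case `q = 0`), where `x_{κ j}` enumerates the nodes with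
negative intensities (`κ j` is the paper's `k_{j+1}`). -/
theorem stmt_6 (x : ℕ → ℝ) (hx0 : x 0 = 0) (hmono : StrictMono x)
    (hxtop : Tendsto x atTop atTop)
    (β : ℕ → ℝ) (hβ : ∀ k, β (k + 1) ≠ 0)
    (κ : ℕ → ℕ) (hκmono : StrictMono κ) (hκ1 : ∀ j, 1 ≤ κ j)
    (hκneg : ∀ j, β (κ j) < 0)
    (hκall : ∀ n, 1 ≤ n → β n < 0 → ∃ j, κ j = n)
    (C : ℝ) (hC : 0 ≤ C)
    (hsb : ∀ F : PW1 x, MemDom x (fun _ => 0) β F →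
      formVal x (fun _ => 0) β F ≥ -C * ∫ t in Ioi (0 : ℝ), F.f t ^ 2) :
    (∀ k, max 0 (-(β (k + 1))⁻¹) ≤ 1 + C / 3) ∧
    (∀ j, 1 / |β (κ j)| ≤ C * min (dminus x κ j) (dminus x κ (j + 1))) ∧
    (∀ j i, 1 ≤ i → κ j + i ≤ κ (j + 1) →
      (β (κ j))⁻¹ + (β (κ j + i))⁻¹ ≥ -C * (x (κ j + i) - x (κ j))) ∧
    (∀ j i, 1 ≤ i → kprev κ j + i ≤ κ j → 1 ≤ κ j - i →
      (β (κ j - i))⁻¹ + (β (κ j))⁻¹ ≥ -C * (x (κ j) - x (κ j - i))) := by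
  refine ⟨?_, ?_, ?_, ?_⟩
  · -- part (i)
    intro k
    have h := tent_key x hx0 hmono β C hsb (k + 1) (by omega)
    exact max_le (by linarith) h
  · -- part (ii)
    intro j
    have hnegj : β (κ j) < 0 := hκneg j
    have habs : 1 / |β (κ j)| = -(β (κ j))⁻¹ := by
      rw [abs_of_neg hnegj, one_div, inv_neg]
    have hright : 1 / |β (κ j)| ≤ C * dminus x κ (j + 1) := by
      have hr := step_key x hx0 hmono β C hsb (κ j) (κ (j + 1)) (hκmono (lt_add_one j))
      rw [if_neg (show ¬(κ j = 0) by have := hκ1 j; omega)] at hr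
      have hinv1 : (β (κ (j + 1)))⁻¹ < 0 := inv_lt_zero.2 (hκneg (j + 1))
      have hd : dminus x κ (j + 1) = x (κ (j + 1)) - x (κ j) := rfl
      rw [habs, hd]
      linarith
    have hleft : 1 / |β (κ j)| ≤ C * dminus x κ j := by
      cases j with
      | zero =>
        have h0 := step_key x hx0 hmono β C hsb 0 (κ 0) (hκ1 0)
        rw [if_pos rfl, zero_add] at h0
        have hd : dminus x κ 0 = x (κ 0) - x 0 := rfl
        rw [habs, hd]
        linarith
      | succ j' =>
        have h0 := step_key x hx0 hmono β C hsb (κ j') (κ (j' + 1)) (hκmono (lt_add_one j'))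
        rw [if_neg (show ¬(κ j' = 0) by have := hκ1 j'; omega)] at h0
        have hinv0 : (β (κ j'))⁻¹ < 0 := inv_lt_zero.2 (hκneg j')
        have hd : dminus x κ (j' + 1) = x (κ (j' + 1)) - x (κ j') := rfl
        rw [habs, hd]
        linarith
    rcases le_total (dminus x κ j) (dminus x κ (j + 1)) with h | h
    · rw [min_eq_left h]; exact hleft
    · rw [min_eq_right h]; exact hright
  · -- part (iii)
    intro j i hi _
    have h := step_key x hx0 hmono β C hsb (κ j) (κ j + i) (by omega)
    rw [if_neg (show ¬(κ j = 0) by have := hκ1 j; omega)] at h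
    exact h
  · -- part (iv)
    intro j i hi _ hge
    have h := step_key x hx0 hmono β C hsb (κ j - i) (κ j) (by omega)
    rw [if_neg (by omega)] at h
    exact h

end
end
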